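/- arXiv:2304.04944 — 9 statements merged into one kernel-verified Lean document; each statement's English description precedes it below -/
import Mathlib

section
/- Let b ∈ {2,3,…} be an integer, α ∈ (0,1), and let φ : [0,1] → ℝ be Hölder continuous with exponent γ ∈ (0,1] and satisfy φ(0) = φ(1). Set K := min(1, −log α / log b) and define f(t) := ∑_{n=0}^∞ αⁿ φ(⟨bⁿ t⟩) for t ∈ [0,1], where ⟨x⟩ denotes the fractional part of x. If K ≠ γ, then f is Hölder continuous on [0,1] with exponent min(K, γ); that is, there exists L > 0 such that |f(t) − f(s)| ≤ L·|t − s|^{min(K,γ)} for all s, t ∈ [0,1]. -/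
open Set

lemma fract_mem_Icc (x : ℝ) : Int.fract x ∈ Set.Icc (0:ℝ) 1 :=
  ⟨Int.fract_nonneg x, (Int.fract_lt_one x).le⟩

lemma phi_fract_le {γ C : ℝ} (hγ0 : 0 < γ) (hC : 0 < C) {φ : ℝ → ℝ}
    (hHolder : ∀ x ∈ Set.Icc (0 : ℝ) 1, ∀ y ∈ Set.Icc (0 : ℝ) 1,
      |φ x - φ y| ≤ C * |x - y| ^ γ)
    (hφ : φ 0 = φ 1) {x y : ℝ} (hxy : x ≤ y) :
    |φ (Int.fract x) - φ (Int.fract y)| ≤ 2 * C * (min 1 (y - x)) ^ γ := by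
  have hmx := fract_mem_Icc x
  have hmy := fract_mem_Icc y
  rcases le_or_gt (y - x) 1 with h1 | h1
  · rw [min_eq_right (by linarith)]
    rcases eq_or_lt_of_le (Int.floor_le_floor hxy) with hfl | hfl
    · have hfr : Int.fract x - Int.fract y = x - y := by
        rw [Int.fract, Int.fract, hfl]; ring
      calc |φ (Int.fract x) - φ (Int.fract y)|
          ≤ C * |Int.fract x - Int.fract y| ^ γ := hHolder _ hmx _ hmy
        _ = C * (y - x) ^ γ := by rw [hfr, abs_sub_comm, abs_of_nonneg (by linarith)]
        _ ≤ 2 * C * (y - x) ^ γ := by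
            have : (0:ℝ) ≤ (y - x) ^ γ := Real.rpow_nonneg (by linarith) _
            nlinarith
    · -- adjacent intervals
      have hfl2 : ⌊y⌋ ≤ ⌊x⌋ + 1 := by
        have := Int.floor_le_floor (show y ≤ x + 1 by linarith)
        rwa [Int.floor_add_one] at this
      have hfle : ⌊y⌋ = ⌊x⌋ + 1 := le_antisymm hfl2 hfl
      have hxle : x < (⌊y⌋ : ℝ) := by
        have h3 := Int.lt_floor_add_one x
        rw [hfle]; push_cast; linarith
      have hyge : (⌊y⌋ : ℝ) ≤ y := Int.floor_le y
      have e1 : |Int.fract x - 1| = (⌊y⌋ : ℝ) - x := by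
        rw [Int.fract, hfle]
        push_cast
        rw [abs_of_nonpos (by have h4 := Int.lt_floor_add_one x; linarith)]
        ring
      have e2 : |Int.fract y - 0| = y - (⌊y⌋ : ℝ) := by
        rw [Int.fract, sub_zero, abs_of_nonneg (by linarith)]
      have b1 : |φ (Int.fract x) - φ 1| ≤ C * (y - x) ^ γ := by
        calc |φ (Int.fract x) - φ 1| ≤ C * |Int.fract x - 1| ^ γ :=
              hHolder _ hmx _ (by norm_num)
          _ ≤ C * (y - x) ^ γ := by
              rw [e1]
              exact mul_le_mul_of_nonneg_left
                (Real.rpow_le_rpow (by linarith) (by linarith) hγ0.le) hC.le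
      have b2 : |φ (Int.fract y) - φ 0| ≤ C * (y - x) ^ γ := by
        calc |φ (Int.fract y) - φ 0| ≤ C * |Int.fract y - 0| ^ γ :=
              hHolder _ hmy _ (by norm_num)
          _ ≤ C * (y - x) ^ γ := by
              rw [e2]
              exact mul_le_mul_of_nonneg_left
                (Real.rpow_le_rpow (by linarith) (by linarith) hγ0.le) hC.le
      calc |φ (Int.fract x) - φ (Int.fract y)|
          ≤ |φ (Int.fract x) - φ 1| + |φ 1 - φ (Int.fract y)| := abs_sub_le _ _ _
        _ = |φ (Int.fract x) - φ 1| + |φ (Int.fract y) - φ 0| := by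
            rw [abs_sub_comm (φ 1), hφ]
        _ ≤ C * (y - x) ^ γ + C * (y - x) ^ γ := add_le_add b1 b2
        _ = 2 * C * (y - x) ^ γ := by ring
  · rw [min_eq_left (by linarith), Real.one_rpow]
    have hd : |Int.fract x - Int.fract y| ≤ 1 := by
      rw [abs_le]
      constructor <;> [nlinarith [hmx.1, hmx.2, hmy.1, hmy.2]; nlinarith [hmx.1, hmx.2, hmy.1, hmy.2]]
    calc |φ (Int.fract x) - φ (Int.fract y)| ≤ C * |Int.fract x - Int.fract y| ^ γ :=
          hHolder _ hmx _ hmy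
      _ ≤ C * 1 := mul_le_mul_of_nonneg_left
          (Real.rpow_le_one (abs_nonneg _) hd hγ0.le) hC.le
      _ ≤ 2 * C * 1 := by linarith

set_option maxHeartbeats 1000000 in
/-- Proposition A.1 (a): if `K ≠ γ`, the fractal function
`f(t) = ∑ αⁿ φ(⟨bⁿ t⟩)` is Hölder continuous with exponent `min K γ`. -/
theorem fractal_holder_of_ne (b : ℕ) (hb : 2 ≤ b) (α γ : ℝ)
    (hα : α ∈ Set.Ioo (0 : ℝ) 1) (hγ0 : 0 < γ) (hγ1 : γ ≤ 1)
    (φ : ℝ → ℝ) (C : ℝ) (hC : 0 < C)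
    (hHolder : ∀ x ∈ Set.Icc (0 : ℝ) 1, ∀ y ∈ Set.Icc (0 : ℝ) 1,
      |φ x - φ y| ≤ C * |x - y| ^ γ)
    (hφ : φ 0 = φ 1)
    (K : ℝ) (hK : K = min 1 (-Real.log α / Real.log b))
    (f : ℝ → ℝ)
    (hf : ∀ t, f t = ∑' n : ℕ, α ^ n * φ (Int.fract ((b : ℝ) ^ n * t)))
    (hne : K ≠ γ) :
    ∃ L > 0, ∀ s ∈ Set.Icc (0 : ℝ) 1, ∀ t ∈ Set.Icc (0 : ℝ) 1,
      |f t - f s| ≤ L * |t - s| ^ (min K γ) := by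
  obtain ⟨hα0, hα1⟩ := hα
  have hb2 : (2:ℝ) ≤ (b:ℝ) := by exact_mod_cast hb
  have hb1 : (1:ℝ) < (b:ℝ) := by linarith
  have hb0 : (0:ℝ) < (b:ℝ) := by linarith
  have hlogb : 0 < Real.log b := Real.log_pos hb1
  obtain ⟨Kb, hKbdef⟩ : ∃ x : ℝ, x = -Real.log α / Real.log b := ⟨_, rfl⟩
  rw [← hKbdef] at hK
  have hKbpos : 0 < Kb := hKbdef ▸ div_pos (neg_pos.mpr (Real.log_neg hα0 hα1)) hlogb
  have hαrpow : (b:ℝ) ^ (-Kb) = α := by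
    rw [Real.rpow_def_of_pos hb0,
      show Real.log (b:ℝ) * -Kb = Real.log α by rw [hKbdef]; field_simp]
    exact Real.exp_log hα0
  obtain ⟨β, hβdef⟩ : ∃ x : ℝ, x = α * (b:ℝ) ^ γ := ⟨_, rfl⟩
  have hbγpos : (0:ℝ) < (b:ℝ) ^ γ := Real.rpow_pos_of_pos hb0 γ
  have hβpos : 0 < β := hβdef ▸ mul_pos hα0 hbγpos
  have hβeq : β = (b:ℝ) ^ (γ - Kb) := by
    rw [hβdef, ← hαrpow, ← Real.rpow_add hb0]; ring_nf
  have hβlog : Real.log β = (γ - Kb) * Real.log b := by rw [hβeq, Real.log_rpow hb0]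
  have hβne1 : β ≠ 1 := by
    intro hβ1
    have h0 : (γ - Kb) * Real.log b = 0 := by rw [← hβlog, hβ1, Real.log_one]
    have h1 : γ = Kb := by
      have := (mul_eq_zero.mp h0).resolve_right (ne_of_gt hlogb); linarith
    exact hne (by rw [hK, ← h1]; exact min_eq_right hγ1)
  have hKpos : 0 < K := by rw [hK]; exact lt_min one_pos hKbpos
  have hminpos : 0 < min K γ := lt_min hKpos hγ0
  have hKKb : K ≤ Kb := by rw [hK]; exact min_le_right _ _
  -- symmetric periodic Hölder bound
  have hphi : ∀ x y : ℝ, |φ (Int.fract x) - φ (Int.fract y)|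
      ≤ 2*C*(min 1 |x - y|)^γ := by
    intro x y
    rcases le_total x y with hxy | hxy
    · rw [abs_sub_comm x y, abs_of_nonneg (sub_nonneg.mpr hxy)]
      exact phi_fract_le hγ0 hC hHolder hφ hxy
    · rw [abs_of_nonneg (sub_nonneg.mpr hxy), abs_sub_comm]
      exact phi_fract_le hγ0 hC hHolder hφ hxy
  have hgeoα : Summable (fun n : ℕ => α ^ n) := summable_geometric_of_lt_one hα0.le hα1
  have hφbdd : ∀ u : ℝ, |φ (Int.fract u)| ≤ |φ 0| + C := by
    intro u
    have h1 := hHolder _ (fract_mem_Icc u) 0 (by norm_num)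
    have h2 : |Int.fract u - 0| ^ γ ≤ 1 :=
      Real.rpow_le_one (abs_nonneg _)
        (by rw [sub_zero, abs_of_nonneg (Int.fract_nonneg u)]
            exact (Int.fract_lt_one u).le) hγ0.le
    have h3 := abs_sub_abs_le_abs_sub (φ (Int.fract u)) (φ 0)
    nlinarith
  have hsumf : ∀ u : ℝ, Summable (fun n : ℕ => α ^ n * φ (Int.fract ((b:ℝ)^n * u))) := by
    intro u
    apply Summable.of_norm_bounded (hgeoα.mul_left (|φ 0| + C))
    intro n
    rw [Real.norm_eq_abs, abs_mul, abs_pow, abs_of_nonneg hα0.le, mul_comm]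
    exact mul_le_mul_of_nonneg_right (hφbdd _) (by positivity)
  obtain ⟨g, hgdef⟩ : ∃ g : ℝ → ℕ → ℝ,
      g = fun h n => 2*C*α^n*(min 1 ((b:ℝ)^n * h))^γ := ⟨_, rfl⟩
  have hgnonneg : ∀ h : ℝ, 0 ≤ h → ∀ n, 0 ≤ g h n := by
    intro h hh n
    have hm0 : 0 ≤ min 1 ((b:ℝ)^n*h) := le_min zero_le_one (by positivity)
    rw [hgdef]
    exact mul_nonneg (by positivity) (Real.rpow_nonneg hm0 γ)
  have hgle : ∀ h : ℝ, 0 ≤ h → ∀ n, g h n ≤ 2*C*α^n := by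
    intro h hh n
    have hm0 : 0 ≤ min 1 ((b:ℝ)^n*h) := le_min zero_le_one (by positivity)
    have : (min 1 ((b:ℝ)^n*h))^γ ≤ 1 :=
      Real.rpow_le_one hm0 (min_le_left _ _) hγ0.le
    calc g h n = 2*C*α^n*(min 1 ((b:ℝ)^n * h))^γ := by rw [hgdef]
      _ ≤ 2*C*α^n*1 := mul_le_mul_of_nonneg_left this (by positivity)
      _ = 2*C*α^n := by ring
  have hgsum : ∀ h : ℝ, 0 ≤ h → Summable (g h) := by
    intro h hh
    exact Summable.of_nonneg_of_le (hgnonneg h hh) (hgle h hh) (hgeoα.mul_left _)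
  -- the pointwise reduction
  have key : ∀ s t : ℝ, |f t - f s| ≤ ∑' n, g (|t - s|) n := by
    intro s t
    have hterm : ∀ n : ℕ,
        |α ^ n * φ (Int.fract ((b:ℝ)^n * t)) - α ^ n * φ (Int.fract ((b:ℝ)^n * s))|
          ≤ g (|t - s|) n := by
      intro n
      rw [← mul_sub, abs_mul, abs_pow, abs_of_nonneg hα0.le]
      have hb_ab : |(b:ℝ)^n * t - (b:ℝ)^n * s| = (b:ℝ)^n * |t - s| := by
        rw [← mul_sub, abs_mul, abs_of_nonneg (by positivity)]
      have h2 := hphi ((b:ℝ)^n * t) ((b:ℝ)^n * s)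
      rw [hb_ab] at h2
      calc α^n * |φ (Int.fract ((b:ℝ)^n * t)) - φ (Int.fract ((b:ℝ)^n * s))|
          ≤ α^n * (2*C*(min 1 ((b:ℝ)^n * |t - s|))^γ) :=
            mul_le_mul_of_nonneg_left h2 (by positivity)
        _ = g (|t - s|) n := by simp only [hgdef]; ring
    have hnormsum : Summable (fun n : ℕ =>
        ‖α ^ n * φ (Int.fract ((b:ℝ)^n * t)) - α ^ n * φ (Int.fract ((b:ℝ)^n * s))‖) := by
      refine Summable.of_nonneg_of_le (fun n => norm_nonneg _) ?_ (hgsum (|t - s|) (abs_nonneg _))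
      intro n
      simpa using hterm n
    calc |f t - f s| = |∑' n : ℕ, (α ^ n * φ (Int.fract ((b:ℝ)^n * t))
          - α ^ n * φ (Int.fract ((b:ℝ)^n * s)))| := by
          rw [hf t, hf s, Summable.tsum_sub (hsumf t) (hsumf s)]
      _ ≤ ∑' n : ℕ, ‖α ^ n * φ (Int.fract ((b:ℝ)^n * t))
          - α ^ n * φ (Int.fract ((b:ℝ)^n * s))‖ := norm_tsum_le_tsum_norm hnormsum
      _ ≤ ∑' n, g (|t - s|) n := Summable.tsum_le_tsum (fun n => hterm n) hnormsum
          (hgsum _ (abs_nonneg _))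
  -- core estimate for 0 < h ≤ 1 with the canonical N
  have core : ∀ h : ℝ, 0 < h → h ≤ 1 → ∀ N : ℕ, h ≤ (b:ℝ)^(-(N:ℝ)) →
      (b:ℝ)^(-((N:ℝ)+1)) ≤ h →
      ∑' n, g h n ≤ 2*C*h^γ * (∑ i ∈ Finset.range (N+1), β^i)
        + 2*C*(1-α)⁻¹ * h^Kb := by
    intro h hh0 hh1 N hhN hhN'
    have hα1' : α^(N+1) ≤ h^Kb := by
      have e : α ^ (N+1) = ((b:ℝ))^(-Kb * ((N:ℝ)+1)) := by
        rw [← hαrpow, ← Real.rpow_natCast ((b:ℝ)^(-Kb)) (N+1), ← Real.rpow_mul hb0.le]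
        congr 1; push_cast; ring
      have e2 : ((b:ℝ))^(-Kb * ((N:ℝ)+1)) = ((b:ℝ)^(-((N:ℝ)+1)))^Kb := by
        rw [← Real.rpow_mul hb0.le]; congr 1; ring
      calc α^(N+1) = ((b:ℝ)^(-((N:ℝ)+1)))^Kb := e.trans e2
        _ ≤ h^Kb := Real.rpow_le_rpow (Real.rpow_nonneg hb0.le _) hhN' hKbpos.le
    have htail : ∑' n, g h (n + (N+1)) ≤ 2*C*(1-α)⁻¹ * h^Kb := by
      have hs1 : Summable (fun n : ℕ => g h (n + (N+1))) :=
        (summable_nat_add_iff (N+1)).mpr (hgsum h hh0.le)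
      have hs2 : Summable (fun n : ℕ => 2*C*α^(N+1) * α^n) := hgeoα.mul_left _
      calc ∑' n, g h (n+(N+1)) ≤ ∑' n, 2*C*α^(N+1)*α^n := by
            apply Summable.tsum_le_tsum _ hs1 hs2
            intro n
            exact (hgle h hh0.le (n+(N+1))).trans (le_of_eq (by rw [pow_add]; ring))
        _ = 2*C*α^(N+1) * ∑' n, α^n := tsum_mul_left
        _ = 2*C*(1-α)⁻¹ * α^(N+1) := by rw [tsum_geometric_of_lt_one hα0.le hα1]; ring
        _ ≤ 2*C*(1-α)⁻¹ * h^Kb := by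
            apply mul_le_mul_of_nonneg_left hα1'
            have : (0:ℝ) < 1 - α := by linarith
            positivity
    have hhead : ∑ i ∈ Finset.range (N+1), g h i
        ≤ 2*C*h^γ * ∑ i ∈ Finset.range (N+1), β^i := by
      rw [Finset.mul_sum]
      apply Finset.sum_le_sum
      intro i _
      have hm : min 1 ((b:ℝ)^i * h) ≤ (b:ℝ)^i * h := min_le_right _ _
      have hm0 : 0 ≤ min 1 ((b:ℝ)^i*h) := le_min zero_le_one (by positivity)
      have h1 : (min 1 ((b:ℝ)^i*h))^γ ≤ ((b:ℝ)^i*h)^γ := Real.rpow_le_rpow hm0 hm hγ0.le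
      have h2 : ((b:ℝ)^i*h)^γ = ((b:ℝ)^γ)^i * h^γ := by
        rw [Real.mul_rpow (by positivity) hh0.le]
        congr 1
        rw [← Real.rpow_natCast (b:ℝ) i, ← Real.rpow_mul hb0.le,
          ← Real.rpow_natCast ((b:ℝ)^γ) i, ← Real.rpow_mul hb0.le]
        congr 1; ring
      calc g h i = 2*C*α^i * (min 1 ((b:ℝ)^i*h))^γ := by rw [hgdef]
        _ ≤ 2*C*α^i * (((b:ℝ)^γ)^i * h^γ) := by
            rw [← h2]; exact mul_le_mul_of_nonneg_left h1 (by positivity)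
        _ = 2*C*h^γ * β^i := by rw [hβdef, mul_pow]; ring
    calc ∑' n, g h n
        = ∑ i ∈ Finset.range (N+1), g h i + ∑' n, g h (n+(N+1)) :=
          (Summable.sum_add_tsum_nat_add (N+1) (hgsum h hh0.le)).symm
      _ ≤ 2*C*h^γ * (∑ i ∈ Finset.range (N+1), β^i) + 2*C*(1-α)⁻¹ * h^Kb :=
          add_le_add hhead htail
  -- existence of the canonical N
  have getN : ∀ h : ℝ, 0 < h → h ≤ 1 → ∃ N : ℕ, h ≤ (b:ℝ)^(-(N:ℝ)) ∧
      (b:ℝ)^(-((N:ℝ)+1)) ≤ h := by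
    intro h hh0 hh1
    have h1h : (1:ℝ) ≤ 1/h := by rw [le_div_iff₀ hh0]; linarith
    have hlogb0 : 0 ≤ Real.logb b (1/h) := Real.logb_nonneg hb1 h1h
    refine ⟨⌊Real.logb b (1/h)⌋₊, ?_, ?_⟩
    · have hN1 : (b:ℝ)^((⌊Real.logb b (1/h)⌋₊:ℝ)) ≤ 1/h := by
        have := (Real.rpow_le_rpow_left_iff hb1).mpr (Nat.floor_le hlogb0)
        rwa [Real.rpow_logb hb0 (ne_of_gt hb1) (by positivity)] at this
      have hP : (0:ℝ) < (b:ℝ)^((⌊Real.logb b (1/h)⌋₊:ℝ)) := Real.rpow_pos_of_pos hb0 _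
      have h2 : (b:ℝ)^((⌊Real.logb b (1/h)⌋₊:ℝ)) * h ≤ 1 := (le_div_iff₀ hh0).mp hN1
      rw [Real.rpow_neg hb0.le]
      nlinarith [mul_inv_cancel₀ (ne_of_gt hP), inv_pos.mpr hP]
    · have hN2 : 1/h < (b:ℝ)^((⌊Real.logb b (1/h)⌋₊:ℝ)+1) := by
        have := (Real.rpow_lt_rpow_left_iff hb1).mpr (Nat.lt_floor_add_one (Real.logb b (1/h)))
        rwa [Real.rpow_logb hb0 (ne_of_gt hb1) (by positivity)] at this
      have hP : (0:ℝ) < (b:ℝ)^((⌊Real.logb b (1/h)⌋₊:ℝ)+1) := Real.rpow_pos_of_pos hb0 _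
      have h2 : 1 < (b:ℝ)^((⌊Real.logb b (1/h)⌋₊:ℝ)+1) * h := by
        rw [div_lt_iff₀ hh0] at hN2; linarith
      rw [show -((⌊Real.logb b (1/h)⌋₊:ℝ)+1) = -(((⌊Real.logb b (1/h)⌋₊:ℝ))+1) by ring,
        Real.rpow_neg hb0.le]
      nlinarith [mul_inv_cancel₀ (ne_of_gt hP), inv_pos.mpr hP]
  -- the scalar bound, with case analysis on β
  have main : ∃ L > 0, ∀ h : ℝ, 0 < h → h ≤ 1 → ∑' n, g h n ≤ L * h ^ (min K γ) := by
    rcases lt_or_gt_of_ne hβne1 with hβlt | hβgt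
    · -- β < 1 : γ < Kb, exponent is γ
      have hγKb : γ < Kb := by
        have := Real.log_neg hβpos hβlt
        nlinarith [hβlog]
      have hmin : min K γ = γ := min_eq_right (by rw [hK]; exact le_min hγ1 hγKb.le)
      refine ⟨2*C*(1-β)⁻¹ + 2*C*(1-α)⁻¹, by
        have h1 : (0:ℝ) < 1 - β := by linarith
        have h2 : (0:ℝ) < 1 - α := by linarith
        positivity, ?_⟩
      intro h hh0 hh1
      obtain ⟨N, hhN, hhN'⟩ := getN h hh0 hh1
      have hgeom : ∑ i ∈ Finset.range (N+1), β^i ≤ (1-β)⁻¹ := by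
        have := Summable.sum_le_tsum (Finset.range (N+1)) (fun i _ => pow_nonneg hβpos.le i)
          (summable_geometric_of_lt_one hβpos.le hβlt)
        rwa [tsum_geometric_of_lt_one hβpos.le hβlt] at this
      have hKbγ : h^Kb ≤ h^γ := Real.rpow_le_rpow_of_exponent_ge hh0 hh1 hγKb.le
      have hhγ : (0:ℝ) ≤ h^γ := Real.rpow_nonneg hh0.le γ
      have h2C : (0:ℝ) ≤ 2*C*(1-α)⁻¹ := by
        have : (0:ℝ) < 1 - α := by linarith
        positivity
      calc ∑' n, g h n
          ≤ 2*C*h^γ * (∑ i ∈ Finset.range (N+1), β^i) + 2*C*(1-α)⁻¹ * h^Kb :=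
            core h hh0 hh1 N hhN hhN'
        _ ≤ 2*C*h^γ * (1-β)⁻¹ + 2*C*(1-α)⁻¹ * h^γ := by
            apply add_le_add
            · exact mul_le_mul_of_nonneg_left hgeom (by positivity)
            · exact mul_le_mul_of_nonneg_left hKbγ h2C
        _ = (2*C*(1-β)⁻¹ + 2*C*(1-α)⁻¹) * h^γ := by ring
        _ = (2*C*(1-β)⁻¹ + 2*C*(1-α)⁻¹) * h^(min K γ) := by rw [hmin]
    · -- β > 1 : Kb < γ, exponent is Kb
      have hKbγ : Kb < γ := by
        have := Real.log_pos hβgt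
        nlinarith [hβlog]
      have hKb1 : Kb ≤ 1 := by linarith
      have hKeq : K = Kb := by rw [hK]; exact min_eq_right hKb1
      have hmin : min K γ = Kb := by rw [hKeq]; exact min_eq_left hKbγ.le
      have hβ1 : (0:ℝ) < β - 1 := by linarith
      refine ⟨2*C*β*(β-1)⁻¹ + 2*C*(1-α)⁻¹, by
        have h2 : (0:ℝ) < 1 - α := by linarith
        positivity, ?_⟩
      intro h hh0 hh1
      obtain ⟨N, hhN, hhN'⟩ := getN h hh0 hh1
      have hβN : β ^ N ≤ h^(Kb-γ) := by
        have e3 : β ^ N = ((b:ℝ)^(-(N:ℝ)))^(Kb-γ) := by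
          rw [hβeq, ← Real.rpow_natCast ((b:ℝ)^(γ-Kb)) N, ← Real.rpow_mul hb0.le,
            ← Real.rpow_mul hb0.le]
          congr 1; ring
        rw [e3]
        exact Real.rpow_le_rpow_of_nonpos hh0 hhN (by linarith)
      have hgeom : ∑ i ∈ Finset.range (N+1), β^i ≤ β * h^(Kb-γ) * (β-1)⁻¹ := by
        rw [geom_sum_eq hβne1]
        have h1 : β^(N+1) - 1 ≤ β * h^(Kb-γ) := by
          have : β^(N+1) = β * β^N := by ring
          nlinarith [mul_le_mul_of_nonneg_left hβN hβpos.le]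
        rw [div_eq_mul_inv]
        exact mul_le_mul_of_nonneg_right h1 (by positivity)
      have hexp : h^γ * h^(Kb-γ) = h^Kb := by
        rw [← Real.rpow_add hh0]; congr 1; ring
      have hhγ : (0:ℝ) ≤ h^γ := Real.rpow_nonneg hh0.le γ
      calc ∑' n, g h n
          ≤ 2*C*h^γ * (∑ i ∈ Finset.range (N+1), β^i) + 2*C*(1-α)⁻¹ * h^Kb :=
            core h hh0 hh1 N hhN hhN'
        _ ≤ 2*C*h^γ * (β * h^(Kb-γ) * (β-1)⁻¹) + 2*C*(1-α)⁻¹ * h^Kb := by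
            apply add_le_add_left
            exact mul_le_mul_of_nonneg_left hgeom (by positivity)
        _ = 2*C*β*(β-1)⁻¹ * (h^γ * h^(Kb-γ)) + 2*C*(1-α)⁻¹ * h^Kb := by ring
        _ = (2*C*β*(β-1)⁻¹ + 2*C*(1-α)⁻¹) * h^Kb := by rw [hexp]; ring
        _ = (2*C*β*(β-1)⁻¹ + 2*C*(1-α)⁻¹) * h^(min K γ) := by rw [hmin]
  -- assemble
  obtain ⟨L, hL, hmain⟩ := main
  refine ⟨L, hL, ?_⟩
  intro s hs t ht
  rcases eq_or_ne t s with rfl | hts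
  · simp [Real.zero_rpow (ne_of_gt hminpos)]
  · have hh0 : 0 < |t - s| := abs_pos.mpr (sub_ne_zero.mpr hts)
    have hh1 : |t - s| ≤ 1 := by
      rw [abs_le]
      constructor <;> [linarith [hs.1, ht.2, hs.2, ht.1]; linarith [hs.1, ht.2, hs.2, ht.1]]
    exact (key s t).trans (hmain _ hh0 hh1)
end

section
/- Let b ∈ {2,3,…} be an integer, α ∈ (0,1), and let φ : [0,1] → ℝ be Hölder continuous with exponent γ ∈ (0,1] and satisfy φ(0) = φ(1). Set K := min(1, −log α / log b) and define f(t) := ∑_{n=0}^∞ αⁿ φ(⟨bⁿ t⟩) for t ∈ [0,1]. If K = γ, then there exists a constant c > 0 such that |f(t) − f(s)| ≤ c·|t − s|^γ · log(1/|t − s|) for all s, t ∈ [0,1] with 0 < |t − s| ≤ 1/2. In particular, f is Hölder continuous on [0,1] with exponent β for every β < γ. -/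
open Set

lemma fract_holder_aux (γ : ℝ) (hγ0 : 0 < γ) (φ : ℝ → ℝ) (C : ℝ) (hC : 0 < C)
    (hHolder : ∀ x ∈ Set.Icc (0 : ℝ) 1, ∀ y ∈ Set.Icc (0 : ℝ) 1,
      |φ x - φ y| ≤ C * |x - y| ^ γ)
    (hφ : φ 0 = φ 1) :
    ∀ x y : ℝ, |φ (Int.fract x) - φ (Int.fract y)| ≤ 2 * C * |x - y| ^ γ := by
  have hmem : ∀ z : ℝ, Int.fract z ∈ Set.Icc (0:ℝ) 1 :=
    fun z => ⟨Int.fract_nonneg z, (Int.fract_lt_one z).le⟩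
  have h01 : (0:ℝ) ∈ Set.Icc (0:ℝ) 1 := ⟨le_refl _, zero_le_one⟩
  have h11 : (1:ℝ) ∈ Set.Icc (0:ℝ) 1 := ⟨zero_le_one, le_refl _⟩
  have key : ∀ x y : ℝ, x ≤ y → |φ (Int.fract x) - φ (Int.fract y)| ≤ 2 * C * |x - y| ^ γ := by
    intro x y hxy
    have hfx0 := Int.fract_nonneg x
    have hfx1 := Int.fract_lt_one x
    set d := y - x with hd
    have hd0 : 0 ≤ d := by simp only [hd]; linarith
    have habs : |x - y| = d := by rw [abs_sub_comm, abs_of_nonneg hd0]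
    rw [habs]
    rcases le_or_gt 1 d with h1d | hd1
    · -- d ≥ 1 : crude bound
      have hdγ : (1:ℝ) ≤ d ^ γ := Real.one_le_rpow h1d hγ0.le
      have b1 : |φ (Int.fract x) - φ 0| ≤ C := by
        calc |φ (Int.fract x) - φ 0| ≤ C * |Int.fract x - 0| ^ γ := hHolder _ (hmem x) _ h01
        _ ≤ C * 1 := by
            gcongr
            exact Real.rpow_le_one (abs_nonneg _)
              (by rw [sub_zero, abs_of_nonneg hfx0]; exact hfx1.le) hγ0.le
        _ = C := mul_one C
      have b2 : |φ (Int.fract y) - φ 0| ≤ C := by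
        calc |φ (Int.fract y) - φ 0| ≤ C * |Int.fract y - 0| ^ γ := hHolder _ (hmem y) _ h01
        _ ≤ C * 1 := by
            gcongr
            exact Real.rpow_le_one (abs_nonneg _)
              (by rw [sub_zero, abs_of_nonneg (Int.fract_nonneg y)]
                  exact (Int.fract_lt_one y).le) hγ0.le
        _ = C := mul_one C
      calc |φ (Int.fract x) - φ (Int.fract y)|
          ≤ |φ (Int.fract x) - φ 0| + |φ 0 - φ (Int.fract y)| := abs_sub_le _ _ _
        _ ≤ C + C := by rw [abs_sub_comm (φ 0)]; exact add_le_add b1 b2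
        _ = 2 * C * 1 := by ring
        _ ≤ 2 * C * d ^ γ := by gcongr
    · -- d < 1
      have hyfr : Int.fract y = Int.fract (Int.fract x + d) := by
        rw [Int.fract_eq_fract]
        refine ⟨⌊x⌋, ?_⟩
        rw [hd, show y - (Int.fract x + (y - x)) = x - Int.fract x by ring, Int.self_sub_fract]
      rcases lt_or_ge (Int.fract x + d) 1 with hcase | hcase
      · -- no wraparound
        have heq1 : Int.fract (Int.fract x + d) = Int.fract x + d :=
          Int.fract_eq_self.mpr ⟨by linarith, hcase⟩
        rw [hyfr, heq1]
        have hdγ0 : (0:ℝ) ≤ d ^ γ := Real.rpow_nonneg hd0 _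
        calc |φ (Int.fract x) - φ (Int.fract x + d)|
            ≤ C * |Int.fract x - (Int.fract x + d)| ^ γ :=
              hHolder _ (hmem x) (Int.fract x + d) ⟨by linarith, hcase.le⟩
          _ = C * d ^ γ := by rw [show Int.fract x - (Int.fract x + d) = -d by ring,
              abs_neg, abs_of_nonneg hd0]
          _ ≤ 2 * C * d ^ γ := by nlinarith
      · -- wraparound
        have hfr2 : Int.fract (Int.fract x + d) = Int.fract x + d - 1 := by
          have e1 : Int.fract (Int.fract x + d) = Int.fract (Int.fract x + d - 1) := by
            rw [Int.fract_eq_fract]; exact ⟨1, by push_cast; ring⟩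
          rw [e1]
          exact Int.fract_eq_self.mpr ⟨by linarith, by linarith⟩
        rw [hyfr, hfr2]
        set u := Int.fract x + d - 1 with hu
        have hul : u ≤ d := by rw [hu]; linarith
        have hu0 : 0 ≤ u := by rw [hu]; linarith
        have humem : u ∈ Set.Icc (0:ℝ) 1 := ⟨hu0, by rw [hu]; linarith⟩
        have b1 : |φ (Int.fract x) - φ 1| ≤ C * d ^ γ := by
          calc |φ (Int.fract x) - φ 1| ≤ C * |Int.fract x - 1| ^ γ := hHolder _ (hmem x) _ h11
            _ ≤ C * d ^ γ := by
                gcongr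
                rw [abs_sub_comm, abs_of_nonneg (by linarith)]
                linarith
        have b2 : |φ 0 - φ u| ≤ C * d ^ γ := by
          calc |φ 0 - φ u| ≤ C * |0 - u| ^ γ := hHolder _ h01 _ humem
            _ ≤ C * d ^ γ := by
                gcongr
                rw [zero_sub, abs_neg, abs_of_nonneg hu0]; exact hul
        calc |φ (Int.fract x) - φ u|
            ≤ |φ (Int.fract x) - φ 1| + |φ 1 - φ u| := abs_sub_le _ _ _
          _ = |φ (Int.fract x) - φ 1| + |φ 0 - φ u| := by rw [hφ]
          _ ≤ C * d ^ γ + C * d ^ γ := add_le_add b1 b2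
          _ = 2 * C * d ^ γ := by ring
  intro x y
  rcases le_total x y with hxy | hxy
  · exact key x y hxy
  · rw [abs_sub_comm (φ _), abs_sub_comm x]
    exact key y x hxy

/-- Proposition A.1 (b): in the critical case `K = γ`, the fractal function
`f(t) = ∑ αⁿ φ(⟨bⁿ t⟩)` admits the modulus of continuity `c t^γ log(1/t)`;
in particular it is Hölder continuous with any exponent `β < γ`. -/
theorem fractal_modulus_of_eq (b : ℕ) (hb : 2 ≤ b) (α γ : ℝ)
    (hα : α ∈ Set.Ioo (0 : ℝ) 1) (hγ0 : 0 < γ) (hγ1 : γ ≤ 1)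
    (φ : ℝ → ℝ) (C : ℝ) (hC : 0 < C)
    (hHolder : ∀ x ∈ Set.Icc (0 : ℝ) 1, ∀ y ∈ Set.Icc (0 : ℝ) 1,
      |φ x - φ y| ≤ C * |x - y| ^ γ)
    (hφ : φ 0 = φ 1)
    (K : ℝ) (hK : K = min 1 (-Real.log α / Real.log b))
    (f : ℝ → ℝ)
    (hf : ∀ t, f t = ∑' n : ℕ, α ^ n * φ (Int.fract ((b : ℝ) ^ n * t)))
    (heq : K = γ) :
    (∃ c > 0, ∀ s ∈ Set.Icc (0 : ℝ) 1, ∀ t ∈ Set.Icc (0 : ℝ) 1,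
      0 < |t - s| → |t - s| ≤ 1 / 2 →
        |f t - f s| ≤ c * |t - s| ^ γ * Real.log (1 / |t - s|)) ∧
    (∀ β : ℝ, 0 < β → β < γ →
      ∃ L > 0, ∀ s ∈ Set.Icc (0 : ℝ) 1, ∀ t ∈ Set.Icc (0 : ℝ) 1,
        |f t - f s| ≤ L * |t - s| ^ β) := by
  obtain ⟨hα0, hα1⟩ := hα
  have h1α : (0:ℝ) < 1 - α := by linarith
  have hb1 : (1:ℝ) < (b:ℝ) := by exact_mod_cast lt_of_lt_of_le one_lt_two (by exact_mod_cast hb)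
  have hb0 : (0:ℝ) < (b:ℝ) := lt_trans one_pos hb1
  have hlogb : 0 < Real.log b := Real.log_pos hb1
  have hlog2 : 0 < Real.log 2 := Real.log_pos one_lt_two
  have hγle : γ ≤ -Real.log α / Real.log b := by
    rw [← heq, hK]; exact min_le_right _ _
  have hγlogb : γ * Real.log b ≤ -Real.log α := (le_div_iff₀ hlogb).mp hγle
  have hαbγ : α * (b:ℝ) ^ γ ≤ 1 := by
    have h1 : (b:ℝ) ^ γ = Real.exp (Real.log b * γ) := Real.rpow_def_of_pos hb0 γ
    calc α * (b:ℝ)^γ = Real.exp (Real.log α + Real.log b * γ) := by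
          rw [Real.exp_add, ← h1, Real.exp_log hα0]
      _ ≤ Real.exp 0 := Real.exp_le_exp.mpr (by linarith)
      _ = 1 := Real.exp_zero
  set M := |φ 0| + C with hMdef
  have hM0 : 0 < M := by positivity
  have hφM : ∀ z : ℝ, |φ (Int.fract z)| ≤ M := by
    intro z
    have hm : Int.fract z ∈ Set.Icc (0:ℝ) 1 := ⟨Int.fract_nonneg z, (Int.fract_lt_one z).le⟩
    have hh := hHolder _ hm 0 ⟨le_refl _, zero_le_one⟩
    have h2 : |Int.fract z - 0| ^ γ ≤ 1 :=
      Real.rpow_le_one (abs_nonneg _)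
        (by rw [sub_zero, abs_of_nonneg (Int.fract_nonneg z)]; exact (Int.fract_lt_one z).le)
        hγ0.le
    calc |φ (Int.fract z)| ≤ |φ (Int.fract z) - φ 0| + |φ 0| := by
          simpa using abs_add_le (φ (Int.fract z) - φ 0) (φ 0)
      _ ≤ C * |Int.fract z - 0| ^ γ + |φ 0| := by linarith
      _ ≤ C * 1 + |φ 0| := by nlinarith
      _ = M := by rw [hMdef]; ring
  have hgeo : Summable (fun n : ℕ => α ^ n) := summable_geometric_of_lt_one hα0.le hα1
  have termbound : ∀ (u : ℝ) (n : ℕ), |α ^ n * φ (Int.fract ((b:ℝ)^n * u))| ≤ M * α ^ n := by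
    intro u n
    rw [abs_mul, abs_pow, abs_of_pos hα0, mul_comm]
    exact mul_le_mul_of_nonneg_right (hφM _) (pow_nonneg hα0.le n)
  have hsumabs : ∀ u : ℝ, Summable (fun n : ℕ => |α ^ n * φ (Int.fract ((b:ℝ)^n * u))|) := by
    intro u
    exact Summable.of_nonneg_of_le (fun n => abs_nonneg _) (termbound u) (hgeo.mul_left M)
  have hsum : ∀ u : ℝ, Summable (fun n : ℕ => α ^ n * φ (Int.fract ((b:ℝ)^n * u))) := by
    intro u
    apply Summable.of_norm
    simpa only [Real.norm_eq_abs] using hsumabs u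
  have habstsum : ∀ u : ℝ, |∑' n : ℕ, α ^ n * φ (Int.fract ((b:ℝ)^n * u))|
      ≤ ∑' n : ℕ, |α ^ n * φ (Int.fract ((b:ℝ)^n * u))| := by
    intro u
    have h' : Summable fun n : ℕ => ‖α ^ n * φ (Int.fract ((b:ℝ)^n * u))‖ := by
      simpa only [Real.norm_eq_abs] using hsumabs u
    simpa only [Real.norm_eq_abs] using norm_tsum_le_tsum_norm h'
  have hfbdd : ∀ u : ℝ, |f u| ≤ M / (1 - α) := by
    intro u
    rw [hf]
    calc |∑' n : ℕ, α ^ n * φ (Int.fract ((b:ℝ)^n * u))|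
        ≤ ∑' n : ℕ, |α ^ n * φ (Int.fract ((b:ℝ)^n * u))| := habstsum u
      _ ≤ ∑' n : ℕ, M * α ^ n := Summable.tsum_le_tsum (termbound u) (hsumabs u) (hgeo.mul_left M)
      _ = M * (1 - α)⁻¹ := by rw [tsum_mul_left, tsum_geometric_of_lt_one hα0.le hα1]
      _ = M / (1 - α) := (div_eq_mul_inv _ _).symm
  have hA : ∀ n : ℕ, α ^ n * ((b:ℝ) ^ n) ^ γ ≤ 1 := by
    intro n
    have e1 : ((b:ℝ) ^ n) ^ γ = ((b:ℝ) ^ γ) ^ n := by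
      rw [← Real.rpow_natCast (b:ℝ) n, ← Real.rpow_natCast ((b:ℝ)^γ) n,
        ← Real.rpow_mul hb0.le, ← Real.rpow_mul hb0.le, mul_comm]
    rw [e1, ← mul_pow]
    exact pow_le_one₀ (mul_nonneg hα0.le (Real.rpow_nonneg hb0.le γ)) hαbγ
  have hΦ := fract_holder_aux γ hγ0 φ C hC hHolder hφ
  set c₀ := 2*C*(1/Real.log b + 1/Real.log 2) + 2*M/((1-α)*Real.log 2) with hc₀def
  have hc₀ : 0 < c₀ := by
    have hc1 : 0 < 2*C*(1/Real.log b + 1/Real.log 2) :=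
      mul_pos (by linarith) (add_pos (one_div_pos.mpr hlogb) (one_div_pos.mpr hlog2))
    have hc2 : 0 < 2*M/((1-α)*Real.log 2) := div_pos (by linarith) (mul_pos h1α hlog2)
    rw [hc₀def]; linarith
  have main : ∀ s t : ℝ, 0 < |t - s| → |t - s| ≤ 1/2 →
      |f t - f s| ≤ c₀ * |t - s| ^ γ * Real.log (1 / |t - s|) := by
    intro s t h0 h12
    set h := |t - s| with hhdef
    have h2h : (2:ℝ) ≤ 1/h := by rw [le_div_iff₀ h0]; linarith
    have hlog1h : Real.log 2 ≤ Real.log (1/h) := Real.log_le_log (by norm_num) h2h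
    have hlogpos : 0 < Real.log (1/h) := lt_of_lt_of_le hlog2 hlog1h
    have hone : (1:ℝ) ≤ Real.log (1/h) / Real.log 2 := (le_div_iff₀ hlog2).mpr (by linarith)
    set N := ⌈Real.log (1/h) / Real.log b⌉₊ with hNdef
    have hNle : (N:ℝ) ≤ Real.log (1/h) / Real.log b + 1 :=
      (Nat.ceil_lt_add_one (by positivity)).le
    have hNge : Real.log (1/h) / Real.log b ≤ (N:ℝ) := Nat.le_ceil _
    have hbN : 1/h ≤ (b:ℝ) ^ N := by
      have h1 : Real.log (1/h) ≤ (N:ℝ) * Real.log b := by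
        rw [div_le_iff₀ hlogb] at hNge; linarith
      calc 1/h = Real.exp (Real.log (1/h)) := (Real.exp_log (by positivity)).symm
        _ ≤ Real.exp ((N:ℝ) * Real.log b) := Real.exp_le_exp.mpr h1
        _ = (b:ℝ) ^ N := by rw [Real.exp_nat_mul, Real.exp_log hb0]
    have hbNpos : (0:ℝ) < (b:ℝ)^N := pow_pos hb0 N
    have hbNinv : ((b:ℝ)^N)⁻¹ ≤ h := by
      rw [inv_le_comm₀ hbNpos h0, ← one_div]
      exact hbN
    have hαN : α ^ N ≤ h ^ γ := by
      have l1 : Real.log ((b:ℝ)^N)⁻¹ ≤ Real.log h := Real.log_le_log (by positivity) hbNinv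
      have l2 : -((N:ℝ) * Real.log b) ≤ Real.log h := by
        rwa [Real.log_inv, Real.log_pow] at l1
      have l4 : (N:ℝ) * Real.log α ≤ γ * Real.log h := by
        calc (N:ℝ) * Real.log α ≤ (N:ℝ) * (-(γ * Real.log b)) :=
              mul_le_mul_of_nonneg_left (by linarith) (Nat.cast_nonneg N)
          _ = γ * (-((N:ℝ) * Real.log b)) := by ring
          _ ≤ γ * Real.log h := mul_le_mul_of_nonneg_left l2 hγ0.le
      calc α ^ N = Real.exp ((N:ℝ) * Real.log α) := by
            rw [Real.exp_nat_mul, Real.exp_log hα0]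
        _ ≤ Real.exp (γ * Real.log h) := Real.exp_le_exp.mpr l4
        _ = h ^ γ := by rw [Real.rpow_def_of_pos h0, mul_comm]
    have headbound : ∀ n : ℕ,
        |α ^ n * φ (Int.fract ((b:ℝ)^n * t)) - α ^ n * φ (Int.fract ((b:ℝ)^n * s))|
          ≤ 2 * C * h ^ γ := by
      intro n
      have hbn : (0:ℝ) < (b:ℝ)^n := pow_pos hb0 n
      have e1 : |(b:ℝ)^n * t - (b:ℝ)^n * s| ^ γ = ((b:ℝ)^n) ^ γ * h ^ γ := by
        rw [show (b:ℝ)^n * t - (b:ℝ)^n * s = (b:ℝ)^n * (t - s) by ring, abs_mul,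
          abs_of_pos hbn, Real.mul_rpow hbn.le (abs_nonneg _)]
      rw [← mul_sub, abs_mul, abs_pow, abs_of_pos hα0]
      calc α ^ n * |φ (Int.fract ((b:ℝ)^n * t)) - φ (Int.fract ((b:ℝ)^n * s))|
          ≤ α ^ n * (2 * C * |(b:ℝ)^n * t - (b:ℝ)^n * s| ^ γ) :=
            mul_le_mul_of_nonneg_left (hΦ _ _) (pow_nonneg hα0.le n)
        _ = 2 * C * (α ^ n * ((b:ℝ)^n) ^ γ) * h ^ γ := by rw [e1]; ring
        _ ≤ 2 * C * 1 * h ^ γ :=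
            mul_le_mul_of_nonneg_right
              (mul_le_mul_of_nonneg_left (hA n) (by linarith))
              (Real.rpow_nonneg (abs_nonneg _) _)
        _ = 2 * C * h ^ γ := by ring
    have hgsum : Summable (fun n : ℕ => α ^ n * φ (Int.fract ((b:ℝ)^n * t))
        - α ^ n * φ (Int.fract ((b:ℝ)^n * s))) := (hsum t).sub (hsum s)
    have hdiff : f t - f s = ∑' n : ℕ, (α ^ n * φ (Int.fract ((b:ℝ)^n * t))
        - α ^ n * φ (Int.fract ((b:ℝ)^n * s))) := by
      rw [hf t, hf s, ← Summable.tsum_sub (hsum t) (hsum s)]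
    have hgdtail : ∀ n : ℕ,
        |α ^ (n+N) * φ (Int.fract ((b:ℝ)^(n+N) * t))
          - α ^ (n+N) * φ (Int.fract ((b:ℝ)^(n+N) * s))| ≤ (2*M*α^N) * α^n := by
      intro n
      calc |α ^ (n+N) * φ (Int.fract ((b:ℝ)^(n+N) * t))
            - α ^ (n+N) * φ (Int.fract ((b:ℝ)^(n+N) * s))|
          ≤ |α ^ (n+N) * φ (Int.fract ((b:ℝ)^(n+N) * t))|
            + |α ^ (n+N) * φ (Int.fract ((b:ℝ)^(n+N) * s))| := abs_sub _ _
        _ ≤ M * α ^ (n+N) + M * α ^ (n+N) := add_le_add (termbound t _) (termbound s _)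
        _ = (2*M*α^N) * α^n := by rw [pow_add]; ring
    have htailsum : Summable (fun n : ℕ =>
        |α ^ (n+N) * φ (Int.fract ((b:ℝ)^(n+N) * t))
          - α ^ (n+N) * φ (Int.fract ((b:ℝ)^(n+N) * s))|) :=
      Summable.of_nonneg_of_le (fun n => abs_nonneg _) hgdtail (hgeo.mul_left _)
    have habs2 : |∑' n : ℕ, (α ^ (n+N) * φ (Int.fract ((b:ℝ)^(n+N) * t))
        - α ^ (n+N) * φ (Int.fract ((b:ℝ)^(n+N) * s)))| ≤ 2*M*α^N / (1-α) := by
      have h' : Summable fun n : ℕ => ‖α ^ (n+N) * φ (Int.fract ((b:ℝ)^(n+N) * t))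
          - α ^ (n+N) * φ (Int.fract ((b:ℝ)^(n+N) * s))‖ := by
        simpa only [Real.norm_eq_abs] using htailsum
      have h1 := norm_tsum_le_tsum_norm h'
      simp only [Real.norm_eq_abs] at h1
      calc |∑' n : ℕ, (α ^ (n+N) * φ (Int.fract ((b:ℝ)^(n+N) * t))
            - α ^ (n+N) * φ (Int.fract ((b:ℝ)^(n+N) * s)))|
          ≤ ∑' n : ℕ, |α ^ (n+N) * φ (Int.fract ((b:ℝ)^(n+N) * t))
            - α ^ (n+N) * φ (Int.fract ((b:ℝ)^(n+N) * s))| := h1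
        _ ≤ ∑' n : ℕ, (2*M*α^N) * α^n := Summable.tsum_le_tsum hgdtail htailsum (hgeo.mul_left _)
        _ = (2*M*α^N) * (1-α)⁻¹ := by rw [tsum_mul_left, tsum_geometric_of_lt_one hα0.le hα1]
        _ = 2*M*α^N / (1-α) := (div_eq_mul_inv _ _).symm
    have habs1 : |∑ n ∈ Finset.range N, (α ^ n * φ (Int.fract ((b:ℝ)^n * t))
        - α ^ n * φ (Int.fract ((b:ℝ)^n * s)))| ≤ (N:ℝ) * (2*C*h^γ) := by
      calc |∑ n ∈ Finset.range N, (α ^ n * φ (Int.fract ((b:ℝ)^n * t))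
            - α ^ n * φ (Int.fract ((b:ℝ)^n * s)))|
          ≤ ∑ n ∈ Finset.range N, |α ^ n * φ (Int.fract ((b:ℝ)^n * t))
            - α ^ n * φ (Int.fract ((b:ℝ)^n * s))| := Finset.abs_sum_le_sum_abs _ _
        _ ≤ ∑ _n ∈ Finset.range N, 2*C*h^γ := Finset.sum_le_sum (fun n _ => headbound n)
        _ = (N:ℝ) * (2*C*h^γ) := by rw [Finset.sum_const, Finset.card_range, nsmul_eq_mul]
    have step : |f t - f s| ≤ (N:ℝ) * (2*C*h^γ) + 2*M*α^N/(1-α) := by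
      rw [hdiff, ← Summable.sum_add_tsum_nat_add N hgsum]
      exact (abs_add_le _ _).trans (add_le_add habs1 habs2)
    have hNbound : (N:ℝ) ≤ (1/Real.log b + 1/Real.log 2) * Real.log (1/h) := by
      calc (N:ℝ) ≤ Real.log (1/h)/Real.log b + 1 := hNle
        _ ≤ Real.log (1/h)/Real.log b + Real.log (1/h)/Real.log 2 := by
            have : (1:ℝ) ≤ Real.log (1/h)/Real.log 2 := hone
            linarith
        _ = (1/Real.log b + 1/Real.log 2) * Real.log (1/h) := by ring
    have hhγ : (0:ℝ) ≤ h ^ γ := Real.rpow_nonneg (abs_nonneg _) _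
    calc |f t - f s| ≤ (N:ℝ)*(2*C*h^γ) + 2*M*α^N/(1-α) := step
      _ ≤ ((1/Real.log b + 1/Real.log 2) * Real.log (1/h))*(2*C*h^γ)
          + (2*M/((1-α)*Real.log 2)) * h^γ * Real.log (1/h) := by
          apply add_le_add
          · exact mul_le_mul_of_nonneg_right hNbound (mul_nonneg (by linarith) hhγ)
          · calc 2*M*α^N/(1-α) ≤ 2*M*h^γ/(1-α) := by
                  apply div_le_div_of_nonneg_right ?_ h1α.le
                  exact mul_le_mul_of_nonneg_left hαN (by linarith)
              _ ≤ 2*M*h^γ/(1-α) * (Real.log (1/h)/Real.log 2) :=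
                  le_mul_of_one_le_right
                    (div_nonneg (mul_nonneg (by linarith) hhγ) h1α.le) hone
              _ = (2*M/((1-α)*Real.log 2)) * h^γ * Real.log (1/h) := by
                  field_simp
      _ = c₀ * h ^ γ * Real.log (1/h) := by rw [hc₀def]; ring
  constructor
  · exact ⟨c₀, hc₀, fun s _ t _ h0 h12 => main s t h0 h12⟩
  · intro β hβ0 hβγ
    set δ := γ - β with hδdef
    have hδ0 : 0 < δ := by rw [hδdef]; linarith
    have h2β : (0:ℝ) < (2:ℝ) ^ β := Real.rpow_pos_of_pos two_pos β
    set L := c₀/δ + 2*M/(1-α)*(2:ℝ)^β with hLdef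
    have hL2 : 0 ≤ 2*M/(1-α)*(2:ℝ)^β :=
      mul_nonneg (div_nonneg (by linarith) h1α.le) h2β.le
    have hL : 0 < L := by
      have : 0 < c₀/δ := div_pos hc₀ hδ0
      rw [hLdef]; linarith
    refine ⟨L, hL, fun s _ t _ => ?_⟩
    by_cases hts : t = s
    · simp [hts, Real.zero_rpow hβ0.ne']
    · have hpos : 0 < |t - s| := abs_pos.mpr (sub_ne_zero.mpr hts)
      have hrβ : (0:ℝ) ≤ |t - s| ^ β := Real.rpow_nonneg (abs_nonneg _) _
      rcases le_or_gt |t - s| (1/2) with hle | hgt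
      · have hkey : |t - s| ^ δ * Real.log (1/|t - s|) ≤ 1/δ := by
          have hxδ : 0 < |t - s| ^ δ := Real.rpow_pos_of_pos hpos δ
          have hixδ : (0:ℝ) < (1/|t - s|) ^ δ := Real.rpow_pos_of_pos (by positivity) δ
          have h1 : Real.log (1/|t - s|) = Real.log ((1/|t - s|) ^ δ) / δ := by
            rw [Real.log_rpow (by positivity)]
            field_simp
          have h2 : Real.log ((1/|t - s|) ^ δ) ≤ (1/|t - s|) ^ δ := by
            have := Real.log_le_sub_one_of_pos hixδ
            linarith
          calc |t - s| ^ δ * Real.log (1/|t - s|)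
              = |t - s| ^ δ * Real.log ((1/|t - s|) ^ δ) / δ := by rw [h1]; ring
            _ ≤ |t - s| ^ δ * (1/|t - s|) ^ δ / δ := by
                apply div_le_div_of_nonneg_right ?_ hδ0.le
                exact mul_le_mul_of_nonneg_left h2 hxδ.le
            _ = 1/δ := by
                rw [← Real.mul_rpow (abs_nonneg _) (by positivity), mul_one_div,
                  div_self hpos.ne', Real.one_rpow]
        have hγsplit : |t - s| ^ γ = |t - s| ^ β * |t - s| ^ δ := by
          rw [← Real.rpow_add hpos, hδdef]
          ring_nf
        calc |f t - f s| ≤ c₀ * |t - s|^γ * Real.log (1/|t - s|) := main s t hpos hle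
          _ = c₀ * |t - s|^β * (|t - s|^δ * Real.log (1/|t - s|)) := by rw [hγsplit]; ring
          _ ≤ c₀ * |t - s|^β * (1/δ) :=
              mul_le_mul_of_nonneg_left hkey (mul_nonneg hc₀.le hrβ)
          _ = (c₀/δ) * |t - s|^β := by ring
          _ ≤ L * |t - s|^β := by
              apply mul_le_mul_of_nonneg_right ?_ hrβ
              rw [hLdef]; linarith
      · have hb1' : |f t - f s| ≤ 2*(M/(1-α)) := by
          calc |f t - f s| ≤ |f t| + |f s| := abs_sub _ _
            _ ≤ M/(1-α) + M/(1-α) := add_le_add (hfbdd t) (hfbdd s)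
            _ = 2*(M/(1-α)) := by ring
        have hhb : ((1:ℝ)/2) ^ β ≤ |t - s| ^ β :=
          Real.rpow_le_rpow (by norm_num) hgt.le hβ0.le
        have hid : (2:ℝ)^β * ((1:ℝ)/2)^β = 1 := by
          rw [← Real.mul_rpow (by norm_num) (by norm_num)]
          norm_num
        calc |f t - f s| ≤ 2*(M/(1-α)) := hb1'
          _ = (2*M/(1-α)*(2:ℝ)^β) * ((1:ℝ)/2)^β := by
              rw [show 2*(M/(1-α)) = 2*M/(1-α) by ring, mul_assoc, hid, mul_one]
          _ ≤ (2*M/(1-α)*(2:ℝ)^β) * |t - s|^β := mul_le_mul_of_nonneg_left hhb hL2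
          _ ≤ L * |t - s|^β := by
              apply mul_le_mul_of_nonneg_right ?_ hrβ
              rw [hLdef]
              have : 0 < c₀/δ := div_pos hc₀ hδ0
              linarith
end

section
/- Let b ∈ {2,3,…}, let α ∈ (0,1) and γ ∈ (0,1] be such that α·b^γ > 1, and let φ : [0,1] → ℝ be Hölder continuous with exponent γ and satisfy φ(0) = φ(1). Define f(t) := ∑_{n=0}^∞ αⁿ φ(⟨bⁿ t⟩), let p := −log b / log α (so that α^p b = 1), let U₁, U₂, … be independent uniform random variables on {0,…,b−1}, R_m := ∑_{i=1}^m U_i b^{i−1}, and Z := ∑_{m=1}^∞ α^{−m}·(φ((R_m + 1)·b^{−m}) − φ(R_m·b^{−m})). Then for every t ∈ [0,1], the limit lim_{n→∞} ∑_{k=0}^{⌊t·bⁿ⌋} |f((k+1)·b^{−n}) − f(k·b^{−n})|^p exists and equals t·E[|Z|^p]. -/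
open MeasureTheory ProbabilityTheory Filter
open scoped ENNReal NNReal

/- ===================== auxiliary lemmas ===================== -/

/-- MVT bound for rpow. -/
lemma pthvar_rpow_lip_aux {p M x y : ℝ} (hp : 1 ≤ p) (hx : 0 ≤ x) (hxy : x ≤ y) (hyM : y ≤ M) :
    y ^ p - x ^ p ≤ p * M ^ (p - 1) * (y - x) := by
  rcases eq_or_lt_of_le hxy with rfl | hlt
  · simp
  have hcont : ContinuousOn (fun z : ℝ => z ^ p) (Set.Icc x y) := fun z _ =>
    (Real.continuousAt_rpow_const z p (Or.inr (by linarith))).continuousWithinAt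
  obtain ⟨c, hc, hc'⟩ := exists_hasDerivAt_eq_slope (fun z : ℝ => z ^ p)
    (fun z => p * z ^ (p - 1)) hlt hcont
    (fun z _ => Real.hasDerivAt_rpow_const (Or.inr hp))
  have hc0 : 0 ≤ c := le_of_lt (lt_of_le_of_lt hx hc.1)
  have hcM : c ≤ M := le_trans (le_of_lt hc.2) hyM
  have h1 : c ^ (p - 1) ≤ M ^ (p - 1) := Real.rpow_le_rpow hc0 hcM (by linarith)
  have h2 : (y ^ p - x ^ p) / (y - x) ≤ p * M ^ (p - 1) := by
    rw [← hc']
    have hp0 : 0 ≤ p := by linarith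
    nlinarith [Real.rpow_nonneg hc0 (p - 1)]
  have hyx : 0 < y - x := by linarith
  calc y ^ p - x ^ p = (y ^ p - x ^ p) / (y - x) * (y - x) := by field_simp
    _ ≤ p * M ^ (p - 1) * (y - x) := by
        apply mul_le_mul_of_nonneg_right h2 (le_of_lt hyx)

lemma pthvar_abs_rpow_lip {p M : ℝ} (hp : 1 ≤ p) (a c : ℝ) (haM : |a| ≤ M) (hcM : |c| ≤ M) :
    |(|a| ^ p - |c| ^ p)| ≤ p * M ^ (p - 1) * |a - c| := by
  have key : ∀ u v : ℝ, |v| ≤ |u| → |u| ≤ M → |v| ≤ M →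
      |(|u| ^ p - |v| ^ p)| ≤ p * M ^ (p - 1) * |u - v| := by
    intro u v huv huM hvM
    have h1 : |v| ^ p ≤ |u| ^ p := Real.rpow_le_rpow (abs_nonneg v) huv (by linarith)
    rw [abs_of_nonneg (by linarith)]
    calc |u| ^ p - |v| ^ p ≤ p * M ^ (p - 1) * (|u| - |v|) :=
          pthvar_rpow_lip_aux hp (abs_nonneg v) huv huM
      _ ≤ p * M ^ (p - 1) * |u - v| := by
          have hM0 : (0:ℝ) ≤ M := le_trans (abs_nonneg u) huM
          have := abs_abs_sub_abs_le_abs_sub u v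
          have h3 : |u| - |v| ≤ |u - v| := le_trans (le_abs_self _) this
          have h4 : (0:ℝ) ≤ p * M ^ (p - 1) := by positivity
          exact mul_le_mul_of_nonneg_left h3 h4
  rcases le_total (|c|) (|a|) with h | h
  · exact key a c h haM hcM
  · rw [abs_sub_comm, abs_sub_comm a c]; exact key c a h hcM haM

/-- digit sums are < b^N -/
lemma pthvar_digit_sum_lt {b : ℕ} (hb : 1 ≤ b) (u : ℕ → ℕ) (hu : ∀ i, u i < b) (N : ℕ) :
    ∑ i ∈ Finset.range N, u i * b ^ i < b ^ N := by
  induction N with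
  | zero => simp
  | succ N ih =>
    rw [Finset.sum_range_succ, pow_succ]
    have h1 : u N * b ^ N ≤ (b - 1) * b ^ N :=
      Nat.mul_le_mul_right _ (by have := hu N; omega)
    have h2 : b ^ N + (b - 1) * b ^ N = b ^ N * b := by
      have hb' : (b - 1) + 1 = b := by omega
      calc b ^ N + (b - 1) * b ^ N = ((b-1) + 1) * b ^ N := by ring
        _ = b ^ N * b := by rw [hb']; ring
    have h3 : ∑ i ∈ Finset.range N, u i * b ^ i + u N * b ^ N < b ^ N + (b - 1) * b ^ N :=
      Nat.add_lt_add_of_lt_of_le ih h1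
    omega

/-- extract digit j from a digit sum -/
lemma pthvar_digit_extract {b : ℕ} (hb : 1 ≤ b) (u : ℕ → ℕ) (hu : ∀ i, u i < b) {N j : ℕ}
    (hj : j < N) : (∑ i ∈ Finset.range N, u i * b ^ i) / b ^ j % b = u j := by
  have hsplit : ∑ i ∈ Finset.range N, u i * b ^ i =
      (∑ i ∈ Finset.range j, u i * b ^ i)
        + b ^ j * (u j + b * ∑ i ∈ Finset.range (N - (j+1)), u (j+1+i) * b ^ i) := by
    rw [← Finset.sum_range_add_sum_Ico _ (by omega : j + 1 ≤ N), Finset.sum_range_succ]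
    rw [Finset.sum_Ico_eq_sum_range]
    have heq : ∑ i ∈ Finset.range (N - (j+1)), u (j+1+i) * b ^ (j+1+i)
        = b ^ j * (b * ∑ i ∈ Finset.range (N - (j+1)), u (j+1+i) * b ^ i) := by
      rw [Finset.mul_sum, Finset.mul_sum]
      apply Finset.sum_congr rfl
      intro i _
      rw [pow_add, pow_add]; ring
    rw [heq]; ring
  rw [hsplit]
  have hA : (∑ i ∈ Finset.range j, u i * b ^ i) < b ^ j :=
    pthvar_digit_sum_lt hb u hu j
  have hbj : 0 < b ^ j := Nat.pow_pos (by omega)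
  rw [Nat.add_mul_div_left _ _ hbj, Nat.div_eq_of_lt hA, zero_add,
    Nat.add_mul_mod_self_left, Nat.mod_eq_of_lt (hu j)]

/-- reconstruct r from its digits -/
lemma pthvar_digit_recompose {b : ℕ} (hb : 1 ≤ b) : ∀ N r : ℕ, r < b ^ N →
    ∑ i ∈ Finset.range N, (r / b ^ i % b) * b ^ i = r := by
  intro N
  induction N with
  | zero =>
    intro r hr
    simp only [pow_zero] at hr
    simp only [Finset.range_zero, Finset.sum_empty]
    omega
  | succ N ih =>
    intro r hr
    rw [Finset.sum_range_succ']
    have h2 : ∑ i ∈ Finset.range N, (r / b ^ (i+1) % b) * b ^ (i+1)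
        = b * ∑ i ∈ Finset.range N, ((r / b) / b ^ i % b) * b ^ i := by
      rw [Finset.mul_sum]
      apply Finset.sum_congr rfl
      intro i _
      rw [pow_succ', Nat.div_div_eq_div_mul]
      ring
    have h3 : r / b < b ^ N := by
      apply Nat.div_lt_of_lt_mul
      rw [pow_succ'] at hr
      omega
    rw [h2, ih _ h3]
    simp only [pow_zero, Nat.div_one, mul_one]
    exact Nat.div_add_mod r b

lemma pthvar_sum_mod_blocks (L : ℕ) (h : ℕ → ℝ) :
    ∀ q : ℕ, ∑ k ∈ Finset.range (L * q), h (k % L) = q * ∑ r ∈ Finset.range L, h r := by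
  intro q
  induction q with
  | zero => simp
  | succ q ih =>
    have : L * (q + 1) = L * q + L := by ring
    rw [this, Finset.sum_range_add, ih]
    have h2 : ∑ i ∈ Finset.range L, h ((L * q + i) % L) = ∑ r ∈ Finset.range L, h r := by
      apply Finset.sum_congr rfl
      intro i hi
      rw [Finset.mem_range] at hi
      rw [Nat.mul_add_mod, Nat.mod_eq_of_lt hi]
    rw [h2]
    push_cast
    ring

lemma pthvar_sum_mod_periodic (L : ℕ) (hL : 0 < L) (h : ℕ → ℝ) (K : ℕ) :
    ∑ k ∈ Finset.range K, h (k % L) =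
      (K / L : ℕ) * ∑ r ∈ Finset.range L, h r + ∑ r ∈ Finset.range (K % L), h r := by
  conv_lhs => rw [show K = L * (K / L) + K % L from (Nat.div_add_mod K L).symm]
  rw [Finset.sum_range_add, pthvar_sum_mod_blocks L h]
  congr 1
  apply Finset.sum_congr rfl
  intro i hi
  rw [Finset.mem_range] at hi
  have hiL : i < L := lt_of_lt_of_le hi (le_of_lt (Nat.mod_lt _ hL))
  rw [Nat.mul_add_mod, Nat.mod_eq_of_lt hiL]

/-- counting estimate -/
lemma pthvar_sum_mod_est (L : ℕ) (hL : 0 < L) (h : ℕ → ℝ) (B : ℝ) (hB : ∀ r, |h r| ≤ B) (K : ℕ) :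
    |∑ k ∈ Finset.range K, h (k % L) - (K : ℝ) / L * ∑ r ∈ Finset.range L, h r|
      ≤ 2 * L * B := by
  have hB0 : 0 ≤ B := le_trans (abs_nonneg _) (hB 0)
  set T := ∑ r ∈ Finset.range L, h r with hT
  have hTb : |T| ≤ L * B := by
    calc |T| ≤ ∑ r ∈ Finset.range L, |h r| := Finset.abs_sum_le_sum_abs _ _
      _ ≤ ∑ _r ∈ Finset.range L, B := Finset.sum_le_sum (fun r _ => hB r)
      _ = L * B := by rw [Finset.sum_const, Finset.card_range]; ring
  rw [pthvar_sum_mod_periodic L hL h K]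
  have h1 : |∑ r ∈ Finset.range (K % L), h r| ≤ L * B := by
    calc |∑ r ∈ Finset.range (K % L), h r| ≤ ∑ r ∈ Finset.range (K % L), |h r| :=
          Finset.abs_sum_le_sum_abs _ _
      _ ≤ ∑ _r ∈ Finset.range (K % L), B := Finset.sum_le_sum (fun r _ => hB r)
      _ = (K % L : ℕ) * B := by rw [Finset.sum_const, Finset.card_range]; ring
      _ ≤ L * B := by
          apply mul_le_mul_of_nonneg_right _ hB0
          exact_mod_cast le_of_lt (Nat.mod_lt _ hL)
  have h2 : |((K / L : ℕ) : ℝ) - (K : ℝ) / L| ≤ 1 := by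
    have hLpos : (0:ℝ) < L := by exact_mod_cast hL
    have hup : (K : ℝ) / L ≤ ((K / L : ℕ) : ℝ) + 1 := by
      rw [div_le_iff₀ hLpos]
      have hd := Nat.div_add_mod K L
      have hm := Nat.mod_lt K hL
      have h5 : K < L * (K / L) + L := by omega
      have h6 : (K : ℝ) < L * ((K / L : ℕ) : ℝ) + L := by exact_mod_cast h5
      nlinarith
    have hlo : ((K / L : ℕ) : ℝ) ≤ (K : ℝ) / L := by
      rw [le_div_iff₀ hLpos]
      have := Nat.div_mul_le_self K L
      exact_mod_cast this
    rw [abs_le]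
    constructor <;> linarith
  calc |((K / L : ℕ) : ℝ) * T + ∑ r ∈ Finset.range (K % L), h r - (K : ℝ) / L * T|
      = |(((K / L : ℕ) : ℝ) - (K : ℝ) / L) * T + ∑ r ∈ Finset.range (K % L), h r| := by
        congr 1; ring
    _ ≤ |(((K / L : ℕ) : ℝ) - (K : ℝ) / L) * T| + |∑ r ∈ Finset.range (K % L), h r| :=
        abs_add_le _ _
    _ ≤ 1 * (L * B) + L * B := by
        apply add_le_add _ h1
        rw [abs_mul]
        apply mul_le_mul h2 hTb (abs_nonneg _) zero_le_one
    _ = 2 * L * B := by ring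

lemma pthvar_R_dist {Ω : Type*} [MeasurableSpace Ω] (P : Measure Ω) [IsProbabilityMeasure P]
    (b : ℕ) (hb : 2 ≤ b) (U : ℕ → Ω → ℕ) (hUlt : ∀ i ω, U i ω < b)
    (hUunif : ∀ i, ∀ j < b, P {ω | U i ω = j} = (b : ℝ≥0∞)⁻¹)
    (hUindep : iIndepFun U P)
    (N r : ℕ) (hr : r < b ^ N) :
    P {ω | (∑ i ∈ Finset.range N, U i ω * b ^ i) = r} = ((b : ℝ≥0∞) ^ N)⁻¹ := by
  have hset : {ω | (∑ i ∈ Finset.range N, U i ω * b ^ i) = r}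
      = ⋂ i ∈ Finset.range N, U i ⁻¹' {r / b ^ i % b} := by
    ext ω
    simp only [Set.mem_setOf_eq, Set.mem_iInter, Set.mem_preimage, Set.mem_singleton_iff,
      Finset.mem_range]
    constructor
    · rintro rfl i hi
      exact (pthvar_digit_extract (by omega) _ (fun j => hUlt j ω) hi).symm
    · intro hdig
      rw [Finset.sum_congr rfl (fun i hi => by rw [hdig i (Finset.mem_range.mp hi)])]
      exact pthvar_digit_recompose (by omega) N r hr
  rw [hset, hUindep.measure_inter_preimage_eq_mul (Finset.range N)
    (fun i _ => measurableSet_singleton _)]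
  have hfac : ∀ i ∈ Finset.range N, P (U i ⁻¹' {r / b ^ i % b}) = (b : ℝ≥0∞)⁻¹ := by
    intro i _
    have h1 := hUunif i (r / b ^ i % b) (Nat.mod_lt _ (by omega))
    have h2 : U i ⁻¹' {r / b ^ i % b} = {ω | U i ω = r / b ^ i % b} := rfl
    rw [h2, h1]
  rw [Finset.prod_congr rfl hfac, Finset.prod_const, Finset.card_range, ← ENNReal.inv_pow]

lemma pthvar_integral_comp_nat {Ω : Type*} [MeasurableSpace Ω] (P : Measure Ω)
    [IsProbabilityMeasure P]
    (g : Ω → ℕ) (hg : Measurable g) (L : ℕ) (hgL : ∀ ω, g ω < L) (h : ℕ → ℝ) :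
    ∫ ω, h (g ω) ∂P = ∑ r ∈ Finset.range L, (P {ω | g ω = r}).toReal * h r := by
  have hdecomp : ∀ ω, h (g ω)
      = ∑ r ∈ Finset.range L, Set.indicator (g ⁻¹' {r}) (fun _ => h r) ω := by
    intro ω
    rw [Finset.sum_eq_single (g ω)]
    · rw [Set.indicator_of_mem (by simp : ω ∈ g ⁻¹' {g ω})]
    · intro r _ hne
      apply Set.indicator_of_notMem
      simp only [Set.mem_preimage, Set.mem_singleton_iff]
      exact fun hh => hne hh.symm
    · intro hmem; exact absurd (Finset.mem_range.mpr (hgL ω)) hmem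
  calc ∫ ω, h (g ω) ∂P
      = ∫ ω, ∑ r ∈ Finset.range L, Set.indicator (g ⁻¹' {r}) (fun _ => h r) ω ∂P := by
        apply integral_congr_ae
        filter_upwards with ω using hdecomp ω
    _ = ∑ r ∈ Finset.range L, ∫ ω, Set.indicator (g ⁻¹' {r}) (fun _ => h r) ω ∂P :=
        integral_finset_sum _ (fun r _ =>
          (integrable_const (h r)).indicator (hg (measurableSet_singleton r)))
    _ = ∑ r ∈ Finset.range L, (P {ω | g ω = r}).toReal * h r := by
        apply Finset.sum_congr rfl
        intro r _
        rw [integral_indicator_const (h r) (hg (measurableSet_singleton r))]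
        rw [smul_eq_mul]
        rfl

/-- fractional part of k / b^j -/
lemma pthvar_fract_nat_div_pow {b : ℕ} (hb : 2 ≤ b) (j k : ℕ) :
    Int.fract ((k : ℝ) / (b : ℝ) ^ j) = ((k % b ^ j : ℕ) : ℝ) / (b : ℝ) ^ j := by
  have hbj : (0:ℝ) < (b:ℝ) ^ j := by positivity
  have hk : (k : ℝ) = (b:ℝ)^j * ((k / b^j : ℕ) : ℝ) + ((k % b^j : ℕ) : ℝ) := by
    exact_mod_cast congrArg (Nat.cast : ℕ → ℝ) (Nat.div_add_mod k (b^j)).symm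
  rw [hk, add_div]
  have hq : (b:ℝ)^j * ((k / b^j : ℕ) : ℝ) / (b:ℝ)^j = ((k / b^j : ℕ) : ℝ) := by
    field_simp
  rw [hq]
  have h1 : ((k / b^j : ℕ) : ℝ) = (((k / b^j : ℕ) : ℤ) : ℝ) := (Int.cast_natCast _).symm
  rw [h1, Int.fract_intCast_add]
  apply Int.fract_eq_self.mpr
  constructor
  · positivity
  · rw [div_lt_one hbj]
    exact_mod_cast Nat.mod_lt _ (by positivity)

/-- the carry step for φ -/
lemma pthvar_phi_carry {b : ℕ} (hb : 2 ≤ b) (φ : ℝ → ℝ) (hφ : φ 0 = φ 1) (j k : ℕ)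
    (hj : 1 ≤ j) :
    φ ((((k+1) % b ^ j : ℕ) : ℝ) / (b : ℝ) ^ j)
      = φ ((((k % b ^ j : ℕ) : ℝ) + 1) / (b : ℝ) ^ j) := by
  have hL2 : 2 ≤ b ^ j := by
    calc 2 = 2 ^ 1 := by norm_num
    _ ≤ 2 ^ j := Nat.pow_le_pow_right (by omega) hj
    _ ≤ b ^ j := Nat.pow_le_pow_left hb j
  have hLpos : 0 < b ^ j := by omega
  have hbj : (0:ℝ) < (b:ℝ) ^ j := by positivity
  have hmod : (k + 1) % b ^ j = (k % b ^ j + 1) % b ^ j := by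
    conv_lhs => rw [Nat.add_mod, Nat.mod_eq_of_lt (show 1 < b ^ j from hL2)]
  by_cases hcase : k % b ^ j + 1 = b ^ j
  · rw [hmod, hcase, Nat.mod_self]
    have h2 : (((k % b ^ j : ℕ) : ℝ) + 1) = (b:ℝ) ^ j := by
      exact_mod_cast congrArg (Nat.cast : ℕ → ℝ) hcase
    rw [h2, div_self (ne_of_gt hbj)]
    simpa using hφ
  · have hlt : k % b ^ j + 1 < b ^ j := lt_of_le_of_ne (Nat.mod_lt _ hLpos) hcase
    rw [hmod, Nat.mod_eq_of_lt hlt]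
    push_cast
    ring_nf

/-- the increment identity -/
lemma pthvar_increment_eq {b : ℕ} (hb : 2 ≤ b) {α : ℝ} (hα0 : 0 < α) (hα1 : α < 1)
    (φ : ℝ → ℝ) (hφ : φ 0 = φ 1) (Kφ : ℝ)
    (hKφ : ∀ x ∈ Set.Ico (0:ℝ) 1, |φ x| ≤ Kφ)
    (f : ℝ → ℝ) (hf : ∀ t, f t = ∑' n : ℕ, α ^ n * φ (Int.fract ((b:ℝ) ^ n * t)))
    (n k : ℕ) :
    f (((k:ℝ)+1)/(b:ℝ)^n) - f ((k:ℝ)/(b:ℝ)^n)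
      = α ^ n * ∑ m ∈ Finset.range n, (α ^ (m+1))⁻¹ *
          (φ ((((k % b^(m+1) : ℕ):ℝ)+1)/(b:ℝ)^(m+1))
            - φ (((k % b^(m+1) : ℕ):ℝ)/(b:ℝ)^(m+1))) := by
  have hb0 : (0:ℝ) < b := by positivity
  have hsum : ∀ s : ℝ, Summable (fun m : ℕ => α ^ m * φ (Int.fract ((b:ℝ) ^ m * s))) := by
    intro s
    apply Summable.of_norm_bounded (g := fun m => Kφ * α ^ m)
      ((summable_geometric_of_lt_one hα0.le hα1).mul_left Kφ)
    intro m
    rw [norm_mul, Real.norm_eq_abs, Real.norm_eq_abs, abs_pow, abs_of_pos hα0, mul_comm]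
    apply mul_le_mul_of_nonneg_right _ (by positivity)
    exact hKφ _ ⟨Int.fract_nonneg _, Int.fract_lt_one _⟩
  have hdiff : f (((k:ℝ)+1)/(b:ℝ)^n) - f ((k:ℝ)/(b:ℝ)^n)
      = ∑' m : ℕ, α ^ m * (φ (Int.fract ((b:ℝ) ^ m * (((k:ℝ)+1)/(b:ℝ)^n)))
          - φ (Int.fract ((b:ℝ) ^ m * ((k:ℝ)/(b:ℝ)^n)))) := by
    rw [hf, hf, ← Summable.tsum_sub (hsum _) (hsum _)]
    congr 1
    funext m
    ring
  rw [hdiff]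
  have hvanish : ∀ m ∉ Finset.range n,
      α ^ m * (φ (Int.fract ((b:ℝ) ^ m * (((k:ℝ)+1)/(b:ℝ)^n)))
        - φ (Int.fract ((b:ℝ) ^ m * ((k:ℝ)/(b:ℝ)^n)))) = 0 := by
    intro m hm
    rw [Finset.mem_range, not_lt] at hm
    have key : ∀ j : ℕ, (b:ℝ) ^ m * ((j:ℝ)/(b:ℝ)^n) = ((j * b ^ (m-n) : ℕ) : ℝ) := by
      intro j
      have hpow : (b:ℝ) ^ m = (b:ℝ) ^ (m - n) * (b:ℝ) ^ n := by
        rw [← pow_add]; congr 1; omega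
      push_cast
      rw [hpow]
      field_simp
    have h1 : (b:ℝ) ^ m * (((k:ℝ)+1)/(b:ℝ)^n) = (((k+1) * b ^ (m-n) : ℕ) : ℝ) := by
      have := key (k+1); push_cast at this ⊢; linarith [this]
    have h2 := key k
    rw [h1, h2, Int.fract_natCast, Int.fract_natCast, sub_self, mul_zero]
  rw [tsum_eq_sum hvanish]
  have hterm : ∀ m ∈ Finset.range n,
      α ^ m * (φ (Int.fract ((b:ℝ) ^ m * (((k:ℝ)+1)/(b:ℝ)^n)))
        - φ (Int.fract ((b:ℝ) ^ m * ((k:ℝ)/(b:ℝ)^n))))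
      = α ^ m * (φ ((((k % b^(n-m) : ℕ):ℝ)+1)/(b:ℝ)^(n-m))
          - φ (((k % b^(n-m) : ℕ):ℝ)/(b:ℝ)^(n-m))) := by
    intro m hm
    rw [Finset.mem_range] at hm
    have key : ∀ j : ℕ, (b:ℝ) ^ m * ((j:ℝ)/(b:ℝ)^n) = (j:ℝ)/(b:ℝ)^(n-m) := by
      intro j
      have hpow : (b:ℝ) ^ n = (b:ℝ) ^ m * (b:ℝ) ^ (n - m) := by
        rw [← pow_add]; congr 1; omega
      rw [hpow]
      field_simp
    have h1 : (b:ℝ) ^ m * (((k:ℝ)+1)/(b:ℝ)^n) = (((k+1:ℕ)):ℝ)/(b:ℝ)^(n-m) := by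
      have := key (k+1); push_cast at this ⊢; linarith [this]
    rw [h1, key k, pthvar_fract_nat_div_pow hb, pthvar_fract_nat_div_pow hb,
      pthvar_phi_carry hb φ hφ _ _ (by omega)]
  rw [Finset.sum_congr rfl hterm]
  rw [← Finset.sum_range_reflect]
  rw [Finset.mul_sum]
  apply Finset.sum_congr rfl
  intro m hm
  rw [Finset.mem_range] at hm
  have h3 : n - (n - 1 - m) = m + 1 := by omega
  have h4 : α ^ (n - 1 - m) = α ^ n * (α ^ (m+1))⁻¹ := by
    have h5 : (n - 1 - m) + (m + 1) = n := by omega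
    field_simp [← pow_add, h5]
    rw [← pow_add, h5]
  rw [h3, h4]
  ring

/-- geometric tail estimates -/
lemma pthvar_geom_tail {C ρ : ℝ} (hC : 0 ≤ C) (hρ0 : 0 ≤ ρ) (hρ1 : ρ < 1) (a : ℕ → ℝ)
    (ha : ∀ m, |a m| ≤ C * ρ ^ (m+1)) :
    Summable a ∧
    (∀ N n, N ≤ n → |∑ m ∈ Finset.range n, a m - ∑ m ∈ Finset.range N, a m|
        ≤ C * ρ ^ (N+1) * (1-ρ)⁻¹) ∧
    (∀ N, |(∑' m, a m) - ∑ m ∈ Finset.range N, a m| ≤ C * ρ ^ (N+1) * (1-ρ)⁻¹) := by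
  have hgeo : Summable (fun m : ℕ => ρ ^ m) := summable_geometric_of_lt_one hρ0 hρ1
  have hbd : Summable (fun m : ℕ => C * ρ ^ (m+1)) := by
    apply Summable.congr ((hgeo.mul_left (C * ρ)))
    intro m
    rw [pow_succ]
    ring
  have hsa : Summable a := by
    apply Summable.of_norm_bounded hbd
    intro m
    rw [Real.norm_eq_abs]
    exact ha m
  have htsumgeo : ∑' m : ℕ, ρ ^ m = (1 - ρ)⁻¹ := tsum_geometric_of_lt_one hρ0 hρ1
  have hgsum : ∀ K : ℕ, ∑ i ∈ Finset.range K, ρ ^ i ≤ (1-ρ)⁻¹ := by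
    intro K
    rw [← htsumgeo]
    exact Summable.sum_le_tsum _ (fun i _ => by positivity) hgeo
  refine ⟨hsa, ?_, ?_⟩
  · intro N n hNn
    rw [← Finset.sum_Ico_eq_sub _ hNn, Finset.sum_Ico_eq_sum_range]
    calc |∑ i ∈ Finset.range (n - N), a (N + i)|
        ≤ ∑ i ∈ Finset.range (n - N), |a (N + i)| := Finset.abs_sum_le_sum_abs _ _
      _ ≤ ∑ i ∈ Finset.range (n - N), C * ρ ^ (N + i + 1) :=
          Finset.sum_le_sum (fun i _ => ha _)
      _ = C * ρ ^ (N+1) * ∑ i ∈ Finset.range (n - N), ρ ^ i := by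
          rw [Finset.mul_sum]
          apply Finset.sum_congr rfl
          intro i _
          rw [show N + i + 1 = (N + 1) + i by ring, pow_add]
          ring
      _ ≤ C * ρ ^ (N+1) * (1-ρ)⁻¹ := by
          apply mul_le_mul_of_nonneg_left (hgsum _) (by positivity)
  · intro N
    have htail := (hsa.sum_add_tsum_nat_add N).symm
    have h1 : (∑' m, a m) - ∑ m ∈ Finset.range N, a m = ∑' m, a (m + N) := by
      rw [← hsa.sum_add_tsum_nat_add N]
      ring
    rw [h1]
    have hsa' : Summable (fun m => a (m + N)) := by
      exact (summable_nat_add_iff N).mpr hsa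
    have hbd' : Summable (fun m : ℕ => C * ρ ^ (N+1) * ρ ^ m) := hgeo.mul_left _
    calc |∑' m, a (m + N)| ≤ ∑' m, |a (m + N)| := by
          rw [← Real.norm_eq_abs]
          apply norm_tsum_le_tsum_norm
          apply hsa'.abs
      _ ≤ ∑' m : ℕ, C * ρ ^ (N+1) * ρ ^ m := by
          apply Summable.tsum_le_tsum _ hsa'.abs hbd'
          intro m
          calc |a (m + N)| ≤ C * ρ ^ (m + N + 1) := ha _
            _ = C * ρ ^ (N+1) * ρ ^ m := by
                rw [show m + N + 1 = (N + 1) + m by ring, pow_add]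
                ring
      _ = C * ρ ^ (N+1) * (1-ρ)⁻¹ := by
          rw [tsum_mul_left, htsumgeo]
set_option maxHeartbeats 1000000 in
/-- Proposition A.2 (main part): the `p`-th variation of `f` along the `b`-adic
partitions exists and equals `t · E[|Z|^p]`. -/
theorem pth_variation_eq_expectation {Ω : Type*} [MeasurableSpace Ω]
    (P : Measure Ω) [IsProbabilityMeasure P]
    (b : ℕ) (hb : 2 ≤ b) (α γ : ℝ) (hα : α ∈ Set.Ioo (0 : ℝ) 1)
    (hγ0 : 0 < γ) (hγ1 : γ ≤ 1) (hαb : 1 < α * (b : ℝ) ^ γ)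
    (φ : ℝ → ℝ) (hφ : φ 0 = φ 1) (C : ℝ) (hC : 0 < C)
    (hHolder : ∀ x ∈ Set.Icc (0 : ℝ) 1, ∀ y ∈ Set.Icc (0 : ℝ) 1,
      |φ x - φ y| ≤ C * |x - y| ^ γ)
    (f : ℝ → ℝ)
    (hf : ∀ t, f t = ∑' n : ℕ, α ^ n * φ (Int.fract ((b : ℝ) ^ n * t)))
    (p : ℝ) (hp : p = -Real.log b / Real.log α)
    (U : ℕ → Ω → ℕ) (hUmeas : ∀ i, Measurable (U i)) (hUlt : ∀ i ω, U i ω < b)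
    (hUunif : ∀ i, ∀ j < b, P {ω | U i ω = j} = (b : ℝ≥0∞)⁻¹)
    (hUindep : iIndepFun U P)
    (R : ℕ → Ω → ℕ) (hR : ∀ m ω, R m ω = ∑ i ∈ Finset.range m, U i ω * b ^ i)
    (Z : Ω → ℝ)
    (hZ : ∀ ω, Z ω = ∑' m : ℕ, (α ^ (m + 1))⁻¹ *
        (φ (((R (m + 1) ω : ℝ) + 1) / (b : ℝ) ^ (m + 1)) -
          φ ((R (m + 1) ω : ℝ) / (b : ℝ) ^ (m + 1)))) :
    ∀ t ∈ Set.Icc (0 : ℝ) 1,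
      Tendsto (fun n : ℕ => ∑ k ∈ Finset.range (⌊t * (b : ℝ) ^ n⌋₊ + 1),
          |f (((k : ℝ) + 1) / (b : ℝ) ^ n) - f ((k : ℝ) / (b : ℝ) ^ n)| ^ p)
        atTop (nhds (t * ∫ ω, |Z ω| ^ p ∂P)) := by
  intro t ht
  obtain ⟨ht0, ht1⟩ := ht
  obtain ⟨hα0, hα1⟩ := hα
  have hb1R : (1:ℝ) < b := by exact_mod_cast hb
  have hb0R : (0:ℝ) < b := by linarith
  have hlogb : 0 < Real.log b := Real.log_pos hb1R
  have hlogα : Real.log α < 0 := Real.log_neg hα0 hα1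
  have hbγ0 : (0:ℝ) < (b:ℝ) ^ γ := Real.rpow_pos_of_pos hb0R γ
  have hloggt : 0 < Real.log α + γ * Real.log b := by
    have h := Real.log_pos hαb
    rwa [Real.log_mul (ne_of_gt hα0) (ne_of_gt hbγ0), Real.log_rpow hb0R] at h
  have hp1 : 1 ≤ p := by
    have hnl : 0 < -Real.log α := by linarith
    rw [hp, show -Real.log (b:ℝ) / Real.log α = Real.log (b:ℝ) / (-Real.log α) from by
      ring]
    rw [one_le_div hnl]
    nlinarith
  have hp0 : 0 < p := lt_of_lt_of_le one_pos hp1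
  have hαp : α ^ p = ((b:ℝ))⁻¹ := by
    rw [Real.rpow_def_of_pos hα0, hp]
    have h9 : Real.log α * (-Real.log b / Real.log α) = -Real.log b := by
      rw [mul_comm]
      exact div_mul_cancel₀ _ (ne_of_lt hlogα)
    rw [h9, Real.exp_neg, Real.exp_log hb0R]
  set ρ : ℝ := (α * (b:ℝ) ^ γ)⁻¹ with hρdef
  have hρ0 : 0 < ρ := by rw [hρdef]; positivity
  have hρ1 : ρ < 1 := by rw [hρdef]; exact inv_lt_one_of_one_lt₀ hαb
  have h1ρ : 0 < 1 - ρ := by linarith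
  set M : ℝ := C * ρ * (1 - ρ)⁻¹ with hMdef
  have hM0 : 0 < M := by rw [hMdef]; positivity
  set ε : ℕ → ℝ := fun N => C * ρ ^ (N+1) * (1 - ρ)⁻¹ with hεdef
  have hε0 : ∀ N, 0 < ε N := by intro N; rw [hεdef]; positivity
  have hεM : ε 0 = M := by rw [hεdef, hMdef]; simp [pow_one]
  set G : ℕ → ℕ → ℝ := fun n k => ∑ m ∈ Finset.range n, (α ^ (m+1))⁻¹ *
      (φ ((((k % b^(m+1) : ℕ):ℝ)+1)/(b:ℝ)^(m+1))
        - φ (((k % b^(m+1) : ℕ):ℝ)/(b:ℝ)^(m+1))) with hGdef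
  -- term bound
  have hDb : ∀ (j r : ℕ), r < b ^ j →
      (α^j)⁻¹ * |φ (((r:ℝ)+1)/(b:ℝ)^j) - φ ((r:ℝ)/(b:ℝ)^j)| ≤ C * ρ ^ j := by
    intro j r hr
    have hbj : (0:ℝ) < (b:ℝ)^j := by positivity
    have hr1 : ((r:ℝ)+1) ≤ (b:ℝ)^j := by
      have : ((r+1:ℕ):ℝ) ≤ ((b^j : ℕ):ℝ) := by exact_mod_cast (show r+1 ≤ b^j by omega)
      push_cast at this
      linarith
    have hx : ((r:ℝ)+1)/(b:ℝ)^j ∈ Set.Icc (0:ℝ) 1 :=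
      ⟨by positivity, by rw [div_le_one hbj]; exact hr1⟩
    have hy : ((r:ℝ))/(b:ℝ)^j ∈ Set.Icc (0:ℝ) 1 :=
      ⟨by positivity, by rw [div_le_one hbj]; linarith⟩
    have h1 := hHolder _ hx _ hy
    have hde : ((r:ℝ)+1)/(b:ℝ)^j - (r:ℝ)/(b:ℝ)^j = ((b:ℝ)^j)⁻¹ := by
      field_simp
      ring
    rw [hde, abs_inv, abs_of_pos hbj] at h1
    have h2 : (((b:ℝ)^j)⁻¹ : ℝ) ^ γ = (((b:ℝ)^γ)⁻¹) ^ (j:ℕ) := by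
      rw [Real.inv_rpow (le_of_lt hbj), inv_pow]
      congr 1
      rw [← Real.rpow_natCast (b:ℝ) j, ← Real.rpow_natCast ((b:ℝ)^γ) j,
        ← Real.rpow_mul hb0R.le, ← Real.rpow_mul hb0R.le, mul_comm]
    rw [h2] at h1
    calc (α^j)⁻¹ * |φ (((r:ℝ)+1)/(b:ℝ)^j) - φ ((r:ℝ)/(b:ℝ)^j)|
        ≤ (α^j)⁻¹ * (C * (((b:ℝ)^γ)⁻¹) ^ j) := by
          apply mul_le_mul_of_nonneg_left h1 (by positivity)
      _ = C * ρ ^ j := by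
          rw [hρdef, mul_inv, mul_pow, ← inv_pow]
          ring
  have hterm : ∀ (k : ℕ) (m : ℕ),
      |(α ^ (m+1))⁻¹ * (φ ((((k % b^(m+1) : ℕ):ℝ)+1)/(b:ℝ)^(m+1))
        - φ (((k % b^(m+1) : ℕ):ℝ)/(b:ℝ)^(m+1)))| ≤ C * ρ ^ (m+1) := by
    intro k m
    rw [abs_mul, abs_inv, abs_pow, abs_of_pos hα0]
    exact hDb (m+1) (k % b^(m+1)) (Nat.mod_lt _ (Nat.pow_pos (by omega)))
  have hGtail := fun k : ℕ => pthvar_geom_tail hC.le hρ0.le hρ1 _ (hterm k)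
  have hGb : ∀ n k, |G n k| ≤ M := by
    intro n k
    have h := (hGtail k).2.1 0 n (Nat.zero_le n)
    simp only [Finset.range_zero, Finset.sum_empty, sub_zero, zero_add, pow_one] at h
    rw [hMdef]
    calc |G n k| = |∑ m ∈ Finset.range n, (α ^ (m+1))⁻¹ *
        (φ ((((k % b^(m+1) : ℕ):ℝ)+1)/(b:ℝ)^(m+1))
          - φ (((k % b^(m+1) : ℕ):ℝ)/(b:ℝ)^(m+1)))| := by rw [hGdef]
      _ ≤ C * ρ * (1-ρ)⁻¹ := h
  have hGd : ∀ N n k, N ≤ n → |G n k - G N k| ≤ ε N := by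
    intro N n k hNn
    have h := (hGtail k).2.1 N n hNn
    rw [hGdef, hεdef]
    exact h
  have hGmod : ∀ N k, G N k = G N (k % b ^ N) := by
    intro N k
    rw [hGdef]
    apply Finset.sum_congr rfl
    intro m hm
    rw [Finset.mem_range] at hm
    have h : k % b ^ N % b ^ (m+1) = k % b ^ (m+1) :=
      Nat.mod_mod_of_dvd k (pow_dvd_pow b (by omega))
    rw [h]
  -- increments
  have hKφ : ∀ x ∈ Set.Ico (0:ℝ) 1, |φ x| ≤ |φ 0| + C := by
    intro x hx
    have h1 := hHolder x ⟨hx.1, hx.2.le⟩ 0 ⟨le_refl 0, zero_le_one⟩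
    have h2 : |x - (0:ℝ)| ^ γ ≤ 1 := Real.rpow_le_one (abs_nonneg _)
      (by rw [sub_zero, abs_of_nonneg hx.1]; exact hx.2.le) hγ0.le
    have h3 : C * |x - (0:ℝ)| ^ γ ≤ C * 1 := mul_le_mul_of_nonneg_left h2 hC.le
    calc |φ x| = |φ 0 + (φ x - φ 0)| := by ring_nf
      _ ≤ |φ 0| + |φ x - φ 0| := abs_add_le _ _
      _ ≤ |φ 0| + C := by
          have h4 := le_trans h1 h3
          linarith
  have hInc : ∀ n k : ℕ, f (((k:ℝ)+1)/(b:ℝ)^n) - f ((k:ℝ)/(b:ℝ)^n) = α ^ n * G n k := by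
    intro n k
    rw [hGdef]
    exact pthvar_increment_eq hb hα0 hα1 φ hφ _ hKφ f hf n k
  have hpowfact : ∀ (n : ℕ) (x : ℝ), |α ^ n * x| ^ p = ((b:ℝ)^n)⁻¹ * |x| ^ p := by
    intro n x
    rw [abs_mul, abs_pow, abs_of_pos hα0, Real.mul_rpow (by positivity) (abs_nonneg x)]
    congr 1
    rw [← Real.rpow_natCast α n, ← Real.rpow_mul hα0.le, mul_comm ((n:ℕ):ℝ) p,
      Real.rpow_mul hα0.le, Real.rpow_natCast, hαp, inv_pow]
  -- probability side
  have hRlt : ∀ m ω, R m ω < b ^ m := by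
    intro m ω
    rw [hR]
    exact pthvar_digit_sum_lt (by omega) _ (fun i => hUlt i ω) m
  have hRmod : ∀ m N ω, m < N → R N ω % b ^ (m+1) = R (m+1) ω := by
    intro m N ω hmN
    rw [hR, hR]
    rw [← Finset.sum_range_add_sum_Ico _ (show m+1 ≤ N by omega)]
    have hfac : ∑ i ∈ Finset.Ico (m+1) N, U i ω * b ^ i
        = b ^ (m+1) * ∑ i ∈ Finset.range (N - (m+1)), U (m+1+i) ω * b ^ i := by
      rw [Finset.sum_Ico_eq_sum_range, Finset.mul_sum]
      apply Finset.sum_congr rfl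
      intro i _
      rw [pow_add]; ring
    rw [hfac, Nat.add_mul_mod_self_left]
    exact Nat.mod_eq_of_lt (pthvar_digit_sum_lt (by omega) _ (fun i => hUlt i ω) (m+1))
  have hZterm : ∀ (ω : Ω) (m : ℕ),
      |(α ^ (m+1))⁻¹ * (φ (((R (m+1) ω : ℝ) + 1) / (b:ℝ) ^ (m+1))
        - φ ((R (m+1) ω : ℝ) / (b:ℝ) ^ (m+1)))| ≤ C * ρ ^ (m+1) := by
    intro ω m
    rw [abs_mul, abs_inv, abs_pow, abs_of_pos hα0]
    exact hDb (m+1) (R (m+1) ω) (hRlt (m+1) ω)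
  have hZgt := fun ω : Ω => pthvar_geom_tail hC.le hρ0.le hρ1 _ (hZterm ω)
  have hZpart : ∀ N ω, G N (R N ω) = ∑ m ∈ Finset.range N, (α ^ (m+1))⁻¹ *
      (φ (((R (m+1) ω : ℝ) + 1) / (b:ℝ) ^ (m+1)) - φ ((R (m+1) ω : ℝ) / (b:ℝ) ^ (m+1))) := by
    intro N ω
    rw [hGdef]
    apply Finset.sum_congr rfl
    intro m hm
    rw [Finset.mem_range] at hm
    rw [hRmod m N ω hm]
  have hZd : ∀ N ω, |Z ω - G N (R N ω)| ≤ ε N := by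
    intro N ω
    rw [hZ ω, hZpart N ω, hεdef]
    exact (hZgt ω).2.2 N
  have hZb : ∀ ω, |Z ω| ≤ M := by
    intro ω
    have h := hZd 0 ω
    have hG0 : G 0 (R 0 ω) = 0 := by rw [hGdef]; simp
    rw [hG0, sub_zero, hεM] at h
    exact h
  -- measurability
  have hRmeas : ∀ N, Measurable (R N) := by
    intro N
    have hre : R N = fun ω => ∑ i ∈ Finset.range N, U i ω * b ^ i := funext (hR N)
    rw [hre]
    apply Finset.measurable_sum
    intro i _
    exact (measurable_from_nat (f := fun u : ℕ => u * b ^ i)).comp (hUmeas i)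
  have hZmeas : Measurable Z := by
    apply measurable_of_tendsto_metrizable (f := fun N ω => G N (R N ω))
    · intro N
      exact (measurable_from_nat (f := fun r => G N r)).comp (hRmeas N)
    · rw [tendsto_pi_nhds]
      intro ω
      have hre : (fun N => G N (R N ω)) = fun N => ∑ m ∈ Finset.range N,
          (α ^ (m+1))⁻¹ * (φ (((R (m+1) ω : ℝ) + 1) / (b:ℝ) ^ (m+1))
            - φ ((R (m+1) ω : ℝ) / (b:ℝ) ^ (m+1))) := funext (fun N => hZpart N ω)
      rw [hre, hZ ω]
      exact (hZgt ω).1.hasSum.tendsto_sum_nat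
  -- distribution of R N
  have hRdist : ∀ N r, r < b ^ N → P {ω | R N ω = r} = ((b:ℝ≥0∞) ^ N)⁻¹ := by
    intro N r hr
    have hseteq : {ω | R N ω = r} = {ω | (∑ i ∈ Finset.range N, U i ω * b ^ i) = r} := by
      ext ω; simp [hR]
    rw [hseteq]
    exact pthvar_R_dist P b hb U hUlt hUunif hUindep N r hr
  have hEN : ∀ N, ∫ ω, |G N (R N ω)| ^ p ∂P
      = ((b:ℝ)^N)⁻¹ * ∑ r ∈ Finset.range (b ^ N), |G N r| ^ p := by
    intro N
    have h := pthvar_integral_comp_nat P (R N) (hRmeas N) (b ^ N) (fun ω => hRlt N ω)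
      (fun r => |G N r| ^ p)
    rw [h, Finset.mul_sum]
    apply Finset.sum_congr rfl
    intro r hr
    rw [Finset.mem_range] at hr
    rw [hRdist N r hr]
    have h6 : (((b:ℝ≥0∞) ^ N)⁻¹).toReal = ((b:ℝ)^N)⁻¹ := by
      rw [ENNReal.toReal_inv, ENNReal.toReal_pow, ENNReal.toReal_natCast]
    rw [h6]
  -- integrability
  have hcontp : Continuous (fun x : ℝ => |x| ^ p) :=
    continuous_abs.rpow_const (fun x => Or.inr (by linarith))
  have hGRb : ∀ N ω, |G N (R N ω)| ≤ M := fun N ω => hGb N (R N ω)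
  have hintZ : Integrable (fun ω => |Z ω| ^ p) P := by
    apply Integrable.mono' (integrable_const (M ^ p))
      ((hcontp.measurable.comp hZmeas).aestronglyMeasurable)
    filter_upwards with ω
    show ‖|Z ω| ^ p‖ ≤ M ^ p
    rw [Real.norm_eq_abs, abs_of_nonneg (Real.rpow_nonneg (abs_nonneg _) p)]
    exact Real.rpow_le_rpow (abs_nonneg _) (hZb ω) (by linarith)
  have hintG : ∀ N, Integrable (fun ω => |G N (R N ω)| ^ p) P := by
    intro N
    apply Integrable.mono' (integrable_const (M ^ p))
      (((measurable_from_nat (f := fun r : ℕ => |G N r| ^ p)).comp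
        (hRmeas N)).aestronglyMeasurable)
    filter_upwards with ω
    show ‖|G N (R N ω)| ^ p‖ ≤ M ^ p
    rw [Real.norm_eq_abs, abs_of_nonneg (Real.rpow_nonneg (abs_nonneg _) p)]
    exact Real.rpow_le_rpow (abs_nonneg _) (hGRb N ω) (by linarith)
  set I := ∫ ω, |Z ω| ^ p ∂P with hIdef
  have hI0 : 0 ≤ I := integral_nonneg (fun ω => Real.rpow_nonneg (abs_nonneg _) _)
  have hIM : I ≤ M ^ p := by
    rw [hIdef]
    calc ∫ ω, |Z ω| ^ p ∂P ≤ ∫ _ω, M ^ p ∂P :=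
          integral_mono hintZ (integrable_const _)
            (fun ω => Real.rpow_le_rpow (abs_nonneg _) (hZb ω) (by linarith))
      _ = M ^ p := by simp
  have hEd : ∀ N, |I - ∫ ω, |G N (R N ω)| ^ p ∂P| ≤ p * M ^ (p-1) * ε N := by
    intro N
    rw [hIdef, ← integral_sub hintZ (hintG N)]
    have hnorm := norm_integral_le_integral_norm
      (f := fun ω => |Z ω| ^ p - |G N (R N ω)| ^ p) (μ := P)
    rw [Real.norm_eq_abs] at hnorm
    calc |∫ ω, (|Z ω| ^ p - |G N (R N ω)| ^ p) ∂P|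
        ≤ ∫ ω, ‖|Z ω| ^ p - |G N (R N ω)| ^ p‖ ∂P := hnorm
      _ ≤ ∫ _ω, p * M ^ (p-1) * ε N ∂P := by
          apply integral_mono ((hintZ.sub (hintG N)).norm) (integrable_const _)
          intro ω
          show ‖|Z ω| ^ p - |G N (R N ω)| ^ p‖ ≤ p * M ^ (p-1) * ε N
          rw [Real.norm_eq_abs]
          have h1 := pthvar_abs_rpow_lip hp1 (Z ω) (G N (R N ω)) (hZb ω) (hGRb N ω)
          have h2 : p * M^(p-1) * |Z ω - G N (R N ω)| ≤ p * M^(p-1) * ε N :=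
            mul_le_mul_of_nonneg_left (hZd N ω) (by positivity)
          exact le_trans h1 h2
      _ = p * M ^ (p-1) * ε N := by simp
  -- main estimate
  have hmain : ∀ N n : ℕ, N ≤ n →
      |(∑ k ∈ Finset.range (⌊t * (b:ℝ)^n⌋₊ + 1),
          |f (((k:ℝ)+1)/(b:ℝ)^n) - f ((k:ℝ)/(b:ℝ)^n)| ^ p) - t * I|
      ≤ 4 * (p * M ^ (p-1) * ε N) + (2 * (b:ℝ)^N + 1) * M ^ p * ((b:ℝ)^n)⁻¹ := by
    intro N n hNn
    set K := ⌊t * (b:ℝ)^n⌋₊ + 1 with hKdef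
    set Bn : ℝ := ((b:ℝ)^n)⁻¹ with hBndef
    have hbn : (0:ℝ) < (b:ℝ)^n := by positivity
    have hBn0 : 0 < Bn := by rw [hBndef]; positivity
    have hbn1 : (1:ℝ) ≤ (b:ℝ)^n := one_le_pow₀ (by linarith)
    have hBn1 : Bn ≤ 1 := by rw [hBndef]; exact inv_le_one_of_one_le₀ hbn1
    have hKup : (K:ℝ) ≤ t * (b:ℝ)^n + 1 := by
      rw [hKdef]
      push_cast
      have := Nat.floor_le (show 0 ≤ t * (b:ℝ)^n by positivity)
      linarith
    have hKlo : t * (b:ℝ)^n < K := by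
      rw [hKdef]
      push_cast
      exact Nat.lt_floor_add_one _
    have hbnBn : (b:ℝ)^n * Bn = 1 := by rw [hBndef]; field_simp
    have hKB2 : (K:ℝ) * Bn ≤ 2 := by
      have h5 : (K:ℝ) ≤ 2 * (b:ℝ)^n := by nlinarith [hKup, hbn1, ht1, hbn]
      calc (K:ℝ) * Bn ≤ 2 * (b:ℝ)^n * Bn := mul_le_mul_of_nonneg_right h5 hBn0.le
        _ = 2 := by rw [mul_assoc, hbnBn]; ring
    have hKB0 : 0 ≤ (K:ℝ) * Bn := by positivity
    have hKBt : |(K:ℝ) * Bn - t| ≤ Bn := by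
      have h5 : t < (K:ℝ) * Bn := by
        have h7 := mul_lt_mul_of_pos_right hKlo hBn0
        rwa [mul_assoc, hbnBn, mul_one] at h7
      have h6 : (K:ℝ) * Bn ≤ t + Bn := by
        have h7 := mul_le_mul_of_nonneg_right hKup hBn0.le
        rwa [add_mul, mul_assoc, hbnBn, mul_one, one_mul] at h7
      rw [abs_le]
      constructor <;> linarith
    -- rewrite the sum
    have hAn : ∑ k ∈ Finset.range K, |f (((k:ℝ)+1)/(b:ℝ)^n) - f ((k:ℝ)/(b:ℝ)^n)| ^ p
        = Bn * ∑ k ∈ Finset.range K, |G n k| ^ p := by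
      rw [Finset.mul_sum]
      apply Finset.sum_congr rfl
      intro k _
      rw [hInc n k, hpowfact n (G n k)]
    set SN := ∑ k ∈ Finset.range K, |G N k| ^ p with hSNdef
    set Sn := ∑ k ∈ Finset.range K, |G n k| ^ p with hSndef
    set T := ∑ r ∈ Finset.range (b ^ N), |G N r| ^ p with hTdef
    set EN := ∫ ω, |G N (R N ω)| ^ p ∂P with hENdef
    have hLpos : 0 < b ^ N := Nat.pow_pos (by omega)
    have hLcast : ((b ^ N : ℕ) : ℝ) = (b:ℝ) ^ N := by push_cast; ring
    have hhb : ∀ r : ℕ, |(|G N r| ^ p : ℝ)| ≤ M ^ p := by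
      intro r
      rw [abs_of_nonneg (Real.rpow_nonneg (abs_nonneg _) p)]
      exact Real.rpow_le_rpow (abs_nonneg _) (hGb N r) (by linarith)
    -- step 1
    have hstep1 : |Bn * Sn - Bn * SN| ≤ 2 * (p * M ^ (p-1) * ε N) := by
      have h5 : |Sn - SN| ≤ (K:ℝ) * (p * M ^ (p-1) * ε N) := by
        rw [hSndef, hSNdef, ← Finset.sum_sub_distrib]
        calc |∑ k ∈ Finset.range K, (|G n k| ^ p - |G N k| ^ p)|
            ≤ ∑ k ∈ Finset.range K, |(|G n k| ^ p - |G N k| ^ p)| :=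
              Finset.abs_sum_le_sum_abs _ _
          _ ≤ ∑ _k ∈ Finset.range K, p * M ^ (p-1) * ε N := by
              apply Finset.sum_le_sum
              intro k _
              have h6 := pthvar_abs_rpow_lip hp1 (G n k) (G N k) (hGb n k) (hGb N k)
              have h7 : p * M^(p-1) * |G n k - G N k| ≤ p * M^(p-1) * ε N :=
                mul_le_mul_of_nonneg_left (hGd N n k hNn) (by positivity)
              exact le_trans h6 h7
          _ = (K:ℝ) * (p * M ^ (p-1) * ε N) := by
              rw [Finset.sum_const, Finset.card_range, nsmul_eq_mul]
      calc |Bn * Sn - Bn * SN| = Bn * |Sn - SN| := by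
            rw [← mul_sub, abs_mul, abs_of_pos hBn0]
        _ ≤ Bn * ((K:ℝ) * (p * M ^ (p-1) * ε N)) :=
            mul_le_mul_of_nonneg_left h5 hBn0.le
        _ = ((K:ℝ) * Bn) * (p * M ^ (p-1) * ε N) := by ring
        _ ≤ 2 * (p * M ^ (p-1) * ε N) := by
            apply mul_le_mul_of_nonneg_right hKB2 (by positivity)
    -- step 2 : counting
    have hcount := pthvar_sum_mod_est (b ^ N) hLpos (fun r => |G N r| ^ p) (M ^ p) hhb K
    have hSNmod : SN = ∑ k ∈ Finset.range K, (fun r => |G N r| ^ p) (k % b ^ N) := by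
      rw [hSNdef]
      apply Finset.sum_congr rfl
      intro k _
      simp only
      rw [hGmod N k]
    have hENT : EN = ((b:ℝ)^N)⁻¹ * T := by rw [hENdef, hEN N, hTdef]
    have hstep2 : |Bn * SN - (K:ℝ) * Bn * EN| ≤ 2 * (b:ℝ)^N * M ^ p * Bn := by
      have h5 : |SN - (K:ℝ) * EN| ≤ 2 * (b:ℝ)^N * M ^ p := by
        have h6 : (K:ℝ) * EN = (K:ℝ) / ((b ^ N : ℕ) : ℝ) * T := by
          rw [hENT, hLcast]
          ring
        rw [h6, hSNmod]
        calc |(∑ k ∈ Finset.range K, (fun r => |G N r| ^ p) (k % b ^ N))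
              - (K:ℝ) / ((b ^ N : ℕ) : ℝ) * T|
            ≤ 2 * ((b ^ N : ℕ) : ℝ) * M ^ p := hcount
          _ = 2 * (b:ℝ)^N * M ^ p := by rw [hLcast]
      calc |Bn * SN - (K:ℝ) * Bn * EN| = Bn * |SN - (K:ℝ) * EN| := by
            rw [show Bn * SN - (K:ℝ) * Bn * EN = Bn * (SN - (K:ℝ) * EN) from by ring,
              abs_mul, abs_of_pos hBn0]
        _ ≤ Bn * (2 * (b:ℝ)^N * M ^ p) := mul_le_mul_of_nonneg_left h5 hBn0.le
        _ = 2 * (b:ℝ)^N * M ^ p * Bn := by ring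
    -- step 3
    have hstep3 : |(K:ℝ) * Bn * EN - (K:ℝ) * Bn * I| ≤ 2 * (p * M ^ (p-1) * ε N) := by
      have h5 : |EN - I| ≤ p * M ^ (p-1) * ε N := by
        rw [abs_sub_comm]
        exact hEd N
      calc |(K:ℝ) * Bn * EN - (K:ℝ) * Bn * I| = ((K:ℝ) * Bn) * |EN - I| := by
            rw [← mul_sub, abs_mul, abs_of_nonneg hKB0]
        _ ≤ 2 * (p * M ^ (p-1) * ε N) := by
            apply mul_le_mul hKB2 h5 (abs_nonneg _) (by norm_num)
    -- step 4
    have hstep4 : |(K:ℝ) * Bn * I - t * I| ≤ M ^ p * Bn := by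
      calc |(K:ℝ) * Bn * I - t * I| = |(K:ℝ) * Bn - t| * I := by
            rw [← sub_mul, abs_mul, abs_of_nonneg hI0]
        _ ≤ Bn * M ^ p := by
            apply mul_le_mul hKBt hIM hI0 hBn0.le
        _ = M ^ p * Bn := by ring
    -- assemble
    rw [hAn]
    calc |Bn * Sn - t * I|
        ≤ |Bn * Sn - Bn * SN| + |Bn * SN - (K:ℝ) * Bn * EN|
          + |(K:ℝ) * Bn * EN - (K:ℝ) * Bn * I| + |(K:ℝ) * Bn * I - t * I| := by
          have := abs_sub_le (Bn * Sn) (Bn * SN) (t * I)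
          have h7 := abs_sub_le (Bn * SN) ((K:ℝ) * Bn * EN) (t * I)
          have h8 := abs_sub_le ((K:ℝ) * Bn * EN) ((K:ℝ) * Bn * I) (t * I)
          linarith
      _ ≤ 2 * (p * M ^ (p-1) * ε N) + 2 * (b:ℝ)^N * M ^ p * Bn
          + 2 * (p * M ^ (p-1) * ε N) + M ^ p * Bn := by
          linarith [hstep1, hstep2, hstep3, hstep4]
      _ = 4 * (p * M ^ (p-1) * ε N) + (2 * (b:ℝ)^N + 1) * M ^ p * Bn := by ring
  -- conclude
  rw [Metric.tendsto_atTop]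
  intro δ hδ
  have hρpow : Tendsto (fun N : ℕ => 4 * (p * M ^ (p-1) * ε N)) atTop (nhds 0) := by
    have h0 : Tendsto (fun N : ℕ => ρ ^ N) atTop (nhds 0) :=
      tendsto_pow_atTop_nhds_zero_of_lt_one hρ0.le hρ1
    have h1 : (fun N : ℕ => 4 * (p * M ^ (p-1) * ε N))
        = fun N => (4 * (p * M ^ (p-1) * (C * ρ * (1-ρ)⁻¹))) * ρ ^ N := by
      funext N
      show 4 * (p * M ^ (p-1) * (C * ρ ^ (N+1) * (1-ρ)⁻¹)) = _
      rw [pow_succ]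
      ring
    rw [h1]
    simpa using h0.const_mul (4 * (p * M ^ (p-1) * (C * ρ * (1-ρ)⁻¹)))
  obtain ⟨N₀, hN₀⟩ := (Metric.tendsto_atTop.mp hρpow) (δ/2) (by linarith)
  have hbninv : Tendsto (fun n : ℕ => (2 * (b:ℝ)^N₀ + 1) * M ^ p * ((b:ℝ)^n)⁻¹)
      atTop (nhds 0) := by
    have h0 : Tendsto (fun n : ℕ => ((b:ℝ)⁻¹) ^ n) atTop (nhds 0) :=
      tendsto_pow_atTop_nhds_zero_of_lt_one (by positivity) (inv_lt_one_of_one_lt₀ hb1R)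
    have h1 : (fun n : ℕ => (2 * (b:ℝ)^N₀ + 1) * M ^ p * ((b:ℝ)^n)⁻¹)
        = fun n => ((2 * (b:ℝ)^N₀ + 1) * M ^ p) * ((b:ℝ)⁻¹) ^ n := by
      funext n
      rw [inv_pow]
    rw [h1]
    simpa using h0.const_mul ((2 * (b:ℝ)^N₀ + 1) * M ^ p)
  obtain ⟨n₁, hn₁⟩ := (Metric.tendsto_atTop.mp hbninv) (δ/2) (by linarith)
  refine ⟨max N₀ n₁, fun n hn => ?_⟩
  have hN₀n : N₀ ≤ n := le_trans (le_max_left _ _) hn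
  have h1 := hmain N₀ n hN₀n
  have h2 := hN₀ N₀ (le_refl _)
  have h3 := hn₁ n (le_trans (le_max_right _ _) hn)
  rw [Real.dist_eq] at h2 h3 ⊢
  rw [sub_zero] at h2 h3
  have e2 : 4 * (p * M ^ (p-1) * ε N₀) < δ/2 := by
    have h4 : |4 * (p * M ^ (p-1) * ε N₀)| = 4 * (p * M ^ (p-1) * ε N₀) := by
      apply abs_of_nonneg
      have := hε0 N₀
      positivity
    rw [h4] at h2
    exact h2
  have e3 : (2 * (b:ℝ)^N₀ + 1) * M ^ p * ((b:ℝ)^n)⁻¹ < δ/2 := by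
    have hbn : (0:ℝ) < (b:ℝ)^n := by positivity
    have h4 : |(2 * (b:ℝ)^N₀ + 1) * M ^ p * ((b:ℝ)^n)⁻¹|
        = (2 * (b:ℝ)^N₀ + 1) * M ^ p * ((b:ℝ)^n)⁻¹ := by
      apply abs_of_nonneg
      positivity
    rw [h4] at h3
    exact h3
  calc |(∑ k ∈ Finset.range (⌊t * (b:ℝ)^n⌋₊ + 1),
        |f (((k:ℝ)+1)/(b:ℝ)^n) - f ((k:ℝ)/(b:ℝ)^n)| ^ p) - t * I|
      ≤ 4 * (p * M ^ (p-1) * ε N₀) + (2 * (b:ℝ)^N₀ + 1) * M ^ p * ((b:ℝ)^n)⁻¹ := h1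
    _ < δ/2 + δ/2 := by linarith
    _ = δ := by ring
end

section
/- Let b ∈ {2,3,…}, γ ∈ (0,1], and let φ : [0,1] → ℝ be Hölder continuous with exponent γ and satisfy φ(0) = φ(1). Let α ∈ (b^{−γ}, 1) and 0 < β < b^{−γ}, and define ψ(t) := ∑_{m=0}^∞ β^m φ(⟨b^m t⟩). Let U₁, U₂, … be independent uniform random variables on {0,…,b−1} and R_m := ∑_{i=1}^m U_i b^{i−1}. If the random variable Z_φ := ∑_{m=1}^∞ α^{−m}(φ((R_m+1)b^{−m}) − φ(R_m b^{−m})) is not almost surely equal to 0, then the random variable Z_ψ := ∑_{m=1}^∞ α^{−m}(ψ((R_m+1)b^{−m}) − ψ(R_m b^{−m})) is also not almost surely equal to 0; in fact Z_ψ = (1 − β/α)^{−1}·Z_φ almost surely. -/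
open MeasureTheory ProbabilityTheory
open scoped ENNReal NNReal

private lemma aux_fract (b : ℕ) (hb : 2 ≤ b) (a m n : ℕ) :
    Int.fract ((b : ℝ) ^ m * ((a : ℝ) / (b : ℝ) ^ n)) =
      ((a * b ^ m % b ^ n : ℕ) : ℝ) / (b : ℝ) ^ n := by
  have h1 : (b : ℝ) ^ m * ((a : ℝ) / (b : ℝ) ^ n)
      = ((a * b ^ m : ℕ) : ℝ) / ((b ^ n : ℕ) : ℝ) := by push_cast; ring
  rw [h1, Int.fract_div_natCast_eq_div_natCast_mod]
  push_cast
  ring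

set_option maxHeartbeats 1000000 in
/-- Proposition A.5: if `φ` is a valid base function for `b` and `α`, then the fractal
function `ψ(t) = ∑ β^m φ(⟨b^m t⟩)` (with `0 < β < b^{−γ}`) is also a valid base
function; in fact `Z_ψ = (1 − β/α)⁻¹ Z_φ` almost surely. -/
theorem valid_base_of_fractal {Ω : Type*} [MeasurableSpace Ω]
    (P : Measure Ω) [IsProbabilityMeasure P]
    (b : ℕ) (hb : 2 ≤ b) (γ : ℝ) (hγ0 : 0 < γ) (hγ1 : γ ≤ 1)
    (φ : ℝ → ℝ) (hφ : φ 0 = φ 1) (C : ℝ) (hC : 0 < C)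
    (hHolder : ∀ x ∈ Set.Icc (0 : ℝ) 1, ∀ y ∈ Set.Icc (0 : ℝ) 1,
      |φ x - φ y| ≤ C * |x - y| ^ γ)
    (α β : ℝ) (hα1 : ((b : ℝ) ^ γ)⁻¹ < α) (hα2 : α < 1)
    (hβ0 : 0 < β) (hβ1 : β < ((b : ℝ) ^ γ)⁻¹)
    (ψ : ℝ → ℝ)
    (hψ : ∀ t, ψ t = ∑' m : ℕ, β ^ m * φ (Int.fract ((b : ℝ) ^ m * t)))
    (U : ℕ → Ω → ℕ) (hUmeas : ∀ i, Measurable (U i)) (hUlt : ∀ i ω, U i ω < b)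
    (hUunif : ∀ i, ∀ j < b, P {ω | U i ω = j} = (b : ℝ≥0∞)⁻¹)
    (hUindep : iIndepFun U P)
    (R : ℕ → Ω → ℕ) (hR : ∀ m ω, R m ω = ∑ i ∈ Finset.range m, U i ω * b ^ i)
    (Zφ Zψ : Ω → ℝ)
    (hZφ : ∀ ω, Zφ ω = ∑' m : ℕ, (α ^ (m + 1))⁻¹ *
        (φ (((R (m + 1) ω : ℝ) + 1) / (b : ℝ) ^ (m + 1)) -
          φ ((R (m + 1) ω : ℝ) / (b : ℝ) ^ (m + 1))))
    (hZψ : ∀ ω, Zψ ω = ∑' m : ℕ, (α ^ (m + 1))⁻¹ *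
        (ψ (((R (m + 1) ω : ℝ) + 1) / (b : ℝ) ^ (m + 1)) -
          ψ ((R (m + 1) ω : ℝ) / (b : ℝ) ^ (m + 1))))
    (hvalid : ¬ (∀ᵐ ω ∂P, Zφ ω = 0)) :
    (∀ᵐ ω ∂P, Zψ ω = (1 - β / α)⁻¹ * Zφ ω) ∧ ¬ (∀ᵐ ω ∂P, Zψ ω = 0) := by
  -- numeric preliminaries
  have hb1 : (1:ℝ) < (b:ℝ) := by exact_mod_cast lt_of_lt_of_le one_lt_two hb
  have hb0 : (0:ℝ) < (b:ℝ) := by linarith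
  have hpow1 : (1:ℝ) < (b:ℝ) ^ γ :=
    (Real.one_lt_rpow_iff_of_pos hb0).mpr (Or.inl ⟨hb1, hγ0⟩)
  have hpow0 : (0:ℝ) < (b:ℝ) ^ γ := lt_trans one_pos hpow1
  set r : ℝ := ((b:ℝ) ^ γ)⁻¹ with hrdef
  have hr0 : 0 < r := inv_pos.mpr hpow0
  have hα0 : 0 < α := lt_trans hr0 hα1
  have hr1 : r < 1 := lt_trans hα1 hα2 |>.trans_le (le_refl 1) |> fun _ => lt_trans hα1 hα2
  have hβlt1 : β < 1 := lt_trans hβ1 hr1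
  have hβα1 : β / α < 1 := (div_lt_one hα0).mpr (lt_trans hβ1 hα1)
  have hβα0 : (0:ℝ) ≤ β / α := div_nonneg hβ0.le hα0.le
  have hc0 : (0:ℝ) < 1 - β / α := by linarith
  have hrα : r / α < 1 := (div_lt_one hα0).mpr hα1
  have hrα0 : (0:ℝ) ≤ r / α := div_nonneg hr0.le hα0.le
  -- rpow/npow bridge
  have keyrpow : ∀ n : ℕ, (((b:ℝ) ^ n)⁻¹) ^ γ = r ^ n := by
    intro n
    rw [← inv_pow, ← Real.rpow_natCast ((b:ℝ))⁻¹ n, ← Real.rpow_mul (by positivity),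
        mul_comm, Real.rpow_mul (by positivity), Real.rpow_natCast,
        Real.inv_rpow hb0.le, hrdef]
  -- bound for φ on [0,1]
  have hφbd : ∀ x ∈ Set.Icc (0:ℝ) 1, |φ x| ≤ |φ 0| + C := by
    intro x hx
    have h1 := hHolder x hx 0 (by constructor <;> norm_num)
    have h2 : |x - 0| ^ γ ≤ 1 := by
      rw [sub_zero]
      exact Real.rpow_le_one (abs_nonneg x) (abs_le.mpr ⟨by linarith [hx.1], hx.2⟩) hγ0.le
    have h3 : |φ x| - |φ 0| ≤ |φ x - φ 0| := abs_sub_abs_le_abs_sub _ _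
    nlinarith
  -- R facts
  have hRlt : ∀ n ω, R n ω < b ^ n := by
    intro n ω
    induction n with
    | zero => simp [hR]
    | succ n ih =>
      have h1 : R (n+1) ω = R n ω + U n ω * b ^ n := by
        rw [hR, hR, Finset.sum_range_succ]
      have h2 : U n ω * b ^ n ≤ (b - 1) * b ^ n :=
        Nat.mul_le_mul_right _ (by have := hUlt n ω; omega)
      have h3 : b ^ n + (b - 1) * b ^ n = b ^ (n+1) := by
        have hb' : 1 + (b - 1) = b := by omega
        calc b ^ n + (b-1) * b ^ n = (1 + (b-1)) * b ^ n := by ring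
          _ = b ^ (n+1) := by rw [hb', pow_succ]; ring
      rw [h1]
      calc R n ω + U n ω * b ^ n < b ^ n + U n ω * b ^ n := Nat.add_lt_add_right ih _
        _ ≤ b ^ n + (b-1) * b ^ n := Nat.add_le_add_left h2 _
        _ = b ^ (n+1) := h3
  have hRsplit : ∀ j n ω, j ≤ n → ∃ q, R n ω = R j ω + b ^ j * q := by
    intro j n ω hjn
    have h1 : R n ω = R j ω + ∑ i ∈ Finset.Ico j n, U i ω * b ^ i := by
      rw [hR, hR, Finset.range_eq_Ico, Finset.range_eq_Ico, Finset.sum_Ico_consecutive _ (Nat.zero_le j) hjn]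
    have h2 : b ^ j ∣ ∑ i ∈ Finset.Ico j n, U i ω * b ^ i :=
      Finset.dvd_sum fun i hi =>
        Dvd.dvd.mul_left (pow_dvd_pow b (Finset.mem_Ico.mp hi).1) _
    obtain ⟨q, hq⟩ := h2
    exact ⟨q, by rw [h1, hq]⟩
  have hRmod : ∀ j n ω, j ≤ n → R n ω % b ^ j = R j ω := by
    intro j n ω hjn
    obtain ⟨q, hq⟩ := hRsplit j n ω hjn
    rw [hq, Nat.add_mul_mod_self_left]
    exact Nat.mod_eq_of_lt (hRlt j ω)
  have hRmod1 : ∀ j n ω, j ≤ n → (R n ω + 1) % b ^ j = (R j ω + 1) % b ^ j := by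
    intro j n ω hjn
    obtain ⟨q, hq⟩ := hRsplit j n ω hjn
    rw [hq, add_right_comm, Nat.add_mul_mod_self_left]
  -- fract computations
  have epow : ∀ {m n : ℕ}, m < n → (b:ℝ) ^ n = (b:ℝ) ^ (n-m) * (b:ℝ) ^ m := by
    intro m n hmn
    rw [← pow_add]
    congr 1
    omega
  have epowN : ∀ {m n : ℕ}, m < n → b ^ n = b ^ (n-m) * b ^ m := by
    intro m n hmn
    rw [← pow_add]
    congr 1
    omega
  have hfract0 : ∀ n m ω, φ (Int.fract ((b:ℝ) ^ m * ((R n ω : ℝ) / (b:ℝ) ^ n))) =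
      if m < n then φ ((R (n - m) ω : ℝ) / (b:ℝ) ^ (n - m)) else φ 0 := by
    intro n m ω
    rw [aux_fract b hb]
    by_cases hmn : m < n
    · rw [if_pos hmn]
      have e2 : R n ω * b ^ m % b ^ n = R (n - m) ω * b ^ m := by
        rw [epowN hmn, Nat.mul_mod_mul_right, hRmod (n-m) n ω (by omega)]
      rw [e2]
      congr 1
      push_cast
      rw [epow hmn]
      have h1 : ((b:ℝ) ^ (n-m)) ≠ 0 := (pow_pos hb0 _).ne'
      have h2 : ((b:ℝ) ^ m) ≠ 0 := (pow_pos hb0 _).ne'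
      field_simp
    · rw [if_neg hmn]
      have hd : b ^ n ∣ R n ω * b ^ m :=
        Dvd.dvd.mul_left (pow_dvd_pow b (by omega)) _
      obtain ⟨q, hq⟩ := hd
      rw [hq, Nat.mul_mod_right]
      simp
  have hfract1 : ∀ n m ω, φ (Int.fract ((b:ℝ) ^ m * (((R n ω : ℝ) + 1) / (b:ℝ) ^ n))) =
      if m < n then φ (((R (n - m) ω : ℝ) + 1) / (b:ℝ) ^ (n - m)) else φ 0 := by
    intro n m ω
    have ecast : ((R n ω : ℝ) + 1) = ((R n ω + 1 : ℕ) : ℝ) := by push_cast; ring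
    rw [ecast, aux_fract b hb]
    by_cases hmn : m < n
    · rw [if_pos hmn]
      have e2 : (R n ω + 1) * b ^ m % b ^ n = ((R (n-m) ω + 1) % b ^ (n-m)) * b ^ m := by
        rw [epowN hmn, Nat.mul_mod_mul_right, hRmod1 (n-m) n ω (by omega)]
      rw [e2]
      have hle : R (n-m) ω + 1 ≤ b ^ (n-m) := hRlt (n-m) ω
      rcases eq_or_lt_of_le hle with heq | hlt'
      · rw [heq, Nat.mod_self]
        simp only [Nat.zero_mul, Nat.cast_zero, zero_div]
        rw [hφ]
        have hcast : ((R (n-m) ω : ℝ) + 1) = (b:ℝ) ^ (n-m) := by exact_mod_cast heq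
        rw [hcast, div_self (pow_pos hb0 _).ne']
      · rw [Nat.mod_eq_of_lt hlt']
        congr 1
        push_cast
        rw [epow hmn]
        have h1 : ((b:ℝ) ^ (n-m)) ≠ 0 := (pow_pos hb0 _).ne'
        have h2 : ((b:ℝ) ^ m) ≠ 0 := (pow_pos hb0 _).ne'
        field_simp
    · rw [if_neg hmn]
      have hd : b ^ n ∣ (R n ω + 1) * b ^ m :=
        Dvd.dvd.mul_left (pow_dvd_pow b (by omega)) _
      obtain ⟨q, hq⟩ := hd
      rw [hq, Nat.mul_mod_right]
      simp
  -- summability of the ψ-series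
  have hM : ∀ t : ℝ, Summable (fun m : ℕ => β ^ m * φ (Int.fract ((b:ℝ) ^ m * t))) := by
    intro t
    apply Summable.of_norm_bounded (g := fun m => (|φ 0| + C) * β ^ m)
      ((summable_geometric_of_lt_one hβ0.le hβlt1).mul_left _)
    intro m
    have hf1 : Int.fract ((b:ℝ)^m * t) ∈ Set.Icc (0:ℝ) 1 :=
      ⟨Int.fract_nonneg _, (Int.fract_lt_one _).le⟩
    have h2 := hφbd _ hf1
    have h3 : (0:ℝ) ≤ β ^ m := by positivity
    rw [Real.norm_eq_abs, abs_mul, abs_pow, abs_of_pos hβ0]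
    nlinarith
  -- pointwise identity
  have key : ∀ ω, Zψ ω = (1 - β / α)⁻¹ * Zφ ω := by
    intro ω
    set D : ℕ → ℝ := fun j => φ (((R (j+1) ω : ℝ) + 1) / (b:ℝ) ^ (j+1)) -
        φ ((R (j+1) ω : ℝ) / (b:ℝ) ^ (j+1)) with hD
    have hmem : ∀ n : ℕ, ((R n ω : ℝ) / (b:ℝ) ^ n) ∈ Set.Icc (0:ℝ) 1 ∧
        (((R n ω : ℝ) + 1) / (b:ℝ) ^ n) ∈ Set.Icc (0:ℝ) 1 := by
      intro n
      have h1n : R n ω + 1 ≤ b ^ n := hRlt n ω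
      have h1 : (R n ω : ℝ) + 1 ≤ (b:ℝ) ^ n := by exact_mod_cast h1n
      have hbn : (0:ℝ) < (b:ℝ) ^ n := pow_pos hb0 n
      have h0 : (0:ℝ) ≤ (R n ω : ℝ) := Nat.cast_nonneg _
      refine ⟨⟨by positivity, ?_⟩, ⟨by positivity, ?_⟩⟩
      · rw [div_le_one hbn]; linarith
      · rw [div_le_one hbn]; linarith
    have hDbd : ∀ j : ℕ, |D j| ≤ C * r ^ (j+1) := by
      intro j
      have h := hHolder _ (hmem (j+1)).2 _ (hmem (j+1)).1
      have e : ((R (j+1) ω : ℝ) + 1) / (b:ℝ) ^ (j+1) - (R (j+1) ω : ℝ) / (b:ℝ) ^ (j+1)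
          = ((b:ℝ) ^ (j+1))⁻¹ := by
        field_simp
        ring
      rw [e, abs_of_pos (inv_pos.mpr (pow_pos hb0 _)), keyrpow] at h
      simpa only [hD] using h
    -- the key finite-sum formula for ψ differences
    have hψdiff : ∀ N : ℕ,
        ψ (((R (N+1) ω : ℝ) + 1) / (b:ℝ) ^ (N+1)) - ψ ((R (N+1) ω : ℝ) / (b:ℝ) ^ (N+1))
          = ∑ k ∈ Finset.range (N+1), β ^ (N - k) * D k := by
      intro N
      rw [hψ, hψ, ← Summable.tsum_sub (hM _) (hM _)]
      have hfun : ∀ m : ℕ,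
          β ^ m * φ (Int.fract ((b:ℝ)^m * (((R (N+1) ω : ℝ) + 1) / (b:ℝ) ^ (N+1))))
            - β ^ m * φ (Int.fract ((b:ℝ)^m * ((R (N+1) ω : ℝ) / (b:ℝ) ^ (N+1))))
          = if m < N + 1 then β ^ m * D (N - m) else 0 := by
        intro m
        rw [hfract1 (N+1) m ω, hfract0 (N+1) m ω]
        by_cases hm : m < N + 1
        · rw [if_pos hm, if_pos hm, if_pos hm]
          have e : N + 1 - m = (N - m) + 1 := by omega
          rw [e]
          simp only [hD]
          ring
        · rw [if_neg hm, if_neg hm, if_neg hm]; ring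
      calc (∑' m : ℕ, (β ^ m * φ (Int.fract ((b:ℝ)^m * (((R (N+1) ω : ℝ) + 1) / (b:ℝ) ^ (N+1))))
              - β ^ m * φ (Int.fract ((b:ℝ)^m * ((R (N+1) ω : ℝ) / (b:ℝ) ^ (N+1))))))
          = ∑' m : ℕ, (if m < N+1 then β ^ m * D (N - m) else 0) := tsum_congr hfun
        _ = ∑ m ∈ Finset.range (N+1), (if m < N+1 then β ^ m * D (N - m) else 0) := by
            apply tsum_eq_sum
            intro m hm
            rw [if_neg (by simpa using hm)]
        _ = ∑ m ∈ Finset.range (N+1), β ^ m * D (N - m) :=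
            Finset.sum_congr rfl fun m hm => if_pos (Finset.mem_range.mp hm)
        _ = ∑ k ∈ Finset.range (N+1), β ^ (N - k) * D k := by
            rw [← Finset.sum_range_reflect (fun k => β ^ (N - k) * D k) (N+1)]
            apply Finset.sum_congr rfl
            intro j hj
            have hj' : j < N + 1 := Finset.mem_range.mp hj
            have e1 : N + 1 - 1 - j = N - j := by omega
            have e2 : N - (N - j) = j := by omega
            simp only [e1, e2]
    -- Cauchy product
    set f : ℕ → ℝ := fun k => (α ^ (k+1))⁻¹ * D k with hfdef
    set g : ℕ → ℝ := fun i => (β / α) ^ i with hgdef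
    have hfs : Summable fun k => ‖f k‖ := by
      refine Summable.of_nonneg_of_le (fun k => norm_nonneg _) ?_
        ((summable_geometric_of_lt_one hrα0 hrα).mul_left (C * (r/α)))
      · intro k
        simp only [hfdef]
        rw [Real.norm_eq_abs, abs_mul, abs_inv, abs_pow, abs_of_pos hα0]
        have h1 : |D k| ≤ C * r ^ (k+1) := hDbd k
        have h2 : (0:ℝ) < α ^ (k+1) := pow_pos hα0 _
        calc (α ^ (k+1))⁻¹ * |D k| ≤ (α ^ (k+1))⁻¹ * (C * r ^ (k+1)) :=
              mul_le_mul_of_nonneg_left h1 (by positivity)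
          _ = C * (r/α) * (r/α) ^ k := by
              rw [div_pow, pow_succ r, pow_succ α]
              field_simp
    have hgs : Summable fun i => ‖g i‖ := by
      simp only [hgdef, Real.norm_eq_abs, abs_pow, abs_of_nonneg hβα0]
      exact summable_geometric_of_lt_one hβα0 hβα1
    have hsum_g : ∑' i, g i = (1 - β/α)⁻¹ := tsum_geometric_of_lt_one hβα0 hβα1
    have hterm : ∀ N : ℕ, (α ^ (N+1))⁻¹ *
        (ψ (((R (N+1) ω : ℝ) + 1) / (b:ℝ) ^ (N+1)) - ψ ((R (N+1) ω : ℝ) / (b:ℝ) ^ (N+1)))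
          = ∑ k ∈ Finset.range (N+1), f k * g (N - k) := by
      intro N
      rw [hψdiff N, Finset.mul_sum]
      apply Finset.sum_congr rfl
      intro k hk
      have hk' : k < N+1 := Finset.mem_range.mp hk
      simp only [hfdef, hgdef]
      have hsplit : α ^ (N+1) = α ^ (k+1) * α ^ (N-k) := by
        rw [← pow_add]; congr 1; omega
      rw [div_pow, hsplit]
      have hαk : (α:ℝ) ^ (k+1) ≠ 0 := (pow_pos hα0 _).ne'
      have hαnk : (α:ℝ) ^ (N-k) ≠ 0 := (pow_pos hα0 _).ne'
      field_simp
    rw [hZψ ω, hZφ ω]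
    calc (∑' N : ℕ, (α ^ (N+1))⁻¹ *
          (ψ (((R (N+1) ω : ℝ) + 1) / (b:ℝ) ^ (N+1)) - ψ ((R (N+1) ω : ℝ) / (b:ℝ) ^ (N+1))))
        = ∑' N : ℕ, ∑ k ∈ Finset.range (N+1), f k * g (N - k) := tsum_congr hterm
      _ = (∑' k, f k) * (∑' i, g i) :=
          (tsum_mul_tsum_eq_tsum_sum_range_of_summable_norm hfs hgs).symm
      _ = (1 - β / α)⁻¹ * (∑' m : ℕ, (α ^ (m + 1))⁻¹ *
            (φ (((R (m + 1) ω : ℝ) + 1) / (b : ℝ) ^ (m + 1)) -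
              φ ((R (m + 1) ω : ℝ) / (b : ℝ) ^ (m + 1)))) := by
          rw [hsum_g, mul_comm]
  refine ⟨ae_of_all _ key, ?_⟩
  intro h0
  apply hvalid
  filter_upwards [h0] with ω hω
  have hk := key ω
  rw [hω] at hk
  have hne : ((1:ℝ) - β / α)⁻¹ ≠ 0 := inv_ne_zero hc0.ne'
  rcases mul_eq_zero.mp hk.symm with h | h
  · exact absurd h hne
  · exact h
end

section
/- Let b ∈ {2,3,…}, α ∈ (0,1), p > 0, and let φ : [0,1] → ℝ be continuous with φ(0) = φ(1). Define f(t) := ∑_{n=0}^∞ αⁿ φ(⟨bⁿ t⟩). Let U₁, U₂, … be independent random variables uniformly distributed on {0,…,b−1} and R_m := ∑_{i=1}^m U_i b^{i−1}. Then for every n ∈ ℕ, ∑_{k=0}^{bⁿ−1} |f((k+1)·b^{−n}) − f(k·b^{−n})|^p = (α^p·b)ⁿ · E[ |∑_{m=1}^n α^{−m}·(φ((R_m + 1)·b^{−m}) − φ(R_m·b^{−m}))|^p ]. -/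
open MeasureTheory ProbabilityTheory
open scoped ENNReal NNReal

lemma fract_nat_div (k d : ℕ) (hd : 0 < d) :
    Int.fract ((k : ℝ) / d) = ((k % d : ℕ) : ℝ) / d := by
  have hd' : (0:ℝ) < d := by exact_mod_cast hd
  conv_lhs => rw [← Nat.div_add_mod k d]
  push_cast
  rw [add_div, mul_comm, mul_div_assoc, div_self (ne_of_gt hd'), mul_one, add_comm,
    Int.fract_add_natCast, Int.fract_eq_self.2]
  constructor
  · positivity
  · rw [div_lt_one hd']
    exact_mod_cast Nat.mod_lt k hd

lemma digit_sum_eq (b : ℕ) (hb : 2 ≤ b) :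
    ∀ (j n : ℕ) (u : ℕ → ℕ), (∀ i, u i < b) → j < n →
      (∑ i ∈ Finset.range n, u i * b ^ i) / b ^ j % b = u j := by
  intro j
  induction j with
  | zero =>
    intro n u hu hj
    obtain ⟨n', rfl⟩ := Nat.exists_eq_add_of_lt hj
    rw [Finset.sum_range_succ']
    simp only [pow_zero, mul_one, pow_succ']
    have : ∑ i ∈ Finset.range (0 + n'), u (i + 1) * (b * b ^ i)
        = b * ∑ i ∈ Finset.range (0 + n'), u (i + 1) * b ^ i := by
      rw [Finset.mul_sum]; congr 1; ext i; ring
    rw [this, Nat.div_one, Nat.mul_add_mod]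
    exact Nat.mod_eq_of_lt (hu 0)
  | succ j ih =>
    intro n u hu hj
    obtain ⟨n', rfl⟩ := Nat.exists_eq_add_of_lt hj
    rw [Finset.sum_range_succ']
    simp only [pow_zero, mul_one]
    have h1 : ∑ i ∈ Finset.range (j + 1 + n'), u (i + 1) * b ^ (i + 1)
        = b * ∑ i ∈ Finset.range (j + 1 + n'), u (i + 1) * b ^ i := by
      rw [Finset.mul_sum]; congr 1; ext i; ring
    rw [h1, pow_succ', Nat.add_comm, ← Nat.div_div_eq_div_mul,
      Nat.add_mul_div_left _ _ (by omega : 0 < b), Nat.div_eq_of_lt (hu 0), Nat.zero_add]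
    exact ih _ (fun i => u (i + 1)) (fun i => hu _) (by omega)

lemma digit_reconstruct (b : ℕ) (hb : 2 ≤ b) :
    ∀ (n k : ℕ), k < b ^ n → ∑ i ∈ Finset.range n, (k / b ^ i % b) * b ^ i = k := by
  intro n
  induction n with
  | zero => intro k hk; simp only [pow_zero, Nat.lt_one_iff] at hk; simp [hk]
  | succ n ih =>
    intro k hk
    rw [Finset.sum_range_succ']
    simp only [pow_zero, mul_one, Nat.div_one]
    have h1 : ∀ i, k / b ^ (i + 1) = (k / b) / b ^ i := by
      intro i; rw [Nat.div_div_eq_div_mul, pow_succ']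
    have h2 : ∑ i ∈ Finset.range n, k / b ^ (i + 1) % b * b ^ (i + 1)
        = b * ∑ i ∈ Finset.range n, (k / b) / b ^ i % b * b ^ i := by
      rw [Finset.mul_sum]; congr 1; ext i; rw [h1]; ring
    rw [h2, ih (k / b) (Nat.div_lt_of_lt_mul (by rwa [← pow_succ']))]
    rw [Nat.add_comm]; exact Nat.mod_add_div k b

/-- Equation (3.4)/(3.6) of the paper: the `n`-th level `p`-th variation sum of `f`
along the `b`-adic partition equals `(α^p b)^n` times the expectation of the `p`-th
power of the randomized increment sum. -/
theorem variation_sum_eq_expectation {Ω : Type*} [MeasurableSpace Ω]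
    (P : Measure Ω) [IsProbabilityMeasure P]
    (b : ℕ) (hb : 2 ≤ b) (α : ℝ) (hα : α ∈ Set.Ioo (0 : ℝ) 1)
    (p : ℝ) (hp : 0 < p)
    (φ : ℝ → ℝ) (hφcont : ContinuousOn φ (Set.Icc (0 : ℝ) 1)) (hφ : φ 0 = φ 1)
    (f : ℝ → ℝ)
    (hf : ∀ t, f t = ∑' n : ℕ, α ^ n * φ (Int.fract ((b : ℝ) ^ n * t)))
    (U : ℕ → Ω → ℕ) (hUmeas : ∀ i, Measurable (U i)) (hUlt : ∀ i ω, U i ω < b)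
    (hUunif : ∀ i, ∀ j < b, P {ω | U i ω = j} = (b : ℝ≥0∞)⁻¹)
    (hUindep : iIndepFun U P)
    (R : ℕ → Ω → ℕ) (hR : ∀ m ω, R m ω = ∑ i ∈ Finset.range m, U i ω * b ^ i) :
    ∀ n : ℕ,
      ∑ k ∈ Finset.range (b ^ n),
          |f (((k : ℝ) + 1) / (b : ℝ) ^ n) - f ((k : ℝ) / (b : ℝ) ^ n)| ^ p
        = (α ^ p * (b : ℝ)) ^ n *
            ∫ ω, |∑ m ∈ Finset.range n, (α ^ (m + 1))⁻¹ *
                (φ (((R (m + 1) ω : ℝ) + 1) / (b : ℝ) ^ (m + 1)) -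
                  φ ((R (m + 1) ω : ℝ) / (b : ℝ) ^ (m + 1)))| ^ p ∂P := by
  intro n
  obtain ⟨hα0, hα1⟩ := hα
  have hb0 : 0 < b := by omega
  have hbR : (0:ℝ) < (b:ℝ) := by exact_mod_cast hb0
  -- bound on φ and summability
  obtain ⟨C, hC⟩ := IsCompact.exists_bound_of_continuousOn isCompact_Icc hφcont
  have hsum : ∀ t : ℝ, Summable (fun j : ℕ => α ^ j * φ (Int.fract ((b:ℝ) ^ j * t))) := by
    intro t
    apply Summable.of_norm_bounded
      ((summable_geometric_of_lt_one hα0.le hα1).mul_left C)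
    intro j
    have h1 : Int.fract ((b:ℝ) ^ j * t) ∈ Set.Icc (0:ℝ) 1 :=
      ⟨Int.fract_nonneg _, (Int.fract_lt_one _).le⟩
    rw [norm_mul, Real.norm_eq_abs, abs_pow, abs_of_pos hα0, mul_comm]
    exact mul_le_mul_of_nonneg_right (hC _ h1) (pow_nonneg hα0.le j)
  -- value of f at b-adic points
  have hfval : ∀ k : ℕ, f ((k:ℝ)/(b:ℝ)^n)
      = (∑ j ∈ Finset.range n, α ^ j * φ (((k % b ^ (n - j) : ℕ) : ℝ) / (b:ℝ) ^ (n - j)))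
        + α ^ n * φ 0 * (1 - α)⁻¹ := by
    intro k
    rw [hf, ← (hsum _).sum_add_tsum_nat_add n]
    congr 1
    · apply Finset.sum_congr rfl
      intro j hj
      have hj' : j < n := Finset.mem_range.mp hj
      have hpow : (b:ℝ) ^ j * (b:ℝ) ^ (n - j) = (b:ℝ) ^ n := by
        rw [← pow_add]; congr 1; omega
      have key : (b:ℝ) ^ j * ((k:ℝ) / (b:ℝ) ^ n) = (k:ℝ) / (b:ℝ) ^ (n - j) := by
        field_simp
        linear_combination (k:ℝ) * hpow
      have hfr := fract_nat_div k (b ^ (n - j)) (pow_pos hb0 _)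
      push_cast at hfr
      rw [key, hfr]
    · have hterm : ∀ i : ℕ, α ^ (i + n) * φ (Int.fract ((b:ℝ) ^ (i + n) * ((k:ℝ) / (b:ℝ) ^ n)))
          = (α ^ n * φ 0) * α ^ i := by
        intro i
        have harg : (b:ℝ) ^ (i + n) * ((k:ℝ) / (b:ℝ) ^ n) = ((k * b ^ i : ℕ) : ℝ) := by
          push_cast
          rw [pow_add]
          field_simp
          try ring
        rw [harg, Int.fract_natCast, pow_add]
        ring
      rw [tsum_congr hterm, tsum_mul_left, tsum_geometric_of_lt_one hα0.le hα1]
      try ring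
  -- wraparound
  have hwrap : ∀ (k d : ℕ), 2 ≤ d →
      φ ((((k+1) % d : ℕ):ℝ) / d) = φ ((((k % d : ℕ):ℝ) + 1) / d) := by
    intro k d hd
    have hd' : (0:ℝ) < (d:ℝ) := by exact_mod_cast (by omega : 0 < d)
    rcases Nat.lt_or_ge (k % d + 1) d with h | h
    · have : (k+1) % d = k % d + 1 := by
        rw [Nat.add_mod, Nat.mod_eq_of_lt (by omega : 1 < d), Nat.mod_eq_of_lt h]
      rw [this]; push_cast; ring_nf
    · have h2 : k % d + 1 = d := by
        have := Nat.mod_lt k (show 0 < d by omega); omega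
      have h3 : (k+1) % d = 0 := by
        rw [Nat.add_mod, Nat.mod_eq_of_lt (by omega : 1 < d), h2, Nat.mod_self]
      have h4 : (((k % d : ℕ):ℝ) + 1) / d = 1 := by
        rw [div_eq_one_iff_eq (ne_of_gt hd')]
        exact_mod_cast h2
      rw [h3, h4, ← hφ]
      norm_num
  -- increment formula
  have hinc : ∀ k : ℕ,
      f (((k:ℝ)+1)/(b:ℝ)^n) - f ((k:ℝ)/(b:ℝ)^n)
        = α ^ n * ∑ m ∈ Finset.range n, (α ^ (m+1))⁻¹ *
            (φ ((((k % b ^ (m+1) : ℕ):ℝ) + 1) / (b:ℝ) ^ (m+1)) -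
             φ (((k % b ^ (m+1) : ℕ):ℝ) / (b:ℝ) ^ (m+1))) := by
    intro k
    have hcast : ((k:ℝ)+1) = ((k+1 : ℕ):ℝ) := by push_cast; ring
    rw [hcast, hfval (k+1), hfval k, add_sub_add_right_eq_sub, ← Finset.sum_sub_distrib,
      ← Finset.sum_range_reflect, Finset.mul_sum]
    apply Finset.sum_congr rfl
    intro m hm
    have hm' : m < n := Finset.mem_range.mp hm
    have e1 : n - (n - 1 - m) = m + 1 := by omega
    have e2 : n - 1 - m + (m + 1) = n := by omega
    have hd2 : 2 ≤ b ^ (m+1) := le_trans hb (Nat.le_self_pow (by omega) b)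
    have hwr := hwrap k (b ^ (m+1)) hd2
    push_cast at hwr
    have hαsplit : α ^ n * (α ^ (m+1))⁻¹ = α ^ (n - 1 - m) := by
      have hsp : α ^ n = α ^ (n - 1 - m) * α ^ (m+1) := by rw [← pow_add, e2]
      rw [hsp, mul_assoc, mul_inv_cancel₀ (pow_ne_zero _ (ne_of_gt hα0)), mul_one]
    rw [e1, ← mul_sub, hwr, ← mul_assoc, hαsplit]
  have hpow_swap : (α ^ n) ^ p = (α ^ p) ^ n := by
    rw [← Real.rpow_natCast α n, ← Real.rpow_mul hα0.le, mul_comm (n:ℝ) p,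
      Real.rpow_mul hα0.le, Real.rpow_natCast]
  -- R is bounded
  have hRlt : ∀ m ω, R m ω < b ^ m := by
    intro m ω
    induction m with
    | zero => rw [hR]; simp
    | succ m ih =>
      have key : b ^ m + (b - 1) * b ^ m = b ^ (m + 1) := by
        have h1 : (b - 1 + 1) = b := by omega
        calc b ^ m + (b - 1) * b ^ m = (b - 1 + 1) * b ^ m := by ring
          _ = b * b ^ m := by rw [h1]
          _ = b ^ (m + 1) := (pow_succ' b m).symm
      have h2 : U m ω * b ^ m ≤ (b - 1) * b ^ m :=
        Nat.mul_le_mul_right _ (by have := hUlt m ω; omega)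
      have h3 : R (m+1) ω = R m ω + U m ω * b ^ m := by
        rw [hR, Finset.sum_range_succ, ← hR]
      omega
  -- R m is R n mod b^m
  have hRmod : ∀ m, m ≤ n → ∀ ω, R n ω % b ^ m = R m ω := by
    intro m hm ω
    have hsplit : R n ω = R m ω + ∑ i ∈ Finset.Ico m n, U i ω * b ^ i := by
      rw [hR, hR, Finset.range_eq_Ico, Finset.range_eq_Ico]
      exact (Finset.sum_Ico_consecutive (fun i => U i ω * b ^ i) (Nat.zero_le m) hm).symm
    have hdvd : b ^ m ∣ ∑ i ∈ Finset.Ico m n, U i ω * b ^ i :=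
      Finset.dvd_sum fun i hi => Dvd.dvd.mul_left (pow_dvd_pow b (Finset.mem_Ico.mp hi).1) _
    obtain ⟨c, hc⟩ := hdvd
    rw [hsplit, hc, Nat.add_mul_mod_self_left, Nat.mod_eq_of_lt (hRlt m ω)]
  have hRmeas : Measurable (R n) := by
    have hfun : R n = fun ω => ∑ i ∈ Finset.range n, U i ω * b ^ i := funext fun ω => hR n ω
    rw [hfun]
    exact Finset.measurable_sum _ fun i _ => (hUmeas i).mul measurable_const
  -- R n is uniform
  have hRunif : ∀ k, k < b ^ n → P {ω | R n ω = k} = ((b : ℝ≥0∞) ^ n)⁻¹ := by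
    intro k hk
    have hset : {ω | R n ω = k} = ⋂ i ∈ Finset.range n, U i ⁻¹' {k / b ^ i % b} := by
      ext ω
      simp only [Set.mem_setOf_eq, Set.mem_iInter, Set.mem_preimage,
        Set.mem_singleton_iff, Finset.mem_range]
      constructor
      · intro h i hi
        rw [← h, hR]
        exact (digit_sum_eq b hb i n (fun j => U j ω) (fun j => hUlt j ω) hi).symm
      · intro h
        rw [hR]
        calc ∑ i ∈ Finset.range n, U i ω * b ^ i
            = ∑ i ∈ Finset.range n, (k / b ^ i % b) * b ^ i :=
              Finset.sum_congr rfl fun i hi => by rw [h i (Finset.mem_range.mp hi)]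
          _ = k := digit_reconstruct b hb n k hk
    rw [hset, hUindep.measure_inter_preimage_eq_mul (Finset.range n)
      (fun i _ => measurableSet_singleton _)]
    have hprod : ∀ i ∈ Finset.range n, P (U i ⁻¹' {k / b ^ i % b}) = (b : ℝ≥0∞)⁻¹ :=
      fun i _ => hUunif i _ (Nat.mod_lt _ (by omega))
    rw [Finset.prod_congr rfl hprod, Finset.prod_const, Finset.card_range, ENNReal.inv_pow]
  -- abbreviate the deterministic sum
  set S : ℕ → ℝ := fun k => ∑ m ∈ Finset.range n, (α ^ (m+1))⁻¹ *
      (φ ((((k % b ^ (m+1) : ℕ):ℝ) + 1) / (b:ℝ) ^ (m+1)) -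
       φ (((k % b ^ (m+1) : ℕ):ℝ) / (b:ℝ) ^ (m+1))) with hSdef
  have hintegrand : ∀ ω : Ω, |∑ m ∈ Finset.range n, (α ^ (m + 1))⁻¹ *
        (φ (((R (m + 1) ω : ℝ) + 1) / (b : ℝ) ^ (m + 1)) -
          φ ((R (m + 1) ω : ℝ) / (b : ℝ) ^ (m + 1)))| ^ p
      = |S (R n ω)| ^ p := by
    intro ω
    congr 2
    rw [hSdef]
    apply Finset.sum_congr rfl
    intro m hm
    rw [hRmod (m+1) (Finset.mem_range.mp hm) ω]
  have hmeasset : ∀ k : ℕ, MeasurableSet (R n ⁻¹' {k}) :=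
    fun k => hRmeas (measurableSet_singleton k)
  have hint : ∫ ω, |S (R n ω)| ^ p ∂P
      = ∑ k ∈ Finset.range (b ^ n), (((b:ℝ) ^ n)⁻¹) * |S k| ^ p := by
    have hptwise : ∀ ω, |S (R n ω)| ^ p = ∑ k ∈ Finset.range (b ^ n),
        Set.indicator (R n ⁻¹' {k}) (fun _ => |S k| ^ p) ω := by
      intro ω
      have h1 : ∑ k ∈ Finset.range (b ^ n), Set.indicator (R n ⁻¹' {k}) (fun _ => |S k| ^ p) ω
          = Set.indicator (R n ⁻¹' {R n ω}) (fun _ => |S (R n ω)| ^ p) ω := by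
        apply Finset.sum_eq_single_of_mem (R n ω) (Finset.mem_range.mpr (hRlt n ω))
        intro k _ hne
        apply Set.indicator_of_notMem
        intro hmem
        exact hne ((Set.mem_singleton_iff.mp hmem).symm)
      rw [h1, Set.indicator_of_mem (show ω ∈ R n ⁻¹' {R n ω} from rfl)]
    calc ∫ ω, |S (R n ω)| ^ p ∂P
        = ∫ ω, ∑ k ∈ Finset.range (b ^ n),
            Set.indicator (R n ⁻¹' {k}) (fun _ => |S k| ^ p) ω ∂P :=
          integral_congr_ae (Filter.Eventually.of_forall hptwise)
      _ = ∑ k ∈ Finset.range (b ^ n), ∫ ω,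
            Set.indicator (R n ⁻¹' {k}) (fun _ => |S k| ^ p) ω ∂P :=
          integral_finset_sum _ (fun k _ => (integrable_const _).indicator (hmeasset k))
      _ = ∑ k ∈ Finset.range (b ^ n), ((b:ℝ)^n)⁻¹ * |S k| ^ p := by
          apply Finset.sum_congr rfl
          intro k hk
          rw [integral_indicator_const _ (hmeasset k)]
          have hpre : R n ⁻¹' {k} = {ω | R n ω = k} := rfl
          rw [hpre, measureReal_def, hRunif k (Finset.mem_range.mp hk), smul_eq_mul]
          congr 1
          simp [ENNReal.toReal_inv, ENNReal.toReal_pow]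
  -- assemble
  simp only [hintegrand]
  rw [hint, Finset.mul_sum]
  apply Finset.sum_congr rfl
  intro k hk
  rw [hinc k, abs_mul, abs_of_pos (pow_pos hα0 n),
    Real.mul_rpow (pow_nonneg hα0.le n) (abs_nonneg _), hpow_swap, mul_pow]
  have hBne : ((b:ℝ) ^ n) ≠ 0 := by positivity
  rw [mul_assoc, ← mul_assoc ((b:ℝ)^n), mul_inv_cancel₀ hBne, one_mul]
end

section
/- Let b ∈ {2,3,…} and let m > k ≥ 1 be integers. For every integer j, the set {i ∈ {0,1,…,b^m − 1} : ((i·b^{m−k}) mod b^m) − i = j} contains at most one element. -/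
/-- Lemma 3.3 of the paper: for `m > k ≥ 1` and any integer `j`, there is at most one
`i ∈ {0,…,b^m − 1}` with `((i·b^{m−k}) mod b^m) − i = j`. -/
theorem badic_shift_injective (b m k : ℕ) (hb : 2 ≤ b) (hk : 1 ≤ k) (hkm : k < m)
    (j : ℤ) :
    Set.Subsingleton
      {i : ℕ | i < b ^ m ∧ ((i * b ^ (m - k) : ℤ) % (b ^ m : ℤ)) - (i : ℤ) = j} := by
  rintro i1 ⟨hi1, e1⟩ i2 ⟨hi2, e2⟩
  set M : ℤ := (b : ℤ) ^ m with hMdef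
  set c : ℤ := (b : ℤ) ^ (m - k) with hcdef
  have hM : 0 < M := by positivity
  -- divisibility: M ∣ (i1 - i2) * (c - 1)
  have hd : M ∣ ((i1 : ℤ) - i2) * (c - 1) := by
    have q1 : ((i1 : ℤ) * c) % M = i1 * c - M * ((i1 * c) / M) := by
      rw [Int.emod_def]
    have q2 : ((i2 : ℤ) * c) % M = i2 * c - M * ((i2 * c) / M) := by
      rw [Int.emod_def]
    refine ⟨((i1 : ℤ) * c) / M - ((i2 : ℤ) * c) / M, ?_⟩
    have h : ((i1 : ℤ) * c) % M - i1 = ((i2 : ℤ) * c) % M - i2 := by rw [e1, e2]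
    rw [q1, q2] at h
    ring_nf
    ring_nf at h
    linarith
  -- coprimality
  have hbc : (b : ℤ) ∣ c := by
    rw [hcdef]
    exact dvd_pow_self _ (by omega)
  obtain ⟨t, ht⟩ := hbc
  have hcop : IsCoprime M (c - 1) := by
    have : IsCoprime (b : ℤ) (c - 1) := ⟨t, -1, by rw [ht]; ring⟩
    exact this.pow_left
  have hdvd : M ∣ ((i1 : ℤ) - i2) := hcop.dvd_of_dvd_mul_right hd
  have habs : |(i1 : ℤ) - i2| < M := by
    rw [abs_lt]
    constructor <;>
    · push_cast [hMdef]
      have : (i1 : ℤ) < (b : ℤ) ^ m := by exact_mod_cast hi1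
      have : (i2 : ℤ) < (b : ℤ) ^ m := by exact_mod_cast hi2
      omega
  have : (i1 : ℤ) - i2 = 0 := Int.eq_zero_of_abs_lt_dvd hdvd habs
  omega
end

section
/- Fix an integer b ≥ 2. For h : [0,1] → ℝ and n ∈ ℕ, let V_n(h) := ∑_{k=0}^{bⁿ−1} (h((k+1)·b^{−n}) − h(k·b^{−n}))². Let f, g : [0,1] → ℝ be continuous functions such that limsup_{n→∞} V_n(f) < ∞ and n^{−1}·V_n(g) → c for some c ≥ 0. Then n^{−1}·V_n(f + g) → c as n → ∞. -/
open Filter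

/-- Lemma 3.11 of the paper: if the `b`-adic quadratic variation sums of `f` stay
bounded and `n⁻¹ V_n(g) → c`, then `n⁻¹ V_n(f+g) → c`. -/
theorem rescaled_quadratic_variation_add (b : ℕ) (hb : 2 ≤ b)
    (f g : ℝ → ℝ)
    (hf : ContinuousOn f (Set.Icc (0 : ℝ) 1))
    (hg : ContinuousOn g (Set.Icc (0 : ℝ) 1))
    (V : (ℝ → ℝ) → ℕ → ℝ)
    (hV : ∀ h n, V h n = ∑ k ∈ Finset.range (b ^ n),
        (h (((k : ℝ) + 1) / (b : ℝ) ^ n) - h ((k : ℝ) / (b : ℝ) ^ n)) ^ 2)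
    (c : ℝ) (hc : 0 ≤ c)
    (hfbdd : ∃ M : ℝ, ∀ᶠ n in atTop, V f n ≤ M)
    (hglim : Tendsto (fun n : ℕ => V g n / (n : ℝ)) atTop (nhds c)) :
    Tendsto (fun n : ℕ => V (fun t => f t + g t) n / (n : ℝ)) atTop (nhds c) := by
  obtain ⟨M, hM⟩ := hfbdd
  set M' : ℝ := max M 0 with hM'def
  have hM'0 : (0:ℝ) ≤ M' := le_max_right _ _
  have hVf0 : ∀ n, 0 ≤ V f n := fun n => by rw [hV]; positivity
  have hVg0 : ∀ n, 0 ≤ V g n := fun n => by rw [hV]; positivity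
  have key : ∀ n, |V (fun t => f t + g t) n - V g n| ≤
      V f n + 2 * Real.sqrt (V f n * V g n) := by
    intro n
    set F : ℕ → ℝ := fun k => f (((k:ℝ)+1)/(b:ℝ)^n) - f ((k:ℝ)/(b:ℝ)^n) with hF
    set G : ℕ → ℝ := fun k => g (((k:ℝ)+1)/(b:ℝ)^n) - g ((k:ℝ)/(b:ℝ)^n) with hG
    have hsum : V (fun t => f t + g t) n - V g n
        = V f n + 2 * ∑ k ∈ Finset.range (b^n), F k * G k := by
      simp only [hV, Finset.mul_sum, ← Finset.sum_add_distrib, ← Finset.sum_sub_distrib]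
      refine Finset.sum_congr rfl fun k _ => ?_
      simp only [hF, hG]; ring
    have habs : |∑ k ∈ Finset.range (b^n), F k * G k| ≤ Real.sqrt (V f n * V g n) := by
      rw [← Real.sqrt_sq_eq_abs]
      apply Real.sqrt_le_sqrt
      rw [hV, hV]
      exact Finset.sum_mul_sq_le_sq_mul_sq _ _ _
    rw [hsum]
    calc |V f n + 2 * ∑ k ∈ Finset.range (b^n), F k * G k|
        ≤ |V f n| + |2 * ∑ k ∈ Finset.range (b^n), F k * G k| := abs_add_le _ _
      _ ≤ V f n + 2 * Real.sqrt (V f n * V g n) := by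
          rw [abs_of_nonneg (hVf0 n), abs_mul, abs_two]
          nlinarith [habs]
  have hbound : ∀ᶠ n : ℕ in atTop,
      ‖V (fun t => f t + g t) n / (n:ℝ) - V g n / (n:ℝ)‖ ≤
        M' / (n:ℝ) + 2 * Real.sqrt M' * (Real.sqrt (V g n / (n:ℝ)) * (1 / Real.sqrt (n:ℝ))) := by
    filter_upwards [hM, eventually_ge_atTop 1] with n hfn hn1
    have hn0 : (0:ℝ) < (n:ℝ) := by exact_mod_cast hn1
    have h1 : V f n ≤ M' := le_trans hfn (le_max_left _ _)
    have h2 : Real.sqrt (V f n * V g n) ≤ Real.sqrt M' * Real.sqrt (V g n) := by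
      rw [← Real.sqrt_mul hM'0]
      exact Real.sqrt_le_sqrt (by nlinarith [hVg0 n])
    have h4 : Real.sqrt (V g n) = Real.sqrt (V g n / (n:ℝ)) * Real.sqrt (n:ℝ) := by
      rw [← Real.sqrt_mul (div_nonneg (hVg0 n) hn0.le), div_mul_cancel₀ _ (ne_of_gt hn0)]
    rw [Real.norm_eq_abs, div_sub_div_same, abs_div, abs_of_pos hn0]
    have hsqn : Real.sqrt (n:ℝ) / (n:ℝ) = 1 / Real.sqrt (n:ℝ) := Real.sqrt_div_self'
    have hstep : |V (fun t => f t + g t) n - V g n| ≤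
        M' + 2 * (Real.sqrt M' * (Real.sqrt (V g n / (n:ℝ)) * Real.sqrt (n:ℝ))) := by
      calc |V (fun t => f t + g t) n - V g n|
          ≤ V f n + 2 * Real.sqrt (V f n * V g n) := key n
        _ ≤ M' + 2 * (Real.sqrt M' * (Real.sqrt (V g n / (n:ℝ)) * Real.sqrt (n:ℝ))) := by
            rw [← h4]; nlinarith [h2]
    calc |V (fun t => f t + g t) n - V g n| / (n:ℝ)
        ≤ (M' + 2 * (Real.sqrt M' * (Real.sqrt (V g n / (n:ℝ)) * Real.sqrt (n:ℝ)))) / (n:ℝ) :=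
          by gcongr
      _ = M' / (n:ℝ) + 2 * Real.sqrt M' * (Real.sqrt (V g n / (n:ℝ)) * (Real.sqrt (n:ℝ) / (n:ℝ))) := by
          field_simp
      _ = M' / (n:ℝ) + 2 * Real.sqrt M' * (Real.sqrt (V g n / (n:ℝ)) * (1 / Real.sqrt (n:ℝ))) := by
          rw [hsqn]
  have hlim0 : Tendsto (fun n : ℕ =>
      M' / (n:ℝ) + 2 * Real.sqrt M' * (Real.sqrt (V g n / (n:ℝ)) * (1 / Real.sqrt (n:ℝ))))
      atTop (nhds 0) := by
    have ha : Tendsto (fun n : ℕ => M' / (n:ℝ)) atTop (nhds 0) :=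
      tendsto_const_div_atTop_nhds_zero_nat M'
    have hb1 : Tendsto (fun n : ℕ => Real.sqrt (V g n / (n:ℝ))) atTop (nhds (Real.sqrt c)) :=
      (Real.continuous_sqrt.tendsto c).comp hglim
    have hb2 : Tendsto (fun n : ℕ => 1 / Real.sqrt (n:ℝ)) atTop (nhds 0) := by
      simp only [one_div]
      have hs : Tendsto Real.sqrt atTop atTop := by
        refine tendsto_atTop_atTop.mpr fun x => ⟨x ^ 2, fun a ha => ?_⟩
        have := Real.sqrt_le_sqrt ha
        nlinarith [Real.sqrt_sq_eq_abs x, le_abs_self x, this]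
      exact (hs.comp tendsto_natCast_atTop_atTop).inv_tendsto_atTop
    have := ha.add (((hb1.mul hb2).const_mul (2 * Real.sqrt M')))
    simpa using this
  have hD : Tendsto (fun n : ℕ =>
      V (fun t => f t + g t) n / (n:ℝ) - V g n / (n:ℝ)) atTop (nhds 0) :=
    squeeze_zero_norm' hbound hlim0
  have := hD.add hglim
  simpa using this
end

section
/- Define Ψ(0) := 0 and Ψ(x) := x²/(2·log log(1/x)) for 0 < x < 1/e, and for continuous h : [0,1] → ℝ let v_Ψ(h) ∈ [0,∞] be v_Ψ(h) := lim_{δ↓0} sup{ ∑_{i=1}^n Ψ(|h(s_i) − h(s_{i−1})|) : 0 = s₀ < … < s_n = 1, max_i (s_i − s_{i−1}) ≤ δ }. If f, g : [0,1] → ℝ are continuous and v_Ψ(g) = 0, then v_Ψ(f + g) = v_Ψ(f). -/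
open scoped ENNReal

/-- `Ψ(x) = x²/(2 log log (1/x))`; by Lean's conventions (`1/0 = 0`, `log 0 = 0`,
`x/0 = 0`) this gives `Ψ(0) = 0`.  It is the correct formula on `(0, 1/e)`. -/
noncomputable def PsiTaylor (x : ℝ) : ℝ :=
  x ^ 2 / (2 * Real.log (Real.log (1 / x)))

/-- The Ψ-variation `v_Ψ(h) = lim_{δ↓0} sup { ∑ Ψ(|h(sᵢ)−h(sᵢ₋₁)|) : partitions of
`[0,1]` with mesh ≤ δ }`; since the supremum is monotone in `δ`, the limit is the
infimum over `δ > 0`. -/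
noncomputable def vPsi (h : ℝ → ℝ) : ℝ≥0∞ :=
  ⨅ (δ : ℝ) (_ : 0 < δ),
    ⨆ (n : ℕ) (s : ℕ → ℝ) (_ : s 0 = 0) (_ : s n = 1)
      (_ : ∀ i < n, s i < s (i + 1)) (_ : ∀ i < n, s (i + 1) - s i ≤ δ),
      ENNReal.ofReal (∑ i ∈ Finset.range n, PsiTaylor |h (s (i + 1)) - h (s i)|)


lemma psiZero : PsiTaylor 0 = 0 := by simp [PsiTaylor]

lemma denom_ge {x : ℝ} (hx : 0 < x) (h1 : x ≤ Real.exp (-Real.exp 1)) :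
    Real.exp 1 ≤ Real.log (1 / x) ∧ 1 ≤ Real.log (Real.log (1 / x)) := by
  have hlx : Real.exp 1 ≤ Real.log (1 / x) := by
    rw [Real.le_log_iff_exp_le (by positivity)]
    rw [le_div_iff₀ hx]
    calc Real.exp (Real.exp 1) * x ≤ Real.exp (Real.exp 1) * Real.exp (-Real.exp 1) :=
          mul_le_mul_of_nonneg_left h1 (Real.exp_pos _).le
      _ = 1 := by rw [← Real.exp_add]; simp
  refine ⟨hlx, ?_⟩
  rw [Real.le_log_iff_exp_le (lt_of_lt_of_le (Real.exp_pos 1) hlx)]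
  simpa using hlx

lemma psi_nonneg {x : ℝ} (h0 : 0 ≤ x) (h1 : x ≤ Real.exp (-Real.exp 1)) :
    0 ≤ PsiTaylor x := by
  rcases eq_or_lt_of_le h0 with h | h
  · rw [← h, psiZero]
  · obtain ⟨-, h2⟩ := denom_ge h h1
    have hd : 0 < 2 * Real.log (Real.log (1 / x)) := by linarith
    exact div_nonneg (sq_nonneg x) hd.le

lemma psi_mono {x y : ℝ} (h0 : 0 ≤ x) (hxy : x ≤ y) (h1 : y ≤ Real.exp (-Real.exp 1)) :
    PsiTaylor x ≤ PsiTaylor y := by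
  rcases eq_or_lt_of_le h0 with h | hx
  · rw [← h, psiZero]; exact psi_nonneg (h0.trans hxy) h1
  · have hy : 0 < y := lt_of_lt_of_le hx hxy
    obtain ⟨hy1, hy2⟩ := denom_ge hy h1
    have hx1 : Real.log (1 / y) ≤ Real.log (1 / x) :=
      Real.log_le_log (by positivity) (one_div_le_one_div_of_le hx hxy)
    have hx2 : Real.log (Real.log (1 / y)) ≤ Real.log (Real.log (1 / x)) :=
      Real.log_le_log (lt_of_lt_of_le (Real.exp_pos 1) hy1) hx1
    unfold PsiTaylor
    exact div_le_div₀ (sq_nonneg y) (by nlinarith) (by linarith) (by linarith)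

lemma psi_scale {c a : ℝ} (hc : 1 ≤ c) (ha : 0 < a) :
    ∃ ε : ℝ, 0 < ε ∧ ∀ x : ℝ, 0 < x → x ≤ ε →
      c * x ≤ Real.exp (-Real.exp 1) ∧
      PsiTaylor (c * x) ≤ (1 + a) * c ^ 2 * PsiTaylor x := by
  set M := max 1 (Real.log c / a) with hM
  have hM1 : (1:ℝ) ≤ M := le_max_left _ _
  have hc0 : (0:ℝ) < c := lt_of_lt_of_le one_pos hc
  have hMc : Real.log c ≤ a * M := by
    have h := le_max_right 1 (Real.log c / a)
    have : Real.log c / a ≤ M := h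
    calc Real.log c = a * (Real.log c / a) := by field_simp
      _ ≤ a * M := mul_le_mul_of_nonneg_left this ha.le
  refine ⟨Real.exp (-Real.exp M) / c, by positivity, ?_⟩
  intro x hx hxε
  have hcx : 0 < c * x := by positivity
  have hcxe : c * x ≤ Real.exp (-Real.exp M) := by
    have h2 : c * (Real.exp (-Real.exp M) / c) = Real.exp (-Real.exp M) := by field_simp
    calc c * x ≤ c * (Real.exp (-Real.exp M) / c) := mul_le_mul_of_nonneg_left hxε hc0.le
      _ = _ := h2
  have hexpM : Real.exp (-Real.exp M) ≤ Real.exp (-Real.exp 1) :=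
    Real.exp_le_exp.mpr (neg_le_neg (Real.exp_le_exp.mpr hM1))
  refine ⟨hcxe.trans hexpM, ?_⟩
  -- abbreviations
  have hu : Real.exp M ≤ Real.log (1 / (c * x)) := by
    rw [Real.le_log_iff_exp_le (by positivity)]
    rw [le_div_iff₀ hcx]
    calc Real.exp (Real.exp M) * (c * x) ≤ Real.exp (Real.exp M) * Real.exp (-Real.exp M) :=
          mul_le_mul_of_nonneg_left hcxe (Real.exp_pos _).le
      _ = 1 := by rw [← Real.exp_add]; simp
  have hexpM1 : (1:ℝ) < Real.exp M := by
    have := Real.add_one_le_exp M; linarith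
  have hu1 : (1:ℝ) < Real.log (1 / (c * x)) := lt_of_lt_of_le hexpM1 hu
  have hu0 : (0:ℝ) < Real.log (1 / (c * x)) := by linarith
  have hlogu : M ≤ Real.log (Real.log (1 / (c * x))) := by
    rw [Real.le_log_iff_exp_le hu0]; exact hu
  have hlogu0 : 0 < Real.log (Real.log (1 / (c * x))) := lt_of_lt_of_le (by linarith) hlogu
  have hlogc : 0 ≤ Real.log c := Real.log_nonneg hc
  have hlx : Real.log (1 / x) = Real.log c + Real.log (1 / (c * x)) := by
    rw [show (1:ℝ) / x = c * (1 / (c * x)) by field_simp]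
    rw [Real.log_mul hc0.ne' (by positivity)]
  set u := Real.log (1 / (c * x)) with hudef
  -- key : log (log c + u) ≤ (1+a) * log u
  have hkey : Real.log (Real.log c + u) ≤ (1 + a) * Real.log u := by
    have hsplit : Real.log c + u = u * (1 + Real.log c / u) := by
      field_simp; ring
    have hpos2 : 0 < 1 + Real.log c / u := by positivity
    have h3 : Real.log (Real.log c + u) = Real.log u + Real.log (1 + Real.log c / u) := by
      rw [hsplit, Real.log_mul (by positivity) hpos2.ne']
    have h4 : Real.log (1 + Real.log c / u) ≤ Real.log c / u := by
      have := Real.log_le_sub_one_of_pos hpos2; linarith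
    have h5 : Real.log c / u ≤ Real.log c := div_le_self hlogc (by linarith)
    have h6 : Real.log c ≤ a * M := hMc
    have h7 : a * M ≤ a * Real.log u := mul_le_mul_of_nonneg_left hlogu ha.le
    linarith
  -- conclude
  have hlxpos : 0 < Real.log (Real.log (1 / x)) := by
    rw [hlx]
    calc (0:ℝ) < Real.log u := hlogu0
      _ ≤ Real.log (Real.log c + u) := Real.log_le_log (by linarith) (by linarith)
  have hA : 0 < Real.log (Real.log c + u) := by rw [hlx] at hlxpos; exact hlxpos
  unfold PsiTaylor
  rw [hlx, mul_div_assoc']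
  rw [div_le_div_iff₀ (by linarith) (by linarith)]
  have hfin : c ^ 2 * x ^ 2 * Real.log (Real.log c + u) ≤
      c ^ 2 * x ^ 2 * ((1 + a) * Real.log u) :=
    mul_le_mul_of_nonneg_left hkey (by positivity)
  nlinarith [hfin]

lemma psi_two {a : ℝ} (ha : 0 < a) :
    ∃ ε : ℝ, 0 < ε ∧ ∀ x y z : ℝ, 0 ≤ x → x ≤ ε → 0 ≤ y → y ≤ ε → 0 ≤ z → z ≤ x + y →
      PsiTaylor z ≤ (1 + a) ^ 3 * PsiTaylor x + ((1 + a) * (1 + 1 / a) ^ 2) * PsiTaylor y := by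
  have ha1 : (1:ℝ) ≤ 1 + a := by linarith
  have ha2 : (1:ℝ) ≤ 1 + 1 / a := by
    have h := one_div_pos.mpr ha
    linarith
  obtain ⟨ε₁, hε₁, H₁⟩ := psi_scale ha1 ha
  obtain ⟨ε₂, hε₂, H₂⟩ := psi_scale ha2 ha
  refine ⟨min ε₁ ε₂, lt_min hε₁ hε₂, ?_⟩
  intro x y z hx hxε hy hyε hz hzxy
  have hK₁ : (0:ℝ) ≤ (1 + a) ^ 3 := by positivity
  have hK₂ : (0:ℝ) ≤ (1 + a) * (1 + 1 / a) ^ 2 := by positivity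
  have hsmall : ∀ w : ℝ, 0 ≤ w → w ≤ min ε₁ ε₂ → w ≤ Real.exp (-Real.exp 1) := by
    intro w hw hwε
    rcases eq_or_lt_of_le hw with h | h
    · rw [← h]; exact (Real.exp_pos _).le
    · have := (H₁ w h (hwε.trans (min_le_left _ _))).1
      nlinarith
  by_cases hyx : y ≤ a * x
  · rcases eq_or_lt_of_le hx with h | hx'
    · have hy0 : y = 0 := le_antisymm (by nlinarith) hy
      have hz0 : z = 0 := le_antisymm (by nlinarith) hz
      rw [← h, hy0, hz0, psiZero]
      simp
    · obtain ⟨hd, hs⟩ := H₁ x hx' (hxε.trans (min_le_left _ _))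
      have h0 : PsiTaylor z ≤ PsiTaylor ((1 + a) * x) := psi_mono hz (by nlinarith) hd
      have h2 : 0 ≤ PsiTaylor y := psi_nonneg hy (hsmall y hy hyε)
      nlinarith [h0, hs]
  · push_neg at hyx
    have hy' : 0 < y := lt_of_le_of_lt (by positivity) hyx
    obtain ⟨hd, hs⟩ := H₂ y hy' (hyε.trans (min_le_right _ _))
    have hxle : x ≤ y / a := by rw [le_div_iff₀ ha]; nlinarith
    have hzle : z ≤ (1 + 1 / a) * y := by
      have e1 : (1 + 1 / a) * y = y + y / a := by ring
      linarith
    have h0 : PsiTaylor z ≤ PsiTaylor ((1 + 1 / a) * y) := psi_mono hz hzle hd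
    have h2 : 0 ≤ PsiTaylor x := psi_nonneg hx (hsmall x hx hxε)
    nlinarith [h0, hs]

noncomputable def vS (h : ℝ → ℝ) (δ : ℝ) : ℝ≥0∞ :=
  ⨆ (n : ℕ) (s : ℕ → ℝ) (_ : s 0 = 0) (_ : s n = 1)
    (_ : ∀ i < n, s i < s (i + 1)) (_ : ∀ i < n, s (i + 1) - s i ≤ δ),
    ENNReal.ofReal (∑ i ∈ Finset.range n, PsiTaylor |h (s (i + 1)) - h (s i)|)

lemma vPsi_eq (h : ℝ → ℝ) : vPsi h = ⨅ (δ : ℝ) (_ : 0 < δ), vS h δ := rfl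

lemma le_vS {h : ℝ → ℝ} {δ : ℝ} {n : ℕ} {s : ℕ → ℝ} (h0 : s 0 = 0) (h1 : s n = 1)
    (h2 : ∀ i < n, s i < s (i + 1)) (h3 : ∀ i < n, s (i + 1) - s i ≤ δ) :
    ENNReal.ofReal (∑ i ∈ Finset.range n, PsiTaylor |h (s (i + 1)) - h (s i)|) ≤ vS h δ :=
  le_iSup_of_le n (le_iSup_of_le s (le_iSup_of_le h0 (le_iSup_of_le h1
    (le_iSup_of_le h2 (le_iSup_of_le h3 le_rfl)))))

lemma vS_mono {h : ℝ → ℝ} {δ δ' : ℝ} (hδ : δ ≤ δ') : vS h δ ≤ vS h δ' := by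
  refine iSup_le fun n => iSup_le fun s => iSup_le fun h0 => iSup_le fun h1 =>
    iSup_le fun h2 => iSup_le fun h3 => ?_
  exact le_vS h0 h1 h2 (fun i hi => (h3 i hi).trans hδ)

lemma part_bounds {n : ℕ} {s : ℕ → ℝ} (h0 : s 0 = 0) (h1 : s n = 1)
    (h2 : ∀ i < n, s i < s (i + 1)) :
    ∀ i ≤ n, 0 ≤ s i ∧ s i ≤ 1 := by
  have mono : ∀ j, j ≤ n → ∀ i, i ≤ j → s i ≤ s j := by
    intro j
    induction j with
    | zero => intro _ i hi; rw [Nat.le_zero.mp hi]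
    | succ k ih =>
      intro hj i hi
      rcases Nat.eq_or_lt_of_le hi with h | h
      · rw [h]
      · exact (ih (by omega) i (by omega)).trans (h2 k (by omega)).le
  intro i hi
  constructor
  · have h := mono i hi 0 (Nat.zero_le _); rw [h0] at h; exact h
  · have h := mono n le_rfl i hi; rw [h1] at h; exact h

lemma vS_add_le {f g : ℝ → ℝ} {δ ε K₁ K₂ : ℝ} (hK₁ : 0 ≤ K₁) (hK₂ : 0 ≤ K₂)
    (Key : ∀ x y z : ℝ, 0 ≤ x → x ≤ ε → 0 ≤ y → y ≤ ε → 0 ≤ z → z ≤ x + y →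
      PsiTaylor z ≤ K₁ * PsiTaylor x + K₂ * PsiTaylor y)
    (hF : ∀ u ∈ Set.Icc (0:ℝ) 1, ∀ v ∈ Set.Icc (0:ℝ) 1, |u - v| ≤ δ → |f u - f v| ≤ ε)
    (hG : ∀ u ∈ Set.Icc (0:ℝ) 1, ∀ v ∈ Set.Icc (0:ℝ) 1, |u - v| ≤ δ → |g u - g v| ≤ ε) :
    vS (fun t => f t + g t) δ ≤ ENNReal.ofReal K₁ * vS f δ + ENNReal.ofReal K₂ * vS g δ := by
  refine iSup_le fun n => iSup_le fun s => iSup_le fun h0 => iSup_le fun h1 =>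
    iSup_le fun h2 => iSup_le fun h3 => ?_
  have hmem := part_bounds h0 h1 h2
  have hstep : ∀ i < n, PsiTaylor |(f (s (i+1)) + g (s (i+1))) - (f (s i) + g (s i))| ≤
      K₁ * PsiTaylor |f (s (i+1)) - f (s i)| + K₂ * PsiTaylor |g (s (i+1)) - g (s i)| := by
    intro i hi
    have m1 := hmem i (le_of_lt hi)
    have m2 := hmem (i+1) (by omega)
    have hd : |s (i+1) - s i| ≤ δ := by
      rw [abs_of_nonneg (by linarith [h2 i hi])]
      exact h3 i hi
    have hfb := hF (s (i+1)) ⟨m2.1, m2.2⟩ (s i) ⟨m1.1, m1.2⟩ hd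
    have hgb := hG (s (i+1)) ⟨m2.1, m2.2⟩ (s i) ⟨m1.1, m1.2⟩ hd
    have htri : |(f (s (i+1)) + g (s (i+1))) - (f (s i) + g (s i))| ≤
        |f (s (i+1)) - f (s i)| + |g (s (i+1)) - g (s i)| := by
      rw [show (f (s (i+1)) + g (s (i+1))) - (f (s i) + g (s i)) =
        (f (s (i+1)) - f (s i)) + (g (s (i+1)) - g (s i)) from by ring]
      exact abs_add_le _ _
    exact Key _ _ _ (abs_nonneg _) hfb (abs_nonneg _) hgb (abs_nonneg _) htri
  have hsum : ∑ i ∈ Finset.range n,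
        PsiTaylor |(f (s (i+1)) + g (s (i+1))) - (f (s i) + g (s i))| ≤
      K₁ * ∑ i ∈ Finset.range n, PsiTaylor |f (s (i+1)) - f (s i)| +
      K₂ * ∑ i ∈ Finset.range n, PsiTaylor |g (s (i+1)) - g (s i)| := by
    rw [Finset.mul_sum, Finset.mul_sum, ← Finset.sum_add_distrib]
    exact Finset.sum_le_sum fun i hi => hstep i (Finset.mem_range.mp hi)
  calc ENNReal.ofReal (∑ i ∈ Finset.range n,
        PsiTaylor |(fun t => f t + g t) (s (i+1)) - (fun t => f t + g t) (s i)|)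
      ≤ ENNReal.ofReal (K₁ * ∑ i ∈ Finset.range n, PsiTaylor |f (s (i+1)) - f (s i)| +
          K₂ * ∑ i ∈ Finset.range n, PsiTaylor |g (s (i+1)) - g (s i)|) :=
        ENNReal.ofReal_le_ofReal hsum
    _ ≤ ENNReal.ofReal (K₁ * ∑ i ∈ Finset.range n, PsiTaylor |f (s (i+1)) - f (s i)|) +
        ENNReal.ofReal (K₂ * ∑ i ∈ Finset.range n, PsiTaylor |g (s (i+1)) - g (s i)|) :=
        ENNReal.ofReal_add_le
    _ = ENNReal.ofReal K₁ *
          ENNReal.ofReal (∑ i ∈ Finset.range n, PsiTaylor |f (s (i+1)) - f (s i)|) +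
        ENNReal.ofReal K₂ *
          ENNReal.ofReal (∑ i ∈ Finset.range n, PsiTaylor |g (s (i+1)) - g (s i)|) := by
        rw [ENNReal.ofReal_mul hK₁, ENNReal.ofReal_mul hK₂]
    _ ≤ ENNReal.ofReal K₁ * vS f δ + ENNReal.ofReal K₂ * vS g δ :=
        add_le_add (mul_le_mul_right (le_vS h0 h1 h2 h3) _)
          (mul_le_mul_right (le_vS h0 h1 h2 h3) _)

lemma uc_of (f : ℝ → ℝ) (hf : ContinuousOn f (Set.Icc 0 1)) {ε : ℝ} (hε : 0 < ε) :
    ∃ δ, 0 < δ ∧ ∀ u ∈ Set.Icc (0:ℝ) 1, ∀ v ∈ Set.Icc (0:ℝ) 1,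
      |u - v| ≤ δ → |f u - f v| ≤ ε := by
  have h := isCompact_Icc.uniformContinuousOn_of_continuous hf
  rw [Metric.uniformContinuousOn_iff_le] at h
  obtain ⟨δ, hδ, H⟩ := h ε hε
  refine ⟨δ, hδ, fun u hu v hv hd => ?_⟩
  have := H u hu v hv (by simpa [Real.dist_eq] using hd)
  simpa [Real.dist_eq] using this

lemma vPsi_add_le (f g : ℝ → ℝ) (hf : ContinuousOn f (Set.Icc (0 : ℝ) 1))
    (hg : ContinuousOn g (Set.Icc (0 : ℝ) 1)) (hg0 : vPsi g = 0) :
    vPsi (fun t => f t + g t) ≤ vPsi f := by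
  have stepA : ∀ C : ℝ, 1 < C →
      vPsi (fun t => f t + g t) ≤ ENNReal.ofReal C * vPsi f := by
    intro C hC
    set a := min 1 ((C - 1) / 7) with ha_def
    have ha : 0 < a := lt_min one_pos (by linarith)
    have ha1 : a ≤ 1 := min_le_left _ _
    have ha7 : a ≤ (C - 1) / 7 := min_le_right _ _
    have ha7' : 7 * a ≤ C - 1 := by
      rw [le_div_iff₀ (by norm_num : (0:ℝ) < 7)] at ha7; linarith
    have haa : a * a ≤ a := by nlinarith
    have haaa : a * a * a ≤ a := by nlinarith
    have hK₁C : (1 + a) ^ 3 ≤ C := by nlinarith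
    obtain ⟨ε, hε, Key⟩ := psi_two ha
    obtain ⟨δf, hδf, hFf⟩ := uc_of f hf hε
    obtain ⟨δg, hδg, hGg⟩ := uc_of g hg hε
    set K₁ := (1 + a) ^ 3 with hK₁def
    set K₂ := (1 + a) * (1 + 1 / a) ^ 2 with hK₂def
    have hK₁0 : (0:ℝ) ≤ K₁ := by positivity
    have hK₂0 : (0:ℝ) ≤ K₂ := by positivity
    have hK₁1 : (1:ℝ) ≤ K₁ := by
      rw [hK₁def]; nlinarith [sq_nonneg a, mul_pos (mul_pos ha ha) ha]
    have A1 : ∀ δ₁, 0 < δ₁ → ∀ δ₂, 0 < δ₂ → vPsi (fun t => f t + g t) ≤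
        ENNReal.ofReal K₁ * vS f δ₁ + ENNReal.ofReal K₂ * vS g δ₂ := by
      intro δ₁ h₁ δ₂ h₂
      set δ := min δ₁ (min δ₂ (min δf δg)) with hδdef
      have hδ : 0 < δ := lt_min h₁ (lt_min h₂ (lt_min hδf hδg))
      have hδf' : δ ≤ δf := le_trans (min_le_right _ _)
        (le_trans (min_le_right _ _) (min_le_left _ _))
      have hδg' : δ ≤ δg := le_trans (min_le_right _ _)
        (le_trans (min_le_right _ _) (min_le_right _ _))
      calc vPsi (fun t => f t + g t) ≤ vS (fun t => f t + g t) δ := by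
            rw [vPsi_eq]; exact iInf₂_le δ hδ
        _ ≤ ENNReal.ofReal K₁ * vS f δ + ENNReal.ofReal K₂ * vS g δ :=
            vS_add_le hK₁0 hK₂0 Key
              (fun u hu v hv hd => hFf u hu v hv (hd.trans hδf'))
              (fun u hu v hv hd => hGg u hu v hv (hd.trans hδg'))
        _ ≤ ENNReal.ofReal K₁ * vS f δ₁ + ENNReal.ofReal K₂ * vS g δ₂ :=
            add_le_add (mul_le_mul_right (vS_mono (min_le_left _ _)) _)
              (mul_le_mul_right (vS_mono (le_trans (min_le_right _ _) (min_le_left _ _))) _)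
    have A2 : ∀ η : ℝ≥0∞, 0 < η → ∃ δ₂, 0 < δ₂ ∧
        ENNReal.ofReal K₂ * vS g δ₂ ≤ η := by
      intro η hη
      have ht : 0 < η / ENNReal.ofReal K₂ := ENNReal.div_pos hη.ne' ENNReal.ofReal_ne_top
      have hlt : vPsi g < η / ENNReal.ofReal K₂ := by rw [hg0]; exact ht
      rw [vPsi_eq] at hlt
      simp only [iInf_lt_iff] at hlt
      obtain ⟨δ₂, hδ₂, hlt⟩ := hlt
      refine ⟨δ₂, hδ₂, ?_⟩
      calc ENNReal.ofReal K₂ * vS g δ₂ ≤ ENNReal.ofReal K₂ * (η / ENNReal.ofReal K₂) :=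
            mul_le_mul_right hlt.le _
        _ ≤ η := ENNReal.mul_div_le
    have hmain : vPsi (fun t => f t + g t) ≤ ENNReal.ofReal K₁ * vPsi f := by
      refine ENNReal.le_of_forall_pos_le_add fun ζ hζ hfin => ?_
      have hK₁ne : ENNReal.ofReal K₁ ≠ 0 := by
        rw [Ne, ENNReal.ofReal_eq_zero]; intro h; linarith
      have hV : vPsi f ≠ ⊤ := by
        intro h
        rw [h, ENNReal.mul_top hK₁ne] at hfin
        exact (lt_irrefl _ hfin)
      have hζ2 : (0:ℝ≥0∞) < (ζ : ℝ≥0∞) / 2 :=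
        ENNReal.div_pos (by exact_mod_cast hζ.ne') (by norm_num)
      set p : ℝ≥0∞ := ((ζ : ℝ≥0∞) / 2) / ENNReal.ofReal K₁ with hp_def
      have hp : 0 < p := ENNReal.div_pos hζ2.ne' ENNReal.ofReal_ne_top
      have hVlt : vPsi f < vPsi f + p := ENNReal.lt_add_right hV hp.ne'
      have hex : ∃ δ₁, 0 < δ₁ ∧ vS f δ₁ < vPsi f + p := by
        conv_lhs at hVlt => rw [vPsi_eq]
        simp only [iInf_lt_iff] at hVlt
        obtain ⟨δ₁, hδ₁, hlt⟩ := hVlt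
        exact ⟨δ₁, hδ₁, hlt⟩
      obtain ⟨δ₁, hδ₁, hlt₁⟩ := hex
      obtain ⟨δ₂, hδ₂, hη⟩ := A2 ((ζ : ℝ≥0∞) / 2) hζ2
      calc vPsi (fun t => f t + g t)
          ≤ ENNReal.ofReal K₁ * vS f δ₁ + ENNReal.ofReal K₂ * vS g δ₂ := A1 δ₁ hδ₁ δ₂ hδ₂
        _ ≤ ENNReal.ofReal K₁ * (vPsi f + p) + (ζ : ℝ≥0∞) / 2 :=
            add_le_add (mul_le_mul_right hlt₁.le _) hη
        _ = ENNReal.ofReal K₁ * vPsi f + ENNReal.ofReal K₁ * p + (ζ : ℝ≥0∞) / 2 := by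
            rw [mul_add]
        _ ≤ ENNReal.ofReal K₁ * vPsi f + (ζ : ℝ≥0∞) / 2 + (ζ : ℝ≥0∞) / 2 := by
            gcongr
            exact ENNReal.mul_div_le
        _ = ENNReal.ofReal K₁ * vPsi f + (ζ : ℝ≥0∞) := by
            rw [add_assoc, ENNReal.add_halves]
    exact hmain.trans (mul_le_mul_left (ENNReal.ofReal_le_ofReal hK₁C) _)
  refine ENNReal.le_of_forall_pos_le_add fun ζ hζ hV => ?_
  set v := (vPsi f).toReal with hv_def
  have hv : 0 ≤ v := ENNReal.toReal_nonneg
  have hζR : (0:ℝ) < (ζ : ℝ) := hζ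
  have hC : 1 < 1 + (ζ : ℝ) / (v + 1) := by
    have : (0:ℝ) < (ζ : ℝ) / (v + 1) := by positivity
    linarith
  have h1 := stepA _ hC
  refine h1.trans ?_
  have hVeq : vPsi f = ENNReal.ofReal v := (ENNReal.ofReal_toReal hV.ne).symm
  rw [hVeq, ← ENNReal.ofReal_mul (by positivity : (0:ℝ) ≤ 1 + (ζ : ℝ) / (v + 1))]
  have hineq : (1 + (ζ : ℝ) / (v + 1)) * v ≤ v + (ζ : ℝ) := by
    have h2 : (ζ : ℝ) / (v + 1) * v ≤ (ζ : ℝ) := by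
      rw [div_mul_eq_mul_div, div_le_iff₀ (by linarith : (0:ℝ) < v + 1)]
      nlinarith
    nlinarith
  calc ENNReal.ofReal ((1 + (ζ : ℝ) / (v + 1)) * v) ≤ ENNReal.ofReal (v + (ζ : ℝ)) :=
        ENNReal.ofReal_le_ofReal hineq
    _ ≤ ENNReal.ofReal v + ENNReal.ofReal (ζ : ℝ) := ENNReal.ofReal_add_le
    _ = ENNReal.ofReal v + (ζ : ℝ≥0∞) := by rw [ENNReal.ofReal_coe_nnreal]

lemma vPsi_neg (g : ℝ → ℝ) : vPsi (fun t => -(g t)) = vPsi g := by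
  have key : ∀ p q : ℝ, |(-p) - (-q)| = |p - q| := by
    intro p q; rw [neg_sub_neg, abs_sub_comm]
  unfold vPsi
  simp only [key]

/-- Lemma 3.13 (c) of the paper: adding a function of vanishing Ψ-variation does not
change the Ψ-variation. -/
theorem vPsi_add_of_vPsi_zero (f g : ℝ → ℝ)
    (hf : ContinuousOn f (Set.Icc (0 : ℝ) 1))
    (hg : ContinuousOn g (Set.Icc (0 : ℝ) 1))
    (hg0 : vPsi g = 0) :
    vPsi (fun t => f t + g t) = vPsi f := by
  apply le_antisymm
  · exact vPsi_add_le f g hf hg hg0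
  · have hg' : vPsi (fun t => -(g t)) = 0 := by rw [vPsi_neg]; exact hg0
    have h2 : vPsi (fun t => (f t + g t) + -(g t)) ≤ vPsi (fun t => f t + g t) :=
      vPsi_add_le (fun t => f t + g t) (fun t => -(g t)) (hf.add hg) hg.neg hg'
    have e : (fun t => (f t + g t) + -(g t)) = f := by funext t; ring
    rwa [e] at h2
end

section
/- Fix an integer b ≥ 2 and H ∈ (0, 1/2]. For n ∈ ℕ let t_i := i·b^{−n}, and let R_H(u,v;s,t) := (1/2)·(|v−s|^{2H} + |u−t|^{2H} − |v−t|^{2H} − |u−s|^{2H}). Then there exists a constant L > 0, depending only on H and b, such that for all n ∈ ℕ and all i ∈ {1,…,bⁿ}: ∑_{j ∈ {1,…,bⁿ}, |i−j| > 2} |R_H(t_{i−1}, t_i; t_{j−1}, t_j)| ≤ L·b^{−2nH}. -/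
open Real Finset

/-- second difference of `x ↦ x^q` at integer `m`. -/
private noncomputable def fbmG (q : ℝ) (m : ℕ) : ℝ :=
  2 * (m : ℝ) ^ q - ((m : ℝ) + 1) ^ q - ((m : ℝ) - 1) ^ q

private lemma fbm_concave {q : ℝ} (hq0 : 0 < q) (hq1 : q ≤ 1) {x : ℝ} (hx : 1 ≤ x) :
    (x + 1) ^ q + (x - 1) ^ q ≤ 2 * x ^ q := by
  have h := (Real.concaveOn_rpow hq0.le hq1).2
    (Set.mem_Ici.mpr (by linarith : (0:ℝ) ≤ x + 1))
    (Set.mem_Ici.mpr (by linarith : (0:ℝ) ≤ x - 1))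
    (by norm_num : (0:ℝ) ≤ 1/2) (by norm_num : (0:ℝ) ≤ 1/2)
    (by norm_num : (1/2 : ℝ) + 1/2 = 1)
  have e : (1/2 : ℝ) • (x + 1) + (1/2 : ℝ) • (x - 1) = x := by
    simp only [smul_eq_mul]; ring
  rw [e] at h
  simp only [smul_eq_mul] at h
  linarith

private lemma fbmG_nonneg {q : ℝ} (hq0 : 0 < q) (hq1 : q ≤ 1) {m : ℕ} (hm : 1 ≤ m) :
    0 ≤ fbmG q m := by
  have hm' : (1 : ℝ) ≤ (m : ℝ) := by exact_mod_cast hm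
  have := fbm_concave hq0 hq1 hm'
  unfold fbmG; linarith

private lemma fbm_tele_eq {q : ℝ} (hq0 : 0 < q) (hq1 : q ≤ 1) (M : ℕ) :
    ∑ m ∈ Finset.Icc 3 (M + 2), fbmG q m
      = ((3:ℝ) ^ q - 2 ^ q) - (((M:ℝ) + 3) ^ q - ((M:ℝ) + 2) ^ q) := by
  induction M with
  | zero =>
    rw [Finset.Icc_eq_empty (by omega)]
    norm_num
  | succ M ih =>
    have : M + 1 + 2 = (M + 2) + 1 := by omega
    rw [this, Finset.sum_Icc_succ_top (by omega), ih]
    unfold fbmG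
    push_cast
    ring

private lemma fbm_tele {q : ℝ} (hq0 : 0 < q) (hq1 : q ≤ 1) (M : ℕ) :
    ∑ m ∈ Finset.Icc 3 M, fbmG q m ≤ (3:ℝ) ^ q - 2 ^ q := by
  have h23 : (2:ℝ) ^ q ≤ 3 ^ q :=
    Real.rpow_le_rpow (by norm_num) (by norm_num) hq0.le
  rcases le_or_gt M 2 with hM | hM
  · rw [Finset.Icc_eq_empty (by omega)]
    simpa using h23
  · obtain ⟨K, rfl⟩ : ∃ K, M = K + 2 := ⟨M - 2, by omega⟩
    rw [fbm_tele_eq hq0 hq1]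
    have : ((K:ℝ) + 2) ^ q ≤ ((K:ℝ) + 3) ^ q :=
      Real.rpow_le_rpow (by positivity) (by linarith) hq0.le
    linarith

private lemma fbm_term {q : ℝ} (hq0 : 0 < q) (hq1 : q ≤ 1) {c : ℝ} (hc : 0 < c)
    (x : ℝ) (m : ℕ) (hm : 3 ≤ m) (hx : x = (m:ℝ) ∨ x = -(m:ℝ)) :
    |1 / 2 * (|(x + 1) / c| ^ q + |(x - 1) / c| ^ q - |x / c| ^ q - |x / c| ^ q)|
      = 1 / 2 * fbmG q m / c ^ q := by
  have hm' : (3 : ℝ) ≤ (m : ℝ) := by exact_mod_cast hm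
  have hcq : (0:ℝ) < c ^ q := Real.rpow_pos_of_pos hc q
  have hdiv : ∀ y : ℝ, |y / c| ^ q = |y| ^ q / c ^ q := by
    intro y
    rw [abs_div, abs_of_pos hc, Real.div_rpow (abs_nonneg _) hc.le]
  rw [hdiv, hdiv, hdiv]
  have key : |x + 1| ^ q + |x - 1| ^ q - |x| ^ q - |x| ^ q
      = ((m:ℝ) + 1) ^ q + ((m:ℝ) - 1) ^ q - (m:ℝ) ^ q - (m:ℝ) ^ q := by
    rcases hx with rfl | rfl
    · rw [abs_of_pos (by linarith : (0:ℝ) < (m:ℝ) + 1),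
        abs_of_pos (by linarith : (0:ℝ) < (m:ℝ) - 1),
        abs_of_pos (by linarith : (0:ℝ) < (m:ℝ))]
    · have e1 : |-(m:ℝ) + 1| = (m:ℝ) - 1 := by
        rw [abs_of_nonpos (by linarith)]; ring
      have e2 : |-(m:ℝ) - 1| = (m:ℝ) + 1 := by
        rw [abs_of_nonpos (by linarith)]; ring
      rw [e1, e2, abs_neg, abs_of_pos (by linarith : (0:ℝ) < (m:ℝ))]
      ring
  have expand : 1 / 2 * (|x + 1| ^ q / c ^ q + |x - 1| ^ q / c ^ q
        - |x| ^ q / c ^ q - |x| ^ q / c ^ q)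
      = 1 / 2 * ((|x + 1| ^ q + |x - 1| ^ q - |x| ^ q - |x| ^ q) / c ^ q) := by
    ring
  rw [expand, key]
  have hconc : ((m:ℝ) + 1) ^ q + ((m:ℝ) - 1) ^ q ≤ 2 * (m:ℝ) ^ q :=
    fbm_concave hq0 hq1 (by linarith)
  have hnonpos : 1 / 2 * ((((m:ℝ) + 1) ^ q + ((m:ℝ) - 1) ^ q
      - (m:ℝ) ^ q - (m:ℝ) ^ q) / c ^ q) ≤ 0 := by
    apply mul_nonpos_of_nonneg_of_nonpos (by norm_num)
    exact div_nonpos_of_nonpos_of_nonneg (by linarith) hcq.le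
  rw [abs_of_nonpos hnonpos]
  unfold fbmG
  field_simp
  ring

/-- Lemma 3.8 of the paper: for `H ∈ (0, 1/2]` there is a constant `L` such that for
all `n` and all `i ∈ {1,…,bⁿ}`, the total covariance of the `i`-th `b`-adic increment
of fBm with all increments at distance more than `2` is at most `L b^{−2nH}`. -/
theorem fbm_offdiagonal_covariance_sum_bound (b : ℕ) (hb : 2 ≤ b)
    (H : ℝ) (hH0 : 0 < H) (hH : H ≤ 1 / 2)
    (RH : ℝ → ℝ → ℝ → ℝ → ℝ)
    (hRH : ∀ u v s t : ℝ, RH u v s t =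
      (1 / 2) * (|v - s| ^ (2 * H) + |u - t| ^ (2 * H)
        - |v - t| ^ (2 * H) - |u - s| ^ (2 * H))) :
    ∃ L > 0, ∀ n : ℕ, ∀ i ∈ Finset.Icc 1 (b ^ n),
      ∑ j ∈ (Finset.Icc 1 (b ^ n)).filter (fun j : ℕ => 2 < |(i : ℤ) - (j : ℤ)|),
          |RH (((i : ℝ) - 1) / (b : ℝ) ^ n) ((i : ℝ) / (b : ℝ) ^ n)
            (((j : ℝ) - 1) / (b : ℝ) ^ n) ((j : ℝ) / (b : ℝ) ^ n)|
        ≤ L * (b : ℝ) ^ (-2 * (n : ℝ) * H) := by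
  set q := 2 * H with hq
  have hq0 : 0 < q := by positivity
  have hq1 : q ≤ 1 := by rw [hq]; linarith
  refine ⟨3, by norm_num, fun n i hi => ?_⟩
  have hb0 : (0:ℝ) < (b:ℝ) := by
    have : 0 < b := by omega
    exact_mod_cast this
  set c : ℝ := (b:ℝ) ^ n with hc_def
  have hc : 0 < c := by positivity
  have hcq : (0:ℝ) < c ^ q := Real.rpow_pos_of_pos hc q
  have hrhs : (b : ℝ) ^ (-2 * (n : ℝ) * H) = (c ^ q)⁻¹ := by
    rw [hc_def, ← Real.rpow_natCast (b:ℝ) n, ← Real.rpow_mul hb0.le,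
      ← Real.rpow_neg hb0.le]
    congr 1
    rw [hq]; ring
  obtain ⟨hi1, hib⟩ := Finset.mem_Icc.mp hi
  set S := (Finset.Icc 1 (b ^ n)).filter (fun j : ℕ => 2 < |(i : ℤ) - (j : ℤ)|) with hS
  have hterm : ∀ j ∈ S,
      |RH (((i : ℝ) - 1) / c) ((i : ℝ) / c) (((j : ℝ) - 1) / c) ((j : ℝ) / c)|
        = 1 / 2 * fbmG q (((i : ℤ) - (j : ℤ)).natAbs) / c ^ q := by
    intro j hj
    rw [hS, Finset.mem_filter] at hj
    obtain ⟨hj', hd⟩ := hj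
    obtain ⟨hj1, hjb⟩ := Finset.mem_Icc.mp hj'
    set x : ℝ := (i:ℝ) - (j:ℝ) with hx_def
    have e1 : (i:ℝ) / c - ((j:ℝ) - 1) / c = (x + 1) / c := by rw [hx_def]; ring
    have e2 : ((i:ℝ) - 1) / c - (j:ℝ) / c = (x - 1) / c := by rw [hx_def]; ring
    have e3 : (i:ℝ) / c - (j:ℝ) / c = x / c := by rw [hx_def]; ring
    have e4 : ((i:ℝ) - 1) / c - ((j:ℝ) - 1) / c = x / c := by rw [hx_def]; ring
    rw [hRH, e1, e2, e3, e4]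
    rw [Int.abs_eq_natAbs] at hd
    have hm3 : 3 ≤ ((i : ℤ) - (j : ℤ)).natAbs := by omega
    have hx : x = (((i : ℤ) - (j : ℤ)).natAbs : ℝ)
        ∨ x = -(((i : ℤ) - (j : ℤ)).natAbs : ℝ) := by
      rcases le_or_gt (0:ℤ) ((i:ℤ) - (j:ℤ)) with h | h
      · left
        rw [hx_def, Nat.cast_natAbs]
        push_cast
        rw [abs_of_nonneg (by exact_mod_cast h : (0:ℝ) ≤ (i:ℝ) - (j:ℝ))]
      · right
        rw [hx_def, Nat.cast_natAbs]
        push_cast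
        rw [abs_of_nonpos (by exact_mod_cast h.le : (i:ℝ) - (j:ℝ) ≤ 0)]
        ring
    exact fbm_term hq0 hq1 hc x _ hm3 hx
  rw [Finset.sum_congr rfl hterm]
  have hsum : ∑ j ∈ S, 1 / 2 * fbmG q (((i : ℤ) - (j : ℤ)).natAbs) / c ^ q
      = 1 / 2 * (∑ j ∈ S, fbmG q (((i : ℤ) - (j : ℤ)).natAbs)) / c ^ q := by
    rw [Finset.mul_sum, Finset.sum_div]
  rw [hsum, hrhs]
  -- bound the inner sum by 6
  have hinner : ∑ j ∈ S, fbmG q (((i : ℤ) - (j : ℤ)).natAbs) ≤ 6 := by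
    have h3q : (3:ℝ) ^ q ≤ 3 := by
      calc (3:ℝ) ^ q ≤ 3 ^ (1:ℝ) :=
            Real.rpow_le_rpow_of_exponent_le (by norm_num) hq1
        _ = 3 := Real.rpow_one 3
    have h2q : (0:ℝ) ≤ (2:ℝ) ^ q := (Real.rpow_pos_of_pos (by norm_num) q).le
    have htel := fbm_tele hq0 hq1 (b ^ n)
    -- split into j < i and i < j
    have hsplit := Finset.sum_filter_add_sum_filter_not S (fun j : ℕ => j < i)
      (fun j => fbmG q (((i : ℤ) - (j : ℤ)).natAbs))
    have h1 : ∑ j ∈ S.filter (fun j : ℕ => j < i),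
        fbmG q (((i : ℤ) - (j : ℤ)).natAbs) ≤ ∑ k ∈ Finset.Icc 3 (b ^ n), fbmG q k := by
      have hre : ∀ j ∈ S.filter (fun j : ℕ => j < i),
          fbmG q (((i : ℤ) - (j : ℤ)).natAbs) = fbmG q (i - j) := by
        intro j hj
        simp only [Finset.mem_filter] at hj
        congr 1
        omega
      rw [Finset.sum_congr rfl hre]
      have hinj : ∀ a ∈ S.filter (fun j : ℕ => j < i), ∀ b' ∈ S.filter (fun j : ℕ => j < i),
          i - a = i - b' → a = b' := by
        intro a ha b' hb'
        simp only [hS, Finset.mem_filter, Finset.mem_Icc, Int.abs_eq_natAbs] at ha hb'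
        omega
      rw [← Finset.sum_image hinj]
      apply Finset.sum_le_sum_of_subset_of_nonneg
      · intro k hk
        simp only [Finset.mem_image, hS, Finset.mem_filter, Finset.mem_Icc, Int.abs_eq_natAbs] at hk
        obtain ⟨j, ⟨⟨⟨hj1, hjb⟩, hd⟩, hji⟩, rfl⟩ := hk
        simp only [Finset.mem_Icc]
        omega
      · intro k hk _
        exact fbmG_nonneg hq0 hq1 (by simp only [Finset.mem_Icc] at hk; omega)
    have h2 : ∑ j ∈ S.filter (fun j : ℕ => ¬ j < i),
        fbmG q (((i : ℤ) - (j : ℤ)).natAbs) ≤ ∑ k ∈ Finset.Icc 3 (b ^ n), fbmG q k := by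
      have hre : ∀ j ∈ S.filter (fun j : ℕ => ¬ j < i),
          fbmG q (((i : ℤ) - (j : ℤ)).natAbs) = fbmG q (j - i) := by
        intro j hj
        simp only [Finset.mem_filter] at hj
        congr 1
        omega
      rw [Finset.sum_congr rfl hre]
      have hinj : ∀ a ∈ S.filter (fun j : ℕ => ¬ j < i),
          ∀ b' ∈ S.filter (fun j : ℕ => ¬ j < i), a - i = b' - i → a = b' := by
        intro a ha b' hb'
        simp only [hS, Finset.mem_filter, Finset.mem_Icc, Int.abs_eq_natAbs] at ha hb'
        omega
      rw [← Finset.sum_image hinj]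
      apply Finset.sum_le_sum_of_subset_of_nonneg
      · intro k hk
        simp only [Finset.mem_image, hS, Finset.mem_filter, Finset.mem_Icc, Int.abs_eq_natAbs] at hk
        obtain ⟨j, ⟨⟨⟨hj1, hjb⟩, hd⟩, hji⟩, rfl⟩ := hk
        simp only [Finset.mem_Icc]
        omega
      · intro k hk _
        exact fbmG_nonneg hq0 hq1 (by simp only [Finset.mem_Icc] at hk; omega)
    linarith
  have hfinal : 1 / 2 * (∑ j ∈ S, fbmG q (((i : ℤ) - (j : ℤ)).natAbs)) / c ^ q
      ≤ 3 * (c ^ q)⁻¹ := by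
    rw [div_eq_mul_inv]
    apply mul_le_mul_of_nonneg_right _ (inv_nonneg.mpr hcq.le)
    linarith
  exact hfinal
end
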